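/- arXiv:1810.02177 — 6 statements merged into one kernel-verified Lean document; each statement's English description precedes it below -/
import Mathlib

section
/- Let $H \in (0,1)$ and $\theta > 0$. There exists a constant $C > 0$ (depending on $\theta$ and $H$) such that for all $T \geq 1$, $\Big| \frac{H}{T} \int_0^T e^{-\theta t} \Big( \int_0^t e^{\theta u} (t-u)^{2H-1} \, du \Big) dt - H \Gamma(2H) \theta^{-2H} \Big| \leq \frac{C}{T}$. -/
open MeasureTheory Real Filter

theorem stmt_3 (H θ : ℝ) (hH : H ∈ Set.Ioo (0:ℝ) 1) (hθ : 0 < θ) :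
    ∃ C : ℝ, 0 < C ∧ ∀ T : ℝ, 1 ≤ T →
      |(H / T) * (∫ t in (0:ℝ)..T, Real.exp (-θ * t) *
            (∫ u in (0:ℝ)..t, Real.exp (θ * u) * (t - u) ^ (2 * H - 1))) -
          H * Real.Gamma (2 * H) * θ ^ (-(2 * H))| ≤ C / T := by
  obtain ⟨hH0, hH1⟩ := hH
  have h2H : (0:ℝ) < 2 * H := by linarith
  have hr : (-1:ℝ) < 2 * H - 1 := by linarith
  set g : ℝ → ℝ := fun s => s ^ (2 * H - 1) * Real.exp (-(θ * s)) with hgdef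
  have hgint : ∀ a b : ℝ, IntervalIntegrable g volume a b := fun a b =>
    (intervalIntegral.intervalIntegrable_rpow' hr).mul_continuousOn
      (Continuous.continuousOn (by fun_prop))
  have hgIoi : IntegrableOn g (Set.Ioi 0) := by
    have h := integrableOn_rpow_mul_exp_neg_mul_rpow hr zero_lt_one hθ
    refine h.congr_fun (fun x hx => ?_) measurableSet_Ioi
    rw [hgdef]
    simp [Real.rpow_one, neg_mul]
  have hgnn : ∀ s : ℝ, 0 < s → 0 ≤ g s := fun s hs =>
    mul_nonneg (Real.rpow_nonneg hs.le _) (Real.exp_pos _).le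
  set L : ℝ := Real.Gamma (2 * H) * θ ^ (-(2 * H)) with hLdef
  have hLval : (∫ s in Set.Ioi (0:ℝ), g s) = L := by
    have h := integral_rpow_mul_exp_neg_mul_Ioi h2H hθ
    rw [hgdef]
    rw [h, hLdef, one_div, Real.inv_rpow hθ.le, ← Real.rpow_neg hθ.le, mul_comm]
  set F : ℝ → ℝ := fun t => ∫ s in (0:ℝ)..t, g s with hFdef
  have hFcont : Continuous F := intervalIntegral.continuous_primitive hgint 0
  have hsplit : ∀ t : ℝ, 0 ≤ t → F t = L - ∫ s in Set.Ioi t, g s := by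
    intro t ht
    have hU : Set.Ioc 0 t ∪ Set.Ioi t = Set.Ioi (0:ℝ) := Set.Ioc_union_Ioi_eq_Ioi ht
    have h1 : IntegrableOn g (Set.Ioc 0 t) := hgIoi.mono_set Set.Ioc_subset_Ioi_self
    have h2 : IntegrableOn g (Set.Ioi t) := hgIoi.mono_set (Set.Ioi_subset_Ioi ht)
    have hu := setIntegral_union (f := g) (μ := volume) Set.Ioc_disjoint_Ioi_same
      measurableSet_Ioi h1 h2
    rw [hU, hLval] at hu
    rw [hFdef]
    simp only
    rw [intervalIntegral.integral_of_le ht]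
    linarith [hu]
  have hθ2 : (0:ℝ) < θ / 2 := by linarith
  set M : ℝ := ∫ s in Set.Ioi (0:ℝ), s ^ (2 * H - 1) * Real.exp (-(θ / 2 * s)) with hMdef
  have hMint : IntegrableOn (fun s : ℝ => s ^ (2 * H - 1) * Real.exp (-(θ / 2 * s)))
      (Set.Ioi 0) := by
    have h := integrableOn_rpow_mul_exp_neg_mul_rpow hr zero_lt_one hθ2
    refine h.congr_fun (fun x hx => ?_) measurableSet_Ioi
    simp [Real.rpow_one, neg_mul]
  have hMnn : 0 ≤ M :=
    setIntegral_nonneg measurableSet_Ioi fun s hs =>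
      mul_nonneg (Real.rpow_nonneg (le_of_lt hs) _) (Real.exp_pos _).le
  have htailnn : ∀ t : ℝ, 0 ≤ t → 0 ≤ ∫ s in Set.Ioi t, g s := fun t ht =>
    setIntegral_nonneg measurableSet_Ioi fun s hs => hgnn s (lt_of_le_of_lt ht hs)
  have htail : ∀ t : ℝ, 0 ≤ t → (∫ s in Set.Ioi t, g s) ≤ M * Real.exp (-(θ / 2) * t) := by
    intro t ht
    have h2 : IntegrableOn g (Set.Ioi t) := hgIoi.mono_set (Set.Ioi_subset_Ioi ht)
    have hb : IntegrableOn
        (fun s => Real.exp (-(θ / 2) * t) * (s ^ (2 * H - 1) * Real.exp (-(θ / 2 * s))))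
        (Set.Ioi t) := (hMint.mono_set (Set.Ioi_subset_Ioi ht)).const_mul _
    have step1 : (∫ s in Set.Ioi t, g s) ≤
        ∫ s in Set.Ioi t, Real.exp (-(θ / 2) * t) * (s ^ (2 * H - 1) * Real.exp (-(θ / 2 * s))) := by
      refine setIntegral_mono_on h2 hb measurableSet_Ioi ?_
      intro s hs
      have hst : t < s := hs
      have hs0 : 0 < s := lt_of_le_of_lt ht hst
      have hexp : Real.exp (-(θ * s)) ≤ Real.exp (-(θ / 2) * t) * Real.exp (-(θ / 2 * s)) := by
        rw [← Real.exp_add]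
        apply Real.exp_le_exp.mpr
        nlinarith
      calc g s = s ^ (2 * H - 1) * Real.exp (-(θ * s)) := rfl
        _ ≤ s ^ (2 * H - 1) * (Real.exp (-(θ / 2) * t) * Real.exp (-(θ / 2 * s))) :=
            mul_le_mul_of_nonneg_left hexp (Real.rpow_nonneg hs0.le _)
        _ = Real.exp (-(θ / 2) * t) * (s ^ (2 * H - 1) * Real.exp (-(θ / 2 * s))) := by ring
    have step2 : (∫ s in Set.Ioi t,
          Real.exp (-(θ / 2) * t) * (s ^ (2 * H - 1) * Real.exp (-(θ / 2 * s))))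
        = Real.exp (-(θ / 2) * t) * ∫ s in Set.Ioi t, s ^ (2 * H - 1) * Real.exp (-(θ / 2 * s)) :=
      integral_const_mul _ _
    have step3 : (∫ s in Set.Ioi t, s ^ (2 * H - 1) * Real.exp (-(θ / 2 * s))) ≤ M := by
      rw [hMdef]
      refine setIntegral_mono_set hMint ?_ (Set.Ioi_subset_Ioi ht).eventuallyLE
      filter_upwards [self_mem_ae_restrict measurableSet_Ioi] with s hs
      exact mul_nonneg (Real.rpow_nonneg (le_of_lt hs) _) (Real.exp_pos _).le
    calc (∫ s in Set.Ioi t, g s) ≤ _ := step1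
      _ = Real.exp (-(θ / 2) * t) * ∫ s in Set.Ioi t, s ^ (2 * H - 1) * Real.exp (-(θ / 2 * s)) :=
          step2
      _ ≤ Real.exp (-(θ / 2) * t) * M :=
          mul_le_mul_of_nonneg_left step3 (Real.exp_pos _).le
      _ = M * Real.exp (-(θ / 2) * t) := mul_comm _ _
  refine ⟨H * (M * (2 / θ)) + 1, by positivity, ?_⟩
  intro T hT
  have hT0 : (0:ℝ) < T := lt_of_lt_of_le one_pos hT
  have hrw : (∫ t in (0:ℝ)..T, Real.exp (-θ * t) *
        (∫ u in (0:ℝ)..t, Real.exp (θ * u) * (t - u) ^ (2 * H - 1)))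
      = ∫ t in (0:ℝ)..T, F t := by
    refine intervalIntegral.integral_congr ?_
    intro t htm
    rw [Set.uIcc_of_le (by linarith : (0:ℝ) ≤ T)] at htm
    have key : ∀ u : ℝ,
        Real.exp (-θ * t) * (Real.exp (θ * u) * (t - u) ^ (2 * H - 1)) = g (t - u) := by
      intro u
      have hE : Real.exp (-θ * t) * Real.exp (θ * u) = Real.exp (-(θ * (t - u))) := by
        rw [← Real.exp_add]; congr 1; ring
      calc Real.exp (-θ * t) * (Real.exp (θ * u) * (t - u) ^ (2 * H - 1))
          = Real.exp (-θ * t) * Real.exp (θ * u) * (t - u) ^ (2 * H - 1) := by ring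
        _ = (t - u) ^ (2 * H - 1) * Real.exp (-(θ * (t - u))) := by rw [hE]; ring
        _ = g (t - u) := rfl
    calc Real.exp (-θ * t) * (∫ u in (0:ℝ)..t, Real.exp (θ * u) * (t - u) ^ (2 * H - 1))
        = ∫ u in (0:ℝ)..t, Real.exp (-θ * t) * (Real.exp (θ * u) * (t - u) ^ (2 * H - 1)) :=
          (intervalIntegral.integral_const_mul _ _).symm
      _ = ∫ u in (0:ℝ)..t, g (t - u) := by simp_rw [key]
      _ = ∫ s in (t - t)..(t - 0), g s := intervalIntegral.integral_comp_sub_left g t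
      _ = F t := by rw [sub_self, sub_zero]
  rw [hrw]
  have hexp_int : (∫ t in (0:ℝ)..T, Real.exp (-(θ / 2) * t)) ≤ 2 / θ := by
    have hderiv : ∀ x ∈ Set.uIcc (0:ℝ) T,
        HasDerivAt (fun y => -(2 / θ) * Real.exp (-(θ / 2) * y)) (Real.exp (-(θ / 2) * x)) x := by
      intro x _
      have h1 : HasDerivAt (fun y : ℝ => -(θ / 2) * y) (-(θ / 2)) x := by
        simpa using (hasDerivAt_id x).const_mul (-(θ / 2))
      have h3 := (h1.exp).const_mul (-(2 / θ))
      refine h3.congr_deriv ?_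
      field_simp
    rw [intervalIntegral.integral_eq_sub_of_hasDerivAt hderiv
      (Continuous.intervalIntegrable (by fun_prop) _ _)]
    have hE1 : (0:ℝ) < Real.exp (-(θ / 2) * T) := Real.exp_pos _
    have hE2 : Real.exp (-(θ / 2) * 0) = 1 := by rw [mul_zero, Real.exp_zero]
    rw [hE2]
    have h2θ : (0:ℝ) < 2 / θ := by positivity
    nlinarith
  have hFint : IntervalIntegrable F volume 0 T := hFcont.intervalIntegrable 0 T
  have key : |(∫ t in (0:ℝ)..T, F t) - T * L| ≤ M * (2 / θ) := by
    have h1 : (∫ t in (0:ℝ)..T, F t) - T * L = ∫ t in (0:ℝ)..T, (F t - L) := by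
      rw [intervalIntegral.integral_sub hFint intervalIntegrable_const,
        intervalIntegral.integral_const]
      simp
    rw [h1]
    have h2 : |∫ t in (0:ℝ)..T, (F t - L)| ≤ ∫ t in (0:ℝ)..T, |F t - L| :=
      intervalIntegral.abs_integral_le_integral_abs (by linarith)
    have h3 : (∫ t in (0:ℝ)..T, |F t - L|) ≤ ∫ t in (0:ℝ)..T, M * Real.exp (-(θ / 2) * t) := by
      apply intervalIntegral.integral_mono_on (by linarith)
        ((hFcont.sub continuous_const).abs.intervalIntegrable _ _)
        (Continuous.intervalIntegrable (by fun_prop) _ _)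
      intro t ht
      obtain ⟨ht0, _⟩ := ht
      show |F t - L| ≤ _
      rw [hsplit t ht0]
      have heq : L - (∫ s in Set.Ioi t, g s) - L = -(∫ s in Set.Ioi t, g s) := by ring
      rw [heq, abs_neg, abs_of_nonneg (htailnn t ht0)]
      exact htail t ht0
    have h4 : (∫ t in (0:ℝ)..T, M * Real.exp (-(θ / 2) * t))
        = M * ∫ t in (0:ℝ)..T, Real.exp (-(θ / 2) * t) :=
      intervalIntegral.integral_const_mul _ _
    calc |∫ t in (0:ℝ)..T, (F t - L)| ≤ _ := h2
      _ ≤ ∫ t in (0:ℝ)..T, M * Real.exp (-(θ / 2) * t) := h3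
      _ = M * ∫ t in (0:ℝ)..T, Real.exp (-(θ / 2) * t) := h4
      _ ≤ M * (2 / θ) := mul_le_mul_of_nonneg_left hexp_int hMnn
  have hrw2 : (H / T) * (∫ t in (0:ℝ)..T, F t) - H * Real.Gamma (2 * H) * θ ^ (-(2 * H))
      = (H / T) * ((∫ t in (0:ℝ)..T, F t) - T * L) := by
    rw [hLdef]
    field_simp
  rw [hrw2, abs_mul, abs_of_nonneg (by positivity : (0:ℝ) ≤ H / T)]
  have hfin : H / T * |(∫ t in (0:ℝ)..T, F t) - T * L| ≤ H / T * (M * (2 / θ)) :=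
    mul_le_mul_of_nonneg_left key (by positivity)
  refine hfin.trans ?_
  rw [show H / T * (M * (2 / θ)) = (H * (M * (2 / θ))) / T by ring]
  gcongr
  linarith
end

section
/- Let $H \in (0,1)$ and $\theta > 0$, and for $T > 0$ define $b_T := \frac{H}{T} \int_0^T e^{-2\theta t} \Big( \int_0^t e^{\theta u} u^{2H-1} \, du + \int_0^t e^{\theta(u+t)} (t-u)^{2H-1} \, du \Big) dt$. Then there exists a constant $C > 0$ (depending on $\theta$ and $H$) such that for all $T \geq 1$, $\big| b_T - H \Gamma(2H) \theta^{-2H} \big| \leq \frac{C}{T}$. In particular $b_T \to H\Gamma(2H)\theta^{-2H}$ as $T \to \infty$ with speed at least $1/T$. -/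
open MeasureTheory Real Filter Set

lemma aux_integrable {s c : ℝ} (hs : -1 < s - 1) (hc : 0 < c) :
    IntegrableOn (fun x : ℝ => Real.exp (-(c * x)) * x ^ (s - 1)) (Ioi 0) := by
  have h := integrableOn_rpow_mul_exp_neg_mul_rpow (p := 1) hs one_pos hc
  exact h.congr_fun (fun x hx => by dsimp only; rw [Real.rpow_one, neg_mul, mul_comm]) measurableSet_Ioi

lemma aux_gamma_scale {s c : ℝ} (hs : 0 < s) (hc : 0 < c) :
    ∫ x in Ioi (0:ℝ), Real.exp (-(c * x)) * x ^ (s - 1) = Real.Gamma s * c ^ (-s) := by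
  have h := MeasureTheory.integral_comp_mul_left_Ioi
      (fun x => Real.exp (-x) * x ^ (s - 1)) 0 hc
  simp only [mul_zero, smul_eq_mul] at h
  rw [← Real.Gamma_eq_integral hs] at h
  have h2 : (∫ x in Ioi (0:ℝ), Real.exp (-(c * x)) * (c * x) ^ (s - 1))
      = c ^ (s - 1) * ∫ x in Ioi (0:ℝ), Real.exp (-(c * x)) * x ^ (s - 1) := by
    rw [← integral_const_mul]
    refine setIntegral_congr_fun measurableSet_Ioi (fun x hx => ?_)
    rw [Real.mul_rpow hc.le (le_of_lt hx)]
    ring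
  rw [h2] at h
  have hcs : (c : ℝ) ^ (s - 1) ≠ 0 := (Real.rpow_pos_of_pos hc _).ne'
  have hneg : c ^ (-s) = (c ^ (s - 1))⁻¹ * c⁻¹ := by
    rw [show -s = (-(s - 1)) + (-1) by ring, Real.rpow_add hc, Real.rpow_neg hc.le,
      Real.rpow_neg_one]
  have hI : (∫ x in Ioi (0:ℝ), Real.exp (-(c * x)) * x ^ (s - 1))
      = (c ^ (s - 1))⁻¹ * (c⁻¹ * Real.Gamma s) := by
    rw [← h, ← mul_assoc, inv_mul_cancel₀ hcs, one_mul]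
  rw [hI, hneg]; ring

theorem stmt_4 (H θ : ℝ) (hH : H ∈ Set.Ioo (0:ℝ) 1) (hθ : 0 < θ)
    (b : ℝ → ℝ)
    (hb : ∀ T : ℝ, 0 < T → b T = (H / T) * (∫ t in (0:ℝ)..T, Real.exp (-(2 * θ) * t) *
        ((∫ u in (0:ℝ)..t, Real.exp (θ * u) * u ^ (2 * H - 1)) +
          (∫ u in (0:ℝ)..t, Real.exp (θ * (u + t)) * (t - u) ^ (2 * H - 1))))) :
    (∃ C : ℝ, 0 < C ∧ ∀ T : ℝ, 1 ≤ T →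
        |b T - H * Real.Gamma (2 * H) * θ ^ (-(2 * H))| ≤ C / T) ∧
      Tendsto b atTop (nhds (H * Real.Gamma (2 * H) * θ ^ (-(2 * H)))) := by
  obtain ⟨hH0, hH1⟩ := hH
  have h2H : (0:ℝ) < 2 * H := by linarith
  have hs1 : (-1:ℝ) < 2 * H - 1 := by linarith
  have hcont1 : Continuous fun t : ℝ => Real.exp (-(2 * θ) * t) :=
    Real.continuous_exp.comp (continuous_const.mul continuous_id)
  have hcont2 : Continuous fun t : ℝ => Real.exp (-(θ * t)) :=
    Real.continuous_exp.comp (continuous_const.mul continuous_id).neg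
  have hcont3 : Continuous fun t : ℝ => Real.exp (-(θ / 2 * t)) :=
    Real.continuous_exp.comp (continuous_const.mul continuous_id).neg
  have hcontA : Continuous fun u : ℝ => Real.exp (θ * u) :=
    Real.continuous_exp.comp (continuous_const.mul continuous_id)
  set f : ℝ → ℝ := fun v => Real.exp (-(θ * v)) * v ^ (2 * H - 1) with hfdef
  set A : ℝ → ℝ := fun t => ∫ u in (0:ℝ)..t, Real.exp (θ * u) * u ^ (2 * H - 1) with hAdef
  set J : ℝ → ℝ := fun t => ∫ v in (0:ℝ)..t, f v with hJdef
  set I : ℝ := Real.Gamma (2 * H) * θ ^ (-(2 * H)) with hIdef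
  have hf_int : IntegrableOn f (Ioi 0) := aux_integrable hs1 hθ
  have hf_val : ∫ v in Ioi (0:ℝ), f v = I := aux_gamma_scale h2H hθ
  have hf_ii : ∀ a b : ℝ, IntervalIntegrable f volume a b := fun a b =>
    (intervalIntegral.intervalIntegrable_rpow' hs1).continuousOn_mul hcont2.continuousOn
  have hA_ii : ∀ a b : ℝ, IntervalIntegrable
      (fun u => Real.exp (θ * u) * u ^ (2 * H - 1)) volume a b := fun a b =>
    (intervalIntegral.intervalIntegrable_rpow' hs1).continuousOn_mul hcontA.continuousOn
  have hJ_cont : Continuous J := intervalIntegral.continuous_primitive hf_ii 0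
  have hA_cont : Continuous A := intervalIntegral.continuous_primitive hA_ii 0
  set G : ℝ → ℝ := fun t => Real.exp (-(2 * θ) * t) * A t + J t with hGdef
  have hG_cont : Continuous G := (hcont1.mul hA_cont).add hJ_cont
  -- rewrite of the B integral
  have hBG : ∀ t : ℝ,
      (∫ u in (0:ℝ)..t, Real.exp (θ * (u + t)) * (t - u) ^ (2 * H - 1))
        = Real.exp (2 * θ * t) * J t := by
    intro t
    have h1 : (∫ u in (0:ℝ)..t, Real.exp (θ * (u + t)) * (t - u) ^ (2 * H - 1))
        = ∫ v in (t - t)..(t - 0), Real.exp (θ * (2 * t - v)) * v ^ (2 * H - 1) := by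
      rw [← intervalIntegral.integral_comp_sub_left
        (fun v => Real.exp (θ * (2 * t - v)) * v ^ (2 * H - 1)) t]
      apply intervalIntegral.integral_congr
      intro u hu
      show Real.exp (θ * (u + t)) * (t - u) ^ (2 * H - 1)
        = Real.exp (θ * (2 * t - (t - u))) * (t - u) ^ (2 * H - 1)
      rw [show θ * (u + t) = θ * (2 * t - (t - u)) by ring]
    rw [h1, sub_self, sub_zero]
    have h2 : ∀ v : ℝ, Real.exp (θ * (2 * t - v)) * v ^ (2 * H - 1)
        = Real.exp (2 * θ * t) * f v := by
      intro v
      simp only [hfdef]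
      rw [show θ * (2 * t - v) = 2 * θ * t + (-(θ * v)) by ring, Real.exp_add]
      ring
    simp_rw [h2]
    rw [intervalIntegral.integral_const_mul]
  -- the integrand equals G
  have hFG : ∀ t : ℝ, Real.exp (-(2 * θ) * t) *
      ((∫ u in (0:ℝ)..t, Real.exp (θ * u) * u ^ (2 * H - 1)) +
        (∫ u in (0:ℝ)..t, Real.exp (θ * (u + t)) * (t - u) ^ (2 * H - 1))) = G t := by
    intro t
    rw [hBG t]
    have h1 : Real.exp (-(2 * θ) * t) * Real.exp (2 * θ * t) = 1 := by
      rw [← Real.exp_add]; norm_num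
    have hGt : G t = Real.exp (-(2 * θ) * t) * A t + J t := rfl
    have hAt : A t = ∫ u in (0:ℝ)..t, Real.exp (θ * u) * u ^ (2 * H - 1) := rfl
    rw [hGt, ← hAt]
    calc Real.exp (-(2 * θ) * t) * (A t + Real.exp (2 * θ * t) * J t)
        = Real.exp (-(2 * θ) * t) * A t
          + (Real.exp (-(2 * θ) * t) * Real.exp (2 * θ * t)) * J t := by ring
      _ = Real.exp (-(2 * θ) * t) * A t + J t := by rw [h1]; ring
  -- nonnegativity and bound for A
  have hA_nonneg : ∀ t : ℝ, 0 ≤ t → 0 ≤ A t := fun t ht =>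
    intervalIntegral.integral_nonneg ht
      (fun u hu => mul_nonneg (Real.exp_pos _).le (Real.rpow_nonneg hu.1 _))
  have hA_bound : ∀ t : ℝ, 0 ≤ t →
      A t ≤ Real.exp (θ * t) * (t ^ (2 * H) / (2 * H)) := by
    intro t ht
    have h1 : A t ≤ ∫ u in (0:ℝ)..t, Real.exp (θ * t) * u ^ (2 * H - 1) := by
      apply intervalIntegral.integral_mono_on ht (hA_ii 0 t)
        ((intervalIntegral.intervalIntegrable_rpow' hs1).const_mul _)
      intro u hu
      exact mul_le_mul_of_nonneg_right
        (Real.exp_le_exp.2 (mul_le_mul_of_nonneg_left hu.2 hθ.le))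
        (Real.rpow_nonneg hu.1 _)
    have h2 : (∫ u in (0:ℝ)..t, Real.exp (θ * t) * u ^ (2 * H - 1))
        = Real.exp (θ * t) * (t ^ (2 * H) / (2 * H)) := by
      rw [intervalIntegral.integral_const_mul, integral_rpow (Or.inl hs1)]
      rw [show (2 * H - 1 + 1) = 2 * H by ring, Real.zero_rpow h2H.ne']
      ring
    linarith
  -- splitting the integral of f
  have hsplit : ∀ t : ℝ, 0 ≤ t → I = J t + ∫ v in Ioi t, f v := by
    intro t ht
    rw [← hf_val]
    show (∫ v in Ioi (0:ℝ), f v) = (∫ v in (0:ℝ)..t, f v) + ∫ v in Ioi t, f v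
    rw [intervalIntegral.integral_of_le ht,
      ← MeasureTheory.setIntegral_union (Ioc_disjoint_Ioi le_rfl) measurableSet_Ioi
        (hf_int.mono_set Ioc_subset_Ioi_self) (hf_int.mono_set (Ioi_subset_Ioi ht)),
      Ioc_union_Ioi_eq_Ioi ht]
  -- tail bound
  set f2 : ℝ → ℝ := fun v => Real.exp (-(θ / 2 * v)) * v ^ (2 * H - 1) with hf2def
  have hθ2 : (0:ℝ) < θ / 2 := by positivity
  have hf2_int : IntegrableOn f2 (Ioi 0) := aux_integrable hs1 hθ2
  set K : ℝ := Real.Gamma (2 * H) * (θ / 2) ^ (-(2 * H)) with hKdef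
  have hK_pos : 0 < K := by
    have h1 := Real.Gamma_pos_of_pos h2H
    have h2 := Real.rpow_pos_of_pos hθ2 (-(2 * H))
    positivity
  have hf2_val : ∫ v in Ioi (0:ℝ), f2 v = K := aux_gamma_scale h2H hθ2
  have hf2_nonneg : 0 ≤ᵐ[volume.restrict (Ioi (0:ℝ))] f2 := by
    refine (ae_restrict_iff' measurableSet_Ioi).2 (ae_of_all _ fun v hv => ?_)
    exact mul_nonneg (Real.exp_pos _).le (Real.rpow_nonneg (le_of_lt hv) _)
  have htail_nonneg : ∀ t : ℝ, 0 ≤ t → 0 ≤ ∫ v in Ioi t, f v := by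
    intro t ht
    refine setIntegral_nonneg measurableSet_Ioi fun v hv => ?_
    exact mul_nonneg (Real.exp_pos _).le (Real.rpow_nonneg (le_trans ht (le_of_lt hv)) _)
  have htail : ∀ t : ℝ, 0 ≤ t →
      (∫ v in Ioi t, f v) ≤ Real.exp (-(θ / 2 * t)) * K := by
    intro t ht
    have step1 : (∫ v in Ioi t, f v)
        ≤ ∫ v in Ioi t, Real.exp (-(θ / 2 * t)) * f2 v := by
      apply setIntegral_mono_on (hf_int.mono_set (Ioi_subset_Ioi ht))
        ((hf2_int.mono_set (Ioi_subset_Ioi ht)).const_mul _) measurableSet_Ioi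
      intro v hv
      have hv0 : (0:ℝ) ≤ v := le_trans ht (le_of_lt hv)
      have hexp : Real.exp (-(θ * v))
          ≤ Real.exp (-(θ / 2 * t)) * Real.exp (-(θ / 2 * v)) := by
        rw [← Real.exp_add]
        apply Real.exp_le_exp.2
        have : θ / 2 * t ≤ θ / 2 * v := mul_le_mul_of_nonneg_left (le_of_lt hv) hθ2.le
        linarith
      calc f v = Real.exp (-(θ * v)) * v ^ (2 * H - 1) := rfl
        _ ≤ (Real.exp (-(θ / 2 * t)) * Real.exp (-(θ / 2 * v))) * v ^ (2 * H - 1) :=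
            mul_le_mul_of_nonneg_right hexp (Real.rpow_nonneg hv0 _)
        _ = Real.exp (-(θ / 2 * t)) * f2 v := by simp only [hf2def]; ring
    have step2 : (∫ v in Ioi t, f2 v) ≤ ∫ v in Ioi (0:ℝ), f2 v :=
      setIntegral_mono_set hf2_int hf2_nonneg (Ioi_subset_Ioi ht).eventuallyLE
    calc (∫ v in Ioi t, f v) ≤ ∫ v in Ioi t, Real.exp (-(θ / 2 * t)) * f2 v := step1
      _ = Real.exp (-(θ / 2 * t)) * ∫ v in Ioi t, f2 v := integral_const_mul _ _
      _ ≤ Real.exp (-(θ / 2 * t)) * ∫ v in Ioi (0:ℝ), f2 v :=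
          mul_le_mul_of_nonneg_left step2 (Real.exp_pos _).le
      _ = Real.exp (-(θ / 2 * t)) * K := by rw [hf2_val]
  -- pointwise bound on G - I
  set φ : ℝ → ℝ := fun t => Real.exp (-(θ * t)) * t ^ (2 * H) / (2 * H)
      + Real.exp (-(θ / 2 * t)) * K with hφdef
  have hGI : ∀ t : ℝ, 0 ≤ t → |G t - I| ≤ φ t := by
    intro t ht
    have hg_le : Real.exp (-(2 * θ) * t) * A t
        ≤ Real.exp (-(θ * t)) * t ^ (2 * H) / (2 * H) := by
      have h1 := mul_le_mul_of_nonneg_left (hA_bound t ht) (Real.exp_pos (-(2 * θ) * t)).le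
      have h2 : Real.exp (-(2 * θ) * t) * (Real.exp (θ * t) * (t ^ (2 * H) / (2 * H)))
          = Real.exp (-(θ * t)) * t ^ (2 * H) / (2 * H) := by
        rw [← mul_assoc, ← Real.exp_add, show -(2 * θ) * t + θ * t = -(θ * t) by ring]
        ring
      linarith
    have hg_nonneg : 0 ≤ Real.exp (-(2 * θ) * t) * A t :=
      mul_nonneg (Real.exp_pos _).le (hA_nonneg t ht)
    have hJI : |J t - I| ≤ Real.exp (-(θ / 2 * t)) * K := by
      have h1 : J t - I = -(∫ v in Ioi t, f v) := by
        rw [hsplit t ht]; ring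
      rw [h1, abs_neg, abs_of_nonneg (htail_nonneg t ht)]
      exact htail t ht
    have hGt : G t - I = Real.exp (-(2 * θ) * t) * A t + (J t - I) := by ring
    calc |G t - I| = |Real.exp (-(2 * θ) * t) * A t + (J t - I)| := by rw [hGt]
      _ ≤ |Real.exp (-(2 * θ) * t) * A t| + |J t - I| := abs_add_le _ _
      _ ≤ Real.exp (-(θ * t)) * t ^ (2 * H) / (2 * H) + Real.exp (-(θ / 2 * t)) * K := by
          rw [abs_of_nonneg hg_nonneg]
          exact add_le_add hg_le hJI
      _ = φ t := rfl
  -- continuity of φ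
  have hrpow_cont : Continuous fun t : ℝ => t ^ (2 * H) := by
    rw [continuous_iff_continuousAt]
    exact fun x => Real.continuousAt_rpow_const x _ (Or.inr h2H.le)
  have hφ_cont : Continuous φ :=
    ((hcont2.mul hrpow_cont).div_const _).add (hcont3.mul continuous_const)
  -- integrals of the pieces of φ over Ioi 0
  have hM1_int : IntegrableOn (fun t : ℝ => Real.exp (-(θ * t)) * t ^ (2 * H)) (Ioi 0) := by
    have h := aux_integrable (s := 2 * H + 1) (by linarith) hθ
    simpa using h
  have hM1_val : ∫ t in Ioi (0:ℝ), Real.exp (-(θ * t)) * t ^ (2 * H)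
      = Real.Gamma (2 * H + 1) * θ ^ (-(2 * H + 1)) := by
    have h := aux_gamma_scale (s := 2 * H + 1) (by linarith) hθ
    simpa using h
  have hM2_int : IntegrableOn (fun t : ℝ => Real.exp (-(θ / 2 * t))) (Ioi 0) := by
    have h := aux_integrable (s := 1) (by norm_num) hθ2
    simpa using h
  have hM2_val : ∫ t in Ioi (0:ℝ), Real.exp (-(θ / 2 * t)) = (θ / 2)⁻¹ := by
    have h := aux_gamma_scale (s := 1) one_pos hθ2
    simpa [Real.Gamma_one, Real.rpow_neg_one, sub_self] using h
  set M : ℝ := Real.Gamma (2 * H + 1) * θ ^ (-(2 * H + 1)) / (2 * H) + (θ / 2)⁻¹ * K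
    with hMdef
  have hM_nonneg : 0 ≤ M := by
    have h1 := Real.Gamma_pos_of_pos (show (0:ℝ) < 2 * H + 1 by linarith)
    have h2 := Real.rpow_pos_of_pos hθ (-(2 * H + 1))
    positivity
  have hφ_int : ∀ T : ℝ, 0 ≤ T → (∫ t in (0:ℝ)..T, φ t) ≤ M := by
    intro T hT
    have part1 : (∫ t in (0:ℝ)..T, Real.exp (-(θ * t)) * t ^ (2 * H))
        ≤ Real.Gamma (2 * H + 1) * θ ^ (-(2 * H + 1)) := by
      rw [← hM1_val, intervalIntegral.integral_of_le hT]
      apply setIntegral_mono_set hM1_int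
      · refine (ae_restrict_iff' measurableSet_Ioi).2 (ae_of_all _ fun v hv => ?_)
        exact mul_nonneg (Real.exp_pos _).le (Real.rpow_nonneg (le_of_lt hv) _)
      · exact Ioc_subset_Ioi_self.eventuallyLE
    have part2 : (∫ t in (0:ℝ)..T, Real.exp (-(θ / 2 * t))) ≤ (θ / 2)⁻¹ := by
      rw [← hM2_val, intervalIntegral.integral_of_le hT]
      apply setIntegral_mono_set hM2_int
      · exact ae_of_all _ fun v => (Real.exp_pos _).le
      · exact Ioc_subset_Ioi_self.eventuallyLE
    have hii1 : IntervalIntegrable (fun t : ℝ => Real.exp (-(θ * t)) * t ^ (2 * H))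
        volume 0 T := (hcont2.mul hrpow_cont).intervalIntegrable _ _
    have hii2 : IntervalIntegrable (fun t : ℝ => Real.exp (-(θ / 2 * t))) volume 0 T :=
      hcont3.intervalIntegrable _ _
    have hsum : (∫ t in (0:ℝ)..T, φ t)
        = (∫ t in (0:ℝ)..T, Real.exp (-(θ * t)) * t ^ (2 * H)) / (2 * H)
          + (∫ t in (0:ℝ)..T, Real.exp (-(θ / 2 * t))) * K := by
      simp only [hφdef]
      rw [intervalIntegral.integral_add (hii1.div_const _) (hii2.mul_const _),
        intervalIntegral.integral_div, intervalIntegral.integral_mul_const]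
    rw [hsum, hMdef]
    have h1 : (∫ t in (0:ℝ)..T, Real.exp (-(θ * t)) * t ^ (2 * H)) / (2 * H)
        ≤ Real.Gamma (2 * H + 1) * θ ^ (-(2 * H + 1)) / (2 * H) :=
      div_le_div_of_nonneg_right part1 h2H.le |>.trans_eq rfl
    have h2 : (∫ t in (0:ℝ)..T, Real.exp (-(θ / 2 * t))) * K ≤ (θ / 2)⁻¹ * K :=
      mul_le_mul_of_nonneg_right part2 hK_pos.le
    linarith
  -- main bound
  have key : ∀ T : ℝ, 1 ≤ T →
      |b T - H * Real.Gamma (2 * H) * θ ^ (-(2 * H))| ≤ (H * M) / T := by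
    intro T hT
    have hT0 : (0:ℝ) < T := lt_of_lt_of_le one_pos hT
    have hG_eq : b T = (H / T) * ∫ t in (0:ℝ)..T, G t := by
      rw [hb T hT0]
      congr 1
      exact intervalIntegral.integral_congr fun t _ => hFG t
    have hsub : (∫ t in (0:ℝ)..T, (G t - I))
        = (∫ t in (0:ℝ)..T, G t) - T * I := by
      rw [intervalIntegral.integral_sub (hG_cont.intervalIntegrable _ _)
        intervalIntegrable_const, intervalIntegral.integral_const]
      simp
    have hbL : b T - H * Real.Gamma (2 * H) * θ ^ (-(2 * H))
        = (H / T) * ∫ t in (0:ℝ)..T, (G t - I) := by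
      rw [hG_eq, hsub, hIdef]
      field_simp
    rw [hbL, abs_mul, abs_of_nonneg (by positivity : (0:ℝ) ≤ H / T)]
    have habs : |∫ t in (0:ℝ)..T, (G t - I)| ≤ ∫ t in (0:ℝ)..T, |G t - I| :=
      intervalIntegral.abs_integral_le_integral_abs hT0.le
    have hmono : (∫ t in (0:ℝ)..T, |G t - I|) ≤ ∫ t in (0:ℝ)..T, φ t := by
      apply intervalIntegral.integral_mono_on hT0.le
        ((hG_cont.sub continuous_const).abs.intervalIntegrable _ _)
        (hφ_cont.intervalIntegrable _ _)
      intro t ht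
      exact hGI t ht.1
    have hfin : |∫ t in (0:ℝ)..T, (G t - I)| ≤ M :=
      le_trans habs (le_trans hmono (hφ_int T hT0.le))
    calc (H / T) * |∫ t in (0:ℝ)..T, (G t - I)| ≤ (H / T) * M :=
        mul_le_mul_of_nonneg_left hfin (by positivity)
      _ = (H * M) / T := by ring
  have hCpos : (0:ℝ) < H * M + 1 := by nlinarith [mul_nonneg hH0.le hM_nonneg]
  constructor
  · refine ⟨H * M + 1, hCpos, fun T hT => ?_⟩
    have hT0 : (0:ℝ) < T := lt_of_lt_of_le one_pos hT
    exact (key T hT).trans ((div_le_div_iff_of_pos_right hT0).2 (by linarith))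
  · have hC : Tendsto (fun T : ℝ => (H * M) / T) atTop (nhds 0) :=
      tendsto_const_nhds.div_atTop tendsto_id
    have h0 : Tendsto (fun T => b T - H * Real.Gamma (2 * H) * θ ^ (-(2 * H)))
        atTop (nhds 0) := by
      apply squeeze_zero_norm' _ hC
      filter_upwards [eventually_ge_atTop (1:ℝ)] with T hT
      simpa [Real.norm_eq_abs] using key T hT
    have h1 := h0.add_const (H * Real.Gamma (2 * H) * θ ^ (-(2 * H)))
    simpa using h1
end

section
/- Let $H \in (0, 3/4)$. Then $\lim_{T \to \infty} \frac{1}{T e^{4T}} \int_{[0,T]^4} e^{t_1 + s_1 + t_2 + s_2} \, H\big(t_2^{2H-1} - \mathrm{sgn}(t_2 - t_1)|t_2 - t_1|^{2H-1}\big) \, H\big(s_1^{2H-1} - \mathrm{sgn}(s_1 - s_2)|s_1 - s_2|^{2H-1}\big) \, dt_1 \, dt_2 \, ds_1 \, ds_2 = 0$. -/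
set_option maxHeartbeats 1000000

open MeasureTheory Real Filter intervalIntegral Set

lemma II_abs_rpow {r : ℝ} (hr : -1 < r) (b c : ℝ) :
    IntervalIntegrable (fun u : ℝ => |u| ^ r) volume b c := by
  have pos : ∀ d : ℝ, 0 ≤ d → IntervalIntegrable (fun u : ℝ => |u| ^ r) volume 0 d := by
    intro d hd
    have h1 := intervalIntegrable_rpow' hr (a := 0) (b := d)
    rw [intervalIntegrable_iff, uIoc_of_le hd] at h1 ⊢
    exact h1.congr_fun (fun x hx => by rw [abs_of_pos hx.1]) measurableSet_Ioc
  have key : ∀ d : ℝ, IntervalIntegrable (fun u : ℝ => |u| ^ r) volume 0 d := by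
    intro d
    rcases le_total 0 d with hd | hd
    · exact pos d hd
    · rw [IntervalIntegrable.iff_comp_neg]
      simp only [abs_neg, neg_zero]
      exact pos (-d) (by linarith)
  exact (key b).symm.trans (key c)

lemma II_abs_rpow_sub {r : ℝ} (hr : -1 < r) (c b d : ℝ) :
    IntervalIntegrable (fun u : ℝ => |u - c| ^ r) volume b d := by
  have := (II_abs_rpow hr (b - c) (d - c)).comp_sub_right c
  simpa using this

lemma int_abs_rpow_symm {r : ℝ} (hr : -1 < r) :
    ∫ u in (-1:ℝ)..1, |u| ^ r = 2 / (r + 1) := by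
  have hr1 : r + 1 ≠ 0 := by linarith
  have h01 : ∫ u in (0:ℝ)..1, |u| ^ r = 1 / (r + 1) := by
    rw [integral_congr (g := fun u : ℝ => u ^ r) (fun x hx => by
      rw [uIcc_of_le (by norm_num : (0:ℝ) ≤ 1)] at hx
      simp [abs_of_nonneg hx.1]),
      integral_rpow (Or.inl hr)]
    simp [Real.zero_rpow hr1]
  have hneg : ∫ u in (-1:ℝ)..0, |u| ^ r = 1 / (r + 1) := by
    have := intervalIntegral.integral_comp_neg (a := (0:ℝ)) (b := 1) (fun u : ℝ => |u| ^ r)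
    simp only [abs_neg, neg_zero, neg_neg] at this
    rw [← this, h01]
  rw [← intervalIntegral.integral_add_adjacent_intervals
    (II_abs_rpow hr (-1) 0) (II_abs_rpow hr 0 1), hneg, h01]
  ring

lemma lemA {a : ℝ} (ha : -1 < a) {T c : ℝ} (hT : 1 ≤ T) (hc0 : 0 ≤ c) (hcT : c ≤ T) :
    ∫ t in (0:ℝ)..T, Real.exp t * |t - c| ^ a
      ≤ Real.exp T * (1 + T ^ a + 2 / (a + 1)) := by
  have hT0 : (0:ℝ) ≤ T := by linarith
  have hind : Integrable ((Icc (c-1) (c+1)).indicator (fun t : ℝ => |t - c| ^ a)) volume := by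
    rw [integrable_indicator_iff measurableSet_Icc, integrableOn_Icc_iff_integrableOn_Ioc]
    have := II_abs_rpow_sub ha c (c-1) (c+1)
    rw [intervalIntegrable_iff, uIoc_of_le (by linarith : c - 1 ≤ c + 1)] at this
    exact this
  set g : ℝ → ℝ := fun t => Real.exp t * (1 + T ^ a)
      + Real.exp T * (Icc (c-1) (c+1)).indicator (fun t : ℝ => |t - c| ^ a) t with hg
  have hgint : IntegrableOn g (Ioc 0 T) volume := by
    exact ((Real.continuous_exp.mul continuous_const).integrableOn_Ioc).add
      ((hind.const_mul _).integrableOn)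
  rw [integral_of_le hT0]
  have step1 : ∫ t in Ioc 0 T, Real.exp t * |t - c| ^ a ≤ ∫ t in Ioc 0 T, g t := by
    apply integral_mono_of_nonneg
    · exact Eventually.of_forall fun t => mul_nonneg (Real.exp_pos t).le
        (Real.rpow_nonneg (abs_nonneg _) _)
    · exact hgint
    · rw [Filter.EventuallyLE, ae_restrict_iff' measurableSet_Ioc]
      apply Eventually.of_forall
      intro t ht
      rcases le_or_gt |t - c| 1 with h1 | h1
      · have hmem : t ∈ Icc (c-1) (c+1) := by
          rcases abs_le.1 h1 with ⟨h2, h3⟩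
          constructor <;> linarith
        rw [hg]
        simp only [indicator_of_mem hmem]
        have : Real.exp t * |t - c| ^ a ≤ Real.exp T * |t - c| ^ a :=
          mul_le_mul_of_nonneg_right (Real.exp_le_exp.2 ht.2)
            (Real.rpow_nonneg (abs_nonneg _) _)
        have hpos : 0 ≤ Real.exp t * (1 + T ^ a) := by
          have : (0:ℝ) ≤ T ^ a := Real.rpow_nonneg hT0 _
          positivity
        linarith
      · have htc : |t - c| ≤ T := by
          rw [abs_le]; constructor <;> [linarith [ht.1]; linarith [ht.2]]
        have hb : |t - c| ^ a ≤ 1 + T ^ a := by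
          rcases le_or_gt 0 a with ha' | ha'
          · have : |t - c| ^ a ≤ T ^ a := Real.rpow_le_rpow (abs_nonneg _) htc ha'
            have h0 : (0:ℝ) ≤ T ^ a := Real.rpow_nonneg hT0 _
            linarith
          · have : |t - c| ^ a ≤ 1 := Real.rpow_le_one_of_one_le_of_nonpos h1.le ha'.le
            have h0 : (0:ℝ) ≤ T ^ a := Real.rpow_nonneg hT0 _
            linarith
        have hind : 0 ≤ (Icc (c-1) (c+1)).indicator (fun t : ℝ => |t - c| ^ a) t :=
          indicator_nonneg (fun x _ => Real.rpow_nonneg (abs_nonneg _) _) t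
        have : Real.exp t * |t - c| ^ a ≤ Real.exp t * (1 + T ^ a) :=
          mul_le_mul_of_nonneg_left hb (Real.exp_pos t).le
        rw [hg]
        have := mul_nonneg (Real.exp_pos T).le hind
        dsimp only
        linarith
  have step2 : ∫ t in Ioc 0 T, g t ≤ Real.exp T * (1 + T ^ a + 2 / (a + 1)) := by
    rw [hg]; beta_reduce; rw [integral_add (f := fun t => Real.exp t * (1 + T ^ a))
      ((Real.continuous_exp.mul continuous_const).integrableOn_Ioc)
      ((hind.const_mul _).integrableOn)]
    have e1 : ∫ t in Ioc 0 T, Real.exp t * (1 + T ^ a) = (Real.exp T - 1) * (1 + T ^ a) := by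
      rw [MeasureTheory.integral_mul_const, ← intervalIntegral.integral_of_le hT0, integral_exp, Real.exp_zero]
    have e2 : ∫ t in Ioc 0 T, Real.exp T *
        (Icc (c-1) (c+1)).indicator (fun t : ℝ => |t - c| ^ a) t
        ≤ Real.exp T * (2 / (a + 1)) := by
      rw [MeasureTheory.integral_const_mul]
      apply mul_le_mul_of_nonneg_left _ (Real.exp_pos T).le
      have hle : ∫ t in Ioc 0 T, (Icc (c-1) (c+1)).indicator (fun t : ℝ => |t - c| ^ a) t
          ≤ ∫ t, (Icc (c-1) (c+1)).indicator (fun t : ℝ => |t - c| ^ a) t := by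
        apply setIntegral_le_integral hind
        exact Eventually.of_forall fun t =>
          indicator_nonneg (fun x _ => Real.rpow_nonneg (abs_nonneg _) _) t
      have heq : ∫ t, (Icc (c-1) (c+1)).indicator (fun t : ℝ => |t - c| ^ a) t
          = 2 / (a + 1) := by
        rw [MeasureTheory.integral_indicator measurableSet_Icc,
          ← restrict_Ioc_eq_restrict_Icc, ← integral_of_le (by linarith : c - 1 ≤ c + 1)]
        rw [intervalIntegral.integral_comp_sub_right (fun u : ℝ => |u| ^ a) c,
          show c - 1 - c = -1 by ring, show c + 1 - c = 1 by ring]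
        exact int_abs_rpow_symm ha
      rw [heq] at hle
      exact hle
    have hex : 0 < Real.exp T := Real.exp_pos T
    have h1Ta : (0:ℝ) ≤ 1 + T ^ a := by
      have : (0:ℝ) ≤ T ^ a := Real.rpow_nonneg hT0 _
      linarith
    nlinarith [e2, e1]
  linarith

lemma habs_sign (u : ℝ) : |Real.sign u| ≤ 1 := by
  rcases Real.sign_apply_eq u with h | h | h <;> rw [h] <;> norm_num

lemma kern_bound {Hc a : ℝ} (hH : 0 ≤ Hc) {x : ℝ} (hx : 0 < x) (u : ℝ) :
    |Hc * (x ^ a - Real.sign u * |u| ^ a)| ≤ Hc * (|x| ^ a + |u| ^ a) := by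
  rw [abs_mul, abs_of_nonneg hH]
  apply mul_le_mul_of_nonneg_left _ hH
  have h1 : |x ^ a - Real.sign u * |u| ^ a| ≤ |x ^ a| + |Real.sign u * |u| ^ a| :=
    abs_sub _ _
  have h2 : |x ^ a| = |x| ^ a := by rw [abs_of_nonneg (rpow_nonneg hx.le a), abs_of_pos hx]
  have h3 : |Real.sign u * |u| ^ a| ≤ |u| ^ a := by
    rw [abs_mul, abs_of_nonneg (rpow_nonneg (abs_nonneg u) a)]
    nlinarith [habs_sign u, rpow_nonneg (abs_nonneg u) a]
  linarith

lemma II_exp_abs {a : ℝ} (ha : -1 < a) (c b d : ℝ) :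
    IntervalIntegrable (fun t : ℝ => Real.exp t * |t - c| ^ a) volume b d :=
  (II_abs_rpow_sub ha c b d).continuousOn_mul Real.continuous_exp.continuousOn

lemma lemA0 {a : ℝ} (ha : -1 < a) {T : ℝ} (hT : 1 ≤ T) :
    ∫ t in (0:ℝ)..T, Real.exp t * |t| ^ a ≤ Real.exp T * (1 + T ^ a + 2 / (a + 1)) := by
  have := lemA ha hT le_rfl (by linarith : (0:ℝ) ≤ T)
  simpa using this

lemma lemD1 {Hc a T : ℝ} (hH : 0 ≤ Hc) (ha : -1 < a) (hT : 1 ≤ T) :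
    |∫ t1 in (0:ℝ)..T, Real.exp t1 * ∫ t2 in (0:ℝ)..T,
        Real.exp t2 * (Hc * (t2 ^ a - Real.sign (t2 - t1) * |t2 - t1| ^ a))|
      ≤ 2 * Hc * (Real.exp T * (1 + T ^ a + 2 / (a + 1))) * Real.exp T := by
  have hT0 : (0:ℝ) ≤ T := by linarith
  set B := Real.exp T * (1 + T ^ a + 2 / (a + 1)) with hBdef
  have hB : 0 ≤ B := by
    have h1 : (0:ℝ) ≤ T ^ a := rpow_nonneg hT0 _
    have h2 : (0:ℝ) < a + 1 := by linarith
    positivity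
  have inner : ∀ t1 ∈ Ioc (0:ℝ) T,
      |∫ t2 in (0:ℝ)..T,
        Real.exp t2 * (Hc * (t2 ^ a - Real.sign (t2 - t1) * |t2 - t1| ^ a))|
        ≤ Hc * (B + B) := by
    intro t1 ht1
    have hmaj : IntegrableOn
        (fun t2 : ℝ => Hc * (Real.exp t2 * |t2| ^ a + Real.exp t2 * |t2 - t1| ^ a))
        (Ioc 0 T) volume := by
      have i1 := II_exp_abs ha 0 0 T
      simp only [sub_zero] at i1
      have := (i1.add (II_exp_abs ha t1 0 T)).const_mul Hc
      rw [intervalIntegrable_iff, uIoc_of_le hT0] at this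
      exact this
    rw [← Real.norm_eq_abs, integral_of_le hT0]
    refine le_trans (norm_integral_le_of_norm_le hmaj ?_) ?_
    · rw [ae_restrict_iff' measurableSet_Ioc]
      apply Eventually.of_forall
      intro t2 ht2
      rw [Real.norm_eq_abs, abs_mul, abs_of_nonneg (Real.exp_pos t2).le, mul_add]
      have := kern_bound (a := a) hH (x := t2) ht2.1 (t2 - t1)
      nlinarith [Real.exp_pos t2, abs_nonneg (Hc * (t2 ^ a - Real.sign (t2 - t1) * |t2 - t1| ^ a))]
    · rw [MeasureTheory.integral_const_mul]
      apply mul_le_mul_of_nonneg_left _ hH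
      have i1 := II_exp_abs ha 0 0 T
      simp only [sub_zero] at i1
      rw [intervalIntegrable_iff, uIoc_of_le hT0] at i1
      have i2 := II_exp_abs ha t1 0 T
      rw [intervalIntegrable_iff, uIoc_of_le hT0] at i2
      rw [MeasureTheory.integral_add i1 i2]
      have b1 : ∫ t2 in Ioc (0:ℝ) T, Real.exp t2 * |t2| ^ a ≤ B := by
        rw [← integral_of_le hT0]; exact lemA0 ha hT
      have b2 : ∫ t2 in Ioc (0:ℝ) T, Real.exp t2 * |t2 - t1| ^ a ≤ B := by
        rw [← integral_of_le hT0]; exact lemA ha hT ht1.1.le ht1.2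
      linarith
  rw [← Real.norm_eq_abs, integral_of_le hT0]
  have hmaj1 : IntegrableOn (fun t1 : ℝ => Real.exp t1 * (Hc * (B + B))) (Ioc 0 T) volume :=
    (Real.continuous_exp.mul continuous_const).integrableOn_Ioc
  refine le_trans (norm_integral_le_of_norm_le hmaj1 ?_) ?_
  · rw [ae_restrict_iff' measurableSet_Ioc]
    apply Eventually.of_forall
    intro t1 ht1
    rw [Real.norm_eq_abs, abs_mul, abs_of_nonneg (Real.exp_pos t1).le]
    exact mul_le_mul_of_nonneg_left (inner t1 ht1) (Real.exp_pos t1).le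
  · rw [MeasureTheory.integral_mul_const, ← integral_of_le hT0, integral_exp, Real.exp_zero]
    have he : 0 < Real.exp T := Real.exp_pos T
    nlinarith [mul_nonneg hH (by linarith : (0:ℝ) ≤ B + B)]

lemma lemD2 {Hc a T : ℝ} (hH : 0 ≤ Hc) (ha : -1 < a) (hT : 1 ≤ T) :
    |∫ s1 in (0:ℝ)..T, Real.exp s1 * ∫ s2 in (0:ℝ)..T,
        Real.exp s2 * (Hc * (s1 ^ a - Real.sign (s1 - s2) * |s1 - s2| ^ a))|
      ≤ 2 * Hc * (Real.exp T * (1 + T ^ a + 2 / (a + 1))) * Real.exp T := by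
  have hT0 : (0:ℝ) ≤ T := by linarith
  have he : 0 < Real.exp T := Real.exp_pos T
  set B := Real.exp T * (1 + T ^ a + 2 / (a + 1)) with hBdef
  have hB : 0 ≤ B := by
    have h1 : (0:ℝ) ≤ T ^ a := rpow_nonneg hT0 _
    have h2 : (0:ℝ) < a + 1 := by linarith
    positivity
  have inner : ∀ s1 ∈ Ioc (0:ℝ) T,
      |∫ s2 in (0:ℝ)..T,
        Real.exp s2 * (Hc * (s1 ^ a - Real.sign (s1 - s2) * |s1 - s2| ^ a))|
        ≤ Hc * (|s1| ^ a * Real.exp T + B) := by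
    intro s1 hs1
    have hmaj : IntegrableOn
        (fun s2 : ℝ => Hc * (Real.exp s2 * |s1| ^ a + Real.exp s2 * |s2 - s1| ^ a))
        (Ioc 0 T) volume := by
      have i1 : IntervalIntegrable (fun s2 : ℝ => Real.exp s2 * |s1| ^ a) volume 0 T :=
        (Real.continuous_exp.mul continuous_const).intervalIntegrable _ _
      have := (i1.add (II_exp_abs ha s1 0 T)).const_mul Hc
      rw [intervalIntegrable_iff, uIoc_of_le hT0] at this
      exact this
    rw [← Real.norm_eq_abs, integral_of_le hT0]
    refine le_trans (norm_integral_le_of_norm_le hmaj ?_) ?_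
    · rw [ae_restrict_iff' measurableSet_Ioc]
      apply Eventually.of_forall
      intro s2 hs2
      rw [Real.norm_eq_abs, abs_mul, abs_of_nonneg (Real.exp_pos s2).le, mul_add]
      have hk := kern_bound (a := a) hH (x := s1) hs1.1 (s1 - s2)
      rw [abs_sub_comm s2 s1]
      nlinarith [Real.exp_pos s2, abs_nonneg (Hc * (s1 ^ a - Real.sign (s1 - s2) * |s1 - s2| ^ a))]
    · rw [MeasureTheory.integral_const_mul]
      apply mul_le_mul_of_nonneg_left _ hH
      have i1 : IntervalIntegrable (fun s2 : ℝ => Real.exp s2 * |s1| ^ a) volume 0 T :=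
        (Real.continuous_exp.mul continuous_const).intervalIntegrable _ _
      rw [intervalIntegrable_iff, uIoc_of_le hT0] at i1
      have i2 := II_exp_abs ha s1 0 T
      rw [intervalIntegrable_iff, uIoc_of_le hT0] at i2
      rw [MeasureTheory.integral_add i1 i2]
      have b1 : ∫ s2 in Ioc (0:ℝ) T, Real.exp s2 * |s1| ^ a ≤ |s1| ^ a * Real.exp T := by
        rw [MeasureTheory.integral_mul_const, ← integral_of_le hT0, integral_exp, Real.exp_zero]
        nlinarith [rpow_nonneg (abs_nonneg s1) a]
      have b2 : ∫ s2 in Ioc (0:ℝ) T, Real.exp s2 * |s2 - s1| ^ a ≤ B := by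
        rw [← integral_of_le hT0]; exact lemA ha hT hs1.1.le hs1.2
      linarith
  have hmaj2 : IntegrableOn
      (fun s1 : ℝ => Real.exp s1 * (Hc * (|s1| ^ a * Real.exp T + B))) (Ioc 0 T) volume := by
    have i1 := II_exp_abs ha 0 0 T
    simp only [sub_zero] at i1
    rw [intervalIntegrable_iff, uIoc_of_le hT0] at i1
    have i2 : IntegrableOn (fun s1 : ℝ => Real.exp s1) (Ioc 0 T) volume :=
      Real.continuous_exp.integrableOn_Ioc
    have h : IntegrableOn
        (fun x : ℝ => Hc * Real.exp T * (Real.exp x * |x| ^ a) + Hc * B * Real.exp x)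
        (Ioc 0 T) volume := (i1.const_mul _).add (i2.const_mul _)
    exact h.congr_fun (fun x _ => by ring) measurableSet_Ioc
  rw [← Real.norm_eq_abs, integral_of_le hT0]
  refine le_trans (norm_integral_le_of_norm_le hmaj2 ?_) ?_
  · rw [ae_restrict_iff' measurableSet_Ioc]
    apply Eventually.of_forall
    intro s1 hs1
    rw [Real.norm_eq_abs, abs_mul, abs_of_nonneg (Real.exp_pos s1).le]
    exact mul_le_mul_of_nonneg_left (inner s1 hs1) (Real.exp_pos s1).le
  · have expand : ∀ s1 : ℝ, Real.exp s1 * (Hc * (|s1| ^ a * Real.exp T + B))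
        = Hc * Real.exp T * (Real.exp s1 * |s1| ^ a) + Hc * B * Real.exp s1 := by
      intro s1; ring
    rw [MeasureTheory.integral_congr_ae (Eventually.of_forall fun s1 => expand s1)]
    have i1 := II_exp_abs ha 0 0 T
    simp only [sub_zero] at i1
    rw [intervalIntegrable_iff, uIoc_of_le hT0] at i1
    have i2 : IntegrableOn (fun s1 : ℝ => Real.exp s1) (Ioc 0 T) volume :=
      Real.continuous_exp.integrableOn_Ioc
    rw [MeasureTheory.integral_add (i1.const_mul _) (i2.const_mul _),
      MeasureTheory.integral_const_mul, MeasureTheory.integral_const_mul,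
      ← integral_of_le hT0, ← integral_of_le hT0, integral_exp, Real.exp_zero]
    have b1 : ∫ s1 in (0:ℝ)..T, Real.exp s1 * |s1| ^ a ≤ B := lemA0 ha hT
    have hint_nonneg : 0 ≤ ∫ s1 in (0:ℝ)..T, Real.exp s1 * |s1| ^ a := by
      apply intervalIntegral.integral_nonneg hT0
      intro x _
      exact mul_nonneg (Real.exp_pos x).le (rpow_nonneg (abs_nonneg x) a)
    nlinarith [mul_le_mul_of_nonneg_left b1 (mul_nonneg hH he.le), mul_nonneg hH hB, he,
      mul_nonneg (mul_nonneg hH hB) he.le]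

lemma factor (Hc a T : ℝ) :
    (∫ t1 in (0:ℝ)..T, ∫ t2 in (0:ℝ)..T, ∫ s1 in (0:ℝ)..T, ∫ s2 in (0:ℝ)..T,
        Real.exp (t1 + s1 + t2 + s2) *
          (Hc * (t2 ^ a - Real.sign (t2 - t1) * |t2 - t1| ^ a)) *
          (Hc * (s1 ^ a - Real.sign (s1 - s2) * |s1 - s2| ^ a)))
      = (∫ t1 in (0:ℝ)..T, Real.exp t1 * ∫ t2 in (0:ℝ)..T,
            Real.exp t2 * (Hc * (t2 ^ a - Real.sign (t2 - t1) * |t2 - t1| ^ a)))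
        * (∫ s1 in (0:ℝ)..T, Real.exp s1 * ∫ s2 in (0:ℝ)..T,
            Real.exp s2 * (Hc * (s1 ^ a - Real.sign (s1 - s2) * |s1 - s2| ^ a))) := by
  set S := ∫ s1 in (0:ℝ)..T, Real.exp s1 * ∫ s2 in (0:ℝ)..T,
      Real.exp s2 * (Hc * (s1 ^ a - Real.sign (s1 - s2) * |s1 - s2| ^ a)) with hS
  have inner4 : ∀ t1 t2 : ℝ,
      (∫ s1 in (0:ℝ)..T, ∫ s2 in (0:ℝ)..T,
          Real.exp (t1 + s1 + t2 + s2) *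
            (Hc * (t2 ^ a - Real.sign (t2 - t1) * |t2 - t1| ^ a)) *
            (Hc * (s1 ^ a - Real.sign (s1 - s2) * |s1 - s2| ^ a)))
        = (Real.exp t1 * Real.exp t2 *
            (Hc * (t2 ^ a - Real.sign (t2 - t1) * |t2 - t1| ^ a))) * S := by
    intro t1 t2
    rw [hS, ← intervalIntegral.integral_const_mul]
    apply integral_congr
    intro s1 _
    simp only []
    have hfun : (fun s2 => Real.exp (t1 + s1 + t2 + s2) *
          (Hc * (t2 ^ a - Real.sign (t2 - t1) * |t2 - t1| ^ a)) *
          (Hc * (s1 ^ a - Real.sign (s1 - s2) * |s1 - s2| ^ a)))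
        = fun s2 => ((Real.exp t1 * Real.exp t2 *
            (Hc * (t2 ^ a - Real.sign (t2 - t1) * |t2 - t1| ^ a))) * Real.exp s1) *
          (Real.exp s2 * (Hc * (s1 ^ a - Real.sign (s1 - s2) * |s1 - s2| ^ a))) := by
      funext s2
      simp only [Real.exp_add]
      ring
    rw [hfun, intervalIntegral.integral_const_mul, mul_assoc]
  calc (∫ t1 in (0:ℝ)..T, ∫ t2 in (0:ℝ)..T, ∫ s1 in (0:ℝ)..T, ∫ s2 in (0:ℝ)..T,
        Real.exp (t1 + s1 + t2 + s2) *
          (Hc * (t2 ^ a - Real.sign (t2 - t1) * |t2 - t1| ^ a)) *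
          (Hc * (s1 ^ a - Real.sign (s1 - s2) * |s1 - s2| ^ a)))
      = ∫ t1 in (0:ℝ)..T, ∫ t2 in (0:ℝ)..T,
          (Real.exp t1 * Real.exp t2 *
            (Hc * (t2 ^ a - Real.sign (t2 - t1) * |t2 - t1| ^ a))) * S := by
        apply integral_congr
        intro t1 _
        exact integral_congr fun t2 _ => inner4 t1 t2
    _ = ∫ t1 in (0:ℝ)..T, (Real.exp t1 * ∫ t2 in (0:ℝ)..T,
          Real.exp t2 * (Hc * (t2 ^ a - Real.sign (t2 - t1) * |t2 - t1| ^ a))) * S := by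
        apply integral_congr
        intro t1 _
        simp only []
        have hfun : (fun t2 => (Real.exp t1 * Real.exp t2 *
              (Hc * (t2 ^ a - Real.sign (t2 - t1) * |t2 - t1| ^ a))) * S)
            = fun t2 => (Real.exp t1 * S) *
              (Real.exp t2 * (Hc * (t2 ^ a - Real.sign (t2 - t1) * |t2 - t1| ^ a))) := by
          funext t2; ring
        rw [hfun, intervalIntegral.integral_const_mul]
        ring
    _ = (∫ t1 in (0:ℝ)..T, Real.exp t1 * ∫ t2 in (0:ℝ)..T,
          Real.exp t2 * (Hc * (t2 ^ a - Real.sign (t2 - t1) * |t2 - t1| ^ a))) * S := by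
        rw [← intervalIntegral.integral_mul_const]

theorem stmt_5 (H : ℝ) (hH : H ∈ Set.Ioo (0:ℝ) (3/4)) :
    Tendsto (fun T : ℝ =>
        (1 / (T * Real.exp (4 * T))) *
          ∫ t1 in (0:ℝ)..T, ∫ t2 in (0:ℝ)..T, ∫ s1 in (0:ℝ)..T, ∫ s2 in (0:ℝ)..T,
            Real.exp (t1 + s1 + t2 + s2) *
              (H * (t2 ^ (2 * H - 1) - Real.sign (t2 - t1) * |t2 - t1| ^ (2 * H - 1))) *
              (H * (s1 ^ (2 * H - 1) - Real.sign (s1 - s2) * |s1 - s2| ^ (2 * H - 1))))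
      atTop (nhds 0) := by
  obtain ⟨hH0, hH34⟩ := hH
  set a : ℝ := 2 * H - 1 with hadef
  have ha : -1 < a := by rw [hadef]; linarith
  have ha2 : a < 1 / 2 := by rw [hadef]; linarith
  set b : ℝ := max a (1/4) with hbdef
  have hb0 : (0:ℝ) < b := lt_of_lt_of_le (by norm_num) (le_max_right _ _)
  have hb : b < 1 / 2 := max_lt ha2 (by norm_num)
  set D : ℝ := 2 + 1 / H with hDdef
  have hD0 : 0 < D := by
    have : 0 < 1 / H := by positivity
    rw [hDdef]; linarith
  set K : ℝ := 4 * H ^ 2 * D ^ 2 with hKdef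
  have hK0 : 0 < K := by positivity
  apply squeeze_zero_norm' (a := fun T : ℝ => K * T ^ (2 * b - 1))
  · filter_upwards [eventually_ge_atTop (1:ℝ)] with T hT
    have hT0 : 0 < T := by linarith
    have heT : 0 < Real.exp T := Real.exp_pos T
    have he4 : Real.exp (4 * T) = Real.exp T ^ (4:ℕ) := by
      rw [show (4:ℝ) * T = (4:ℕ) * T by norm_num, Real.exp_nat_mul]
    have hpre : 0 < 1 / (T * Real.exp (4 * T)) := by positivity
    set C : ℝ := 1 + T ^ a + 2 / (a + 1) with hCdef
    have haC : (0:ℝ) < a + 1 := by linarith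
    have hTa : (0:ℝ) ≤ T ^ a := Real.rpow_nonneg hT0.le _
    have hC0 : 0 ≤ C := by rw [hCdef]; positivity
    have hTb1 : (1:ℝ) ≤ T ^ b := Real.one_le_rpow hT hb0.le
    have hTab : T ^ a ≤ T ^ b := Real.rpow_le_rpow_of_exponent_le hT (le_max_left _ _)
    have hCb : C ≤ D * T ^ b := by
      have h2a : 2 / (a + 1) = 1 / H := by
        rw [hadef]; rw [show 2 * H - 1 + 1 = 2 * H by ring]
        rw [div_eq_div_iff (by linarith) (by linarith)]; ring
      have h1H : (0:ℝ) < 1 / H := by positivity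
      rw [hCdef, h2a, hDdef]
      calc 1 + T ^ a + 1 / H ≤ T ^ b + T ^ b + (1 / H) * T ^ b := by
            nlinarith
        _ = (2 + 1 / H) * T ^ b := by ring
    -- bound the whole expression
    have hfac := factor H a T
    have hd1 := lemD1 (Hc := H) (a := a) (T := T) hH0.le ha hT
    have hd2 := lemD2 (Hc := H) (a := a) (T := T) hH0.le ha hT
    have hDbnd : 0 ≤ 2 * H * (Real.exp T * C) * Real.exp T := by positivity
    have hquad : |∫ t1 in (0:ℝ)..T, ∫ t2 in (0:ℝ)..T, ∫ s1 in (0:ℝ)..T, ∫ s2 in (0:ℝ)..T,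
        Real.exp (t1 + s1 + t2 + s2) *
          (H * (t2 ^ a - Real.sign (t2 - t1) * |t2 - t1| ^ a)) *
          (H * (s1 ^ a - Real.sign (s1 - s2) * |s1 - s2| ^ a))|
        ≤ (2 * H * (Real.exp T * C) * Real.exp T) ^ 2 := by
      rw [hfac, abs_mul, sq]
      exact mul_le_mul hd1 hd2 (abs_nonneg _) hDbnd
    rw [Real.norm_eq_abs, abs_mul, abs_of_pos hpre]
    calc (1 / (T * Real.exp (4 * T))) * |∫ t1 in (0:ℝ)..T, ∫ t2 in (0:ℝ)..T,
            ∫ s1 in (0:ℝ)..T, ∫ s2 in (0:ℝ)..T,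
            Real.exp (t1 + s1 + t2 + s2) *
              (H * (t2 ^ a - Real.sign (t2 - t1) * |t2 - t1| ^ a)) *
              (H * (s1 ^ a - Real.sign (s1 - s2) * |s1 - s2| ^ a))|
        ≤ (1 / (T * Real.exp (4 * T))) * (2 * H * (Real.exp T * C) * Real.exp T) ^ 2 :=
          mul_le_mul_of_nonneg_left hquad hpre.le
      _ = 4 * H ^ 2 * C ^ 2 / T := by
          rw [he4]
          have hne : (Real.exp T ^ (4:ℕ)) ≠ 0 := by positivity
          have hexp : (2 * H * (Real.exp T * C) * Real.exp T) ^ 2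
              = 4 * H ^ 2 * C ^ 2 * Real.exp T ^ (4:ℕ) := by ring
          rw [hexp, div_mul_eq_mul_div, one_mul, mul_comm T (Real.exp T ^ (4:ℕ)),
            ← div_div, mul_div_assoc, div_self hne, mul_one]
      _ ≤ K * T ^ (2 * b - 1) := by
          have hC2 : C ^ 2 ≤ D ^ 2 * (T ^ b) ^ 2 := by nlinarith
          have hTbb : (T ^ b) ^ 2 = T ^ (2 * b) := by
            rw [← Real.rpow_natCast (T ^ b) 2, ← Real.rpow_mul hT0.le]
            norm_num [mul_comm]
          have hrw : T ^ (2 * b - 1) = T ^ (2 * b) / T := by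
            rw [Real.rpow_sub hT0, Real.rpow_one]
          rw [hrw, hKdef, ← mul_div_assoc]
          rw [div_le_div_iff_of_pos_right hT0]
          nlinarith [hC2, hTbb]
  · have h := tendsto_rpow_neg_atTop (y := 1 - 2 * b) (by linarith)
    simp only [show -(1 - 2 * b) = 2 * b - 1 by ring] at h
    have h2 := h.const_mul K
    simpa using h2
end

section
/- Let $H \in (0, 3/4)$. Then $\lim_{T \to \infty} \frac{1}{T e^{3T}} \int_{[0,T]^3} e^{s_1 + t + s_2} \, H\big(t^{2H-1} + (T-t)^{2H-1}\big) \, H\big(s_1^{2H-1} - \mathrm{sgn}(s_1 - s_2)|s_1 - s_2|^{2H-1}\big) \, dt \, ds_1 \, ds_2 = 0$. -/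
open MeasureTheory Real Filter

section Helpers
open intervalIntegral Set

lemma igr1 (c T : ℝ) (hc : -1 < c) :
    IntervalIntegrable (fun t => Real.exp t * t ^ c) volume 0 T :=
  (intervalIntegrable_rpow' hc).continuousOn_mul (Real.continuous_exp.continuousOn)

lemma igr2 (c T s : ℝ) (hc : -1 < c) :
    IntervalIntegrable (fun t => Real.exp t * (s - t) ^ c) volume 0 T := by
  have h := ((intervalIntegrable_rpow' hc (a := s - 0) (b := s - T)).comp_sub_left s)
  simp only [sub_sub_cancel] at h
  exact h.continuousOn_mul (Real.continuous_exp.continuousOn)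

lemma gamma_bound (c T : ℝ) (hc : -1 < c) (hT : 0 ≤ T) :
    ∫ u in (0:ℝ)..T, Real.exp (-u) * u ^ c ≤ Real.Gamma (c + 1) := by
  have hgi : IntegrableOn (fun x => Real.exp (-x) * x ^ (c + 1 - 1)) (Ioi 0) :=
    Real.GammaIntegral_convergent (by linarith)
  rw [Real.Gamma_eq_integral (by linarith : (0:ℝ) < c + 1)]
  rw [intervalIntegral.integral_of_le hT]
  simp only [add_sub_cancel_right] at hgi ⊢
  refine setIntegral_mono_set hgi ?_ ?_
  · filter_upwards [ae_restrict_mem measurableSet_Ioi] with x hx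
    exact mul_nonneg (Real.exp_nonneg _) (Real.rpow_nonneg (le_of_lt hx) _)
  · exact Filter.Eventually.of_forall fun x hx => Ioc_subset_Ioi_self hx

lemma lemK (c T : ℝ) (hc : -1 < c) (hT : 0 ≤ T) :
    ∫ t in (0:ℝ)..T, Real.exp t * (T - t) ^ c ≤ Real.exp T * Real.Gamma (c + 1) := by
  have h1 : (∫ t in (0:ℝ)..T, Real.exp t * (T - t) ^ c)
      = ∫ u in (0:ℝ)..T, Real.exp (T - u) * u ^ c := by
    have := intervalIntegral.integral_comp_sub_left (a := 0) (b := T)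
      (fun u => Real.exp (T - u) * u ^ c) T
    simp only [sub_self, sub_zero] at this
    rw [← this]
    apply intervalIntegral.integral_congr
    intro x _
    simp [sub_sub_cancel]
  rw [h1]
  have h2 : ∀ u, Real.exp (T - u) * u ^ c = Real.exp T * (Real.exp (-u) * u ^ c) := by
    intro u
    rw [Real.exp_sub, Real.exp_neg]
    field_simp
  simp_rw [h2]
  rw [intervalIntegral.integral_const_mul]
  exact mul_le_mul_of_nonneg_left (gamma_bound c T hc hT) (Real.exp_nonneg T)

lemma rpow_two_bound (c t T : ℝ) (hc : -1 < c) (hc1 : c ≤ 1) (hT : 1 ≤ T)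
    (ht : T / 2 ≤ t) (ht2 : t ≤ T) : t ^ c ≤ 2 * T ^ c := by
  have hT0 : (0:ℝ) < T := by linarith
  have ht0 : (0:ℝ) < t := by linarith
  rcases le_or_gt 0 c with h | h
  · have : t ^ c ≤ T ^ c := Real.rpow_le_rpow ht0.le ht2 h
    nlinarith [Real.rpow_nonneg hT0.le c]
  · have h1 : t ^ c ≤ (T / 2) ^ c :=
      Real.rpow_le_rpow_of_nonpos (by linarith) ht h.le
    have h2 : (T / 2) ^ c = T ^ c / 2 ^ c := Real.div_rpow hT0.le (by norm_num : (0:ℝ) ≤ 2) c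
    have h3 : (2:ℝ) ^ (-c) ≤ 2 ^ (1:ℝ) :=
      Real.rpow_le_rpow_of_exponent_le (by norm_num) (by linarith)
    rw [Real.rpow_one] at h3
    have h4 : (0:ℝ) < (2:ℝ) ^ c := Real.rpow_pos_of_pos (by norm_num) c
    rw [h2] at h1
    rw [Real.rpow_neg (by norm_num)] at h3
    have h5 : T ^ c / 2 ^ c = T ^ c * ((2:ℝ)^c)⁻¹ := by ring
    have h6 : T ^ c * ((2:ℝ)^c)⁻¹ ≤ T ^ c * 2 :=
      mul_le_mul_of_nonneg_left h3 (Real.rpow_nonneg hT0.le c)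
    calc t ^ c ≤ T ^ c / 2 ^ c := h1
    _ = T ^ c * ((2:ℝ)^c)⁻¹ := h5
    _ ≤ T ^ c * 2 := h6
    _ = 2 * T ^ c := by ring

lemma lemS (c T : ℝ) (hc : -1 < c) (hc1 : c ≤ 1) (hT : 1 ≤ T) :
    ∫ t in (0:ℝ)..T, Real.exp t * t ^ c
      ≤ Real.exp (T/2) * T ^ (c+1) / (c+1) + 2 * Real.exp T * T ^ c := by
  have hT0 : (0:ℝ) < T := by linarith
  have hsplit : ∫ t in (0:ℝ)..T, Real.exp t * t ^ c
      = (∫ t in (0:ℝ)..(T/2), Real.exp t * t ^ c)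
        + ∫ t in (T/2)..T, Real.exp t * t ^ c := by
    rw [intervalIntegral.integral_add_adjacent_intervals (igr1 c (T/2) hc)
      ((igr1 c T hc).mono_set (Set.uIcc_subset_uIcc
        (Set.mem_uIcc.2 (Or.inl ⟨by linarith, by linarith⟩))
        (Set.mem_uIcc.2 (Or.inl ⟨by linarith, by linarith⟩))))]
  rw [hsplit]
  have hb1 : (∫ t in (0:ℝ)..(T/2), Real.exp t * t ^ c)
      ≤ Real.exp (T/2) * T ^ (c+1) / (c+1) := by
    have hmono : (∫ t in (0:ℝ)..(T/2), Real.exp t * t ^ c)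
        ≤ ∫ t in (0:ℝ)..(T/2), Real.exp (T/2) * t ^ c := by
      apply intervalIntegral.integral_mono_on (by linarith)
        (igr1 c (T/2) hc)
        ((intervalIntegrable_rpow' hc).const_mul _)
      intro x hx
      exact mul_le_mul_of_nonneg_right (Real.exp_le_exp.2 hx.2)
        (Real.rpow_nonneg hx.1 c)
    have hcomp : (∫ t in (0:ℝ)..(T/2), Real.exp (T/2) * t ^ c)
        = Real.exp (T/2) * ((T/2) ^ (c+1) / (c+1)) := by
      rw [intervalIntegral.integral_const_mul, integral_rpow (Or.inl hc),
        Real.zero_rpow (by linarith)]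
      ring
    have hle : (T/2) ^ (c+1) ≤ T ^ (c+1) :=
      Real.rpow_le_rpow (by linarith) (by linarith) (by linarith)
    calc (∫ t in (0:ℝ)..(T/2), Real.exp t * t ^ c)
        ≤ Real.exp (T/2) * ((T/2) ^ (c+1) / (c+1)) := hmono.trans hcomp.le
      _ ≤ Real.exp (T/2) * (T ^ (c+1) / (c+1)) := by
          apply mul_le_mul_of_nonneg_left _ (Real.exp_nonneg _)
          gcongr
          linarith
      _ = Real.exp (T/2) * T ^ (c+1) / (c+1) := by ring
  have hb2 : (∫ t in (T/2)..T, Real.exp t * t ^ c) ≤ 2 * Real.exp T * T ^ c := by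
    have hmono : (∫ t in (T/2)..T, Real.exp t * t ^ c)
        ≤ ∫ t in (T/2)..T, Real.exp t * (2 * T ^ c) := by
      apply intervalIntegral.integral_mono_on (by linarith)
        ((igr1 c T hc).mono_set (Set.uIcc_subset_uIcc
          (Set.mem_uIcc.2 (Or.inl ⟨by linarith, by linarith⟩))
          (Set.mem_uIcc.2 (Or.inl ⟨by linarith, by linarith⟩))))
        ((Real.continuous_exp.mul continuous_const).intervalIntegrable _ _)
      intro x hx
      exact mul_le_mul_of_nonneg_left (rpow_two_bound c x T hc hc1 hT hx.1 hx.2)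
        (Real.exp_nonneg x)
    have hcomp : (∫ t in (T/2)..T, Real.exp t * (2 * T ^ c))
        = (Real.exp T - Real.exp (T/2)) * (2 * T ^ c) := by
      rw [intervalIntegral.integral_mul_const, integral_exp]
    have : (Real.exp T - Real.exp (T/2)) * (2 * T ^ c) ≤ 2 * Real.exp T * T ^ c := by
      have h1 : Real.exp (T/2) ≥ 0 := Real.exp_nonneg _
      nlinarith [Real.rpow_nonneg hT0.le c, Real.exp_pos (T/2)]
    linarith [hmono.trans hcomp.le]
  linarith

lemma igr3 (c T s : ℝ) (hc : -1 < c) (hs0 : 0 ≤ s) (hsT : s ≤ T) :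
    IntervalIntegrable (fun x => Real.exp x * |s - x| ^ c) volume 0 T := by
  have h1 : IntervalIntegrable (fun x => Real.exp x * |s - x| ^ c) volume 0 s := by
    rw [intervalIntegrable_iff, Set.uIoc_of_le hs0]
    have := igr2 c s s hc
    rw [intervalIntegrable_iff, Set.uIoc_of_le hs0] at this
    refine this.congr_fun (fun x hx => ?_) measurableSet_Ioc
    rw [abs_of_nonneg (by linarith [hx.2] : (0:ℝ) ≤ s - x)]
  have h2 : IntervalIntegrable (fun x => Real.exp x * |s - x| ^ c) volume s T := by
    rw [intervalIntegrable_iff, Set.uIoc_of_le hsT]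
    have base : IntervalIntegrable (fun x => Real.exp x * (x - s) ^ c) volume s T := by
      have h := ((intervalIntegrable_rpow' hc (a := s - s) (b := T - s)).comp_sub_right s)
      simp only [sub_add_cancel] at h
      exact h.continuousOn_mul (Real.continuous_exp.continuousOn)
    rw [intervalIntegrable_iff, Set.uIoc_of_le hsT] at base
    refine base.congr_fun (fun x hx => ?_) measurableSet_Ioc
    rw [abs_of_nonpos (by linarith [hx.1] : s - x ≤ 0), neg_sub]
  exact h1.trans h2

lemma igr4 (c s a b : ℝ) (hc : -1 < c) :
    IntervalIntegrable (fun x => Real.exp x * (x - s) ^ c) volume a b := by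
  have h := ((intervalIntegrable_rpow' hc (a := a - s) (b := b - s)).comp_sub_right s)
  simp only [sub_add_cancel] at h
  exact h.continuousOn_mul (Real.continuous_exp.continuousOn)

lemma lemQ (c T s : ℝ) (hc : -1 < c) (hs0 : 0 ≤ s) (hsT : s ≤ T) :
    ∫ x in (0:ℝ)..T, Real.exp x * |s - x| ^ c
      ≤ Real.exp s * Real.Gamma (c+1) + Real.exp T * ((T - s) ^ (c+1) / (c+1)) := by
  have hsplit : ∫ x in (0:ℝ)..T, Real.exp x * |s - x| ^ c
      = (∫ x in (0:ℝ)..s, Real.exp x * |s - x| ^ c)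
        + ∫ x in s..T, Real.exp x * |s - x| ^ c := by
    rw [intervalIntegral.integral_add_adjacent_intervals
      ((igr3 c T s hc hs0 hsT).mono_set (Set.uIcc_subset_uIcc
        (Set.mem_uIcc.2 (Or.inl ⟨le_refl _, by linarith⟩))
        (Set.mem_uIcc.2 (Or.inl ⟨hs0, hsT⟩))))
      ((igr3 c T s hc hs0 hsT).mono_set (Set.uIcc_subset_uIcc
        (Set.mem_uIcc.2 (Or.inl ⟨hs0, hsT⟩))
        (Set.mem_uIcc.2 (Or.inl ⟨hs0.trans hsT, le_refl _⟩))))]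
  rw [hsplit]
  have hb1 : (∫ x in (0:ℝ)..s, Real.exp x * |s - x| ^ c)
      ≤ Real.exp s * Real.Gamma (c+1) := by
    have heq : (∫ x in (0:ℝ)..s, Real.exp x * |s - x| ^ c)
        = ∫ x in (0:ℝ)..s, Real.exp x * (s - x) ^ c := by
      apply intervalIntegral.integral_congr
      intro x hx
      rw [Set.uIcc_of_le hs0] at hx
      dsimp only
      rw [abs_of_nonneg (by linarith [hx.2] : (0:ℝ) ≤ s - x)]
    rw [heq]
    exact lemK c s hc hs0
  have hb2 : (∫ x in s..T, Real.exp x * |s - x| ^ c)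
      ≤ Real.exp T * ((T - s) ^ (c+1) / (c+1)) := by
    have heq : (∫ x in s..T, Real.exp x * |s - x| ^ c)
        = ∫ x in s..T, Real.exp x * (x - s) ^ c := by
      apply intervalIntegral.integral_congr
      intro x hx
      rw [Set.uIcc_of_le hsT] at hx
      dsimp only
      rw [abs_of_nonpos (by linarith [hx.1] : s - x ≤ 0), neg_sub]
    rw [heq]
    have hmono : (∫ x in s..T, Real.exp x * (x - s) ^ c)
        ≤ ∫ x in s..T, Real.exp T * (x - s) ^ c := by
      have hg : IntervalIntegrable (fun x => (x - s) ^ c) volume s T := by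
        have h := (intervalIntegrable_rpow' hc (a := s - s) (b := T - s)).comp_sub_right s
        simpa using h
      apply intervalIntegral.integral_mono_on hsT (igr4 c s s T hc) (hg.const_mul _)
      intro x hx
      exact mul_le_mul_of_nonneg_right (Real.exp_le_exp.2 hx.2)
        (Real.rpow_nonneg (by linarith [hx.1]) c)
    have hcomp : (∫ x in s..T, Real.exp T * (x - s) ^ c)
        = Real.exp T * ((T - s) ^ (c+1) / (c+1)) := by
      rw [intervalIntegral.integral_const_mul]
      congr 1
      rw [show (∫ x in s..T, (x - s) ^ c) = ∫ x in (s - s)..(T - s), x ^ c from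
        intervalIntegral.integral_comp_sub_right (fun x => x ^ c) s]
      rw [sub_self, integral_rpow (Or.inl hc), Real.zero_rpow (by linarith)]
      ring
    exact hmono.trans hcomp.le
  linarith

lemma sign_abs_le (y : ℝ) : |Real.sign y| ≤ 1 := by
  rcases Real.sign_apply_eq y with h | h | h <;> rw [h] <;> norm_num

lemma lemInner (c T s : ℝ) (hc : -1 < c) (hs0 : 0 ≤ s) (hsT : s ≤ T) :
    |∫ x in (0:ℝ)..T, Real.exp x * (s ^ c - Real.sign (s - x) * |s - x| ^ c)|
      ≤ s ^ c * Real.exp T + Real.exp s * Real.Gamma (c+1)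
        + Real.exp T * ((T - s) ^ (c+1) / (c+1)) := by
  have hT0 : (0:ℝ) ≤ T := hs0.trans hsT
  set g : ℝ → ℝ := fun x => Real.exp x * s ^ c + Real.exp x * |s - x| ^ c with hg
  have hgint1 : IntervalIntegrable (fun x => Real.exp x * s ^ c) volume 0 T :=
    (Real.continuous_exp.mul continuous_const).intervalIntegrable _ _
  have hgint : IntervalIntegrable g volume 0 T := hgint1.add (igr3 c T s hc hs0 hsT)
  have hpt : ∀ x, ‖Real.exp x * (s ^ c - Real.sign (s - x) * |s - x| ^ c)‖ ≤ g x := by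
    intro x
    have hb : (0:ℝ) ≤ |s - x| ^ c := Real.rpow_nonneg (abs_nonneg _) c
    have h2 : |s ^ c - Real.sign (s - x) * |s - x| ^ c| ≤ s ^ c + |s - x| ^ c := by
      calc |s ^ c - Real.sign (s - x) * |s - x| ^ c|
          ≤ |s ^ c| + |Real.sign (s - x) * |s - x| ^ c| := by
            rw [sub_eq_add_neg]; exact (abs_add_le _ _).trans (by rw [abs_neg])
        _ = s ^ c + |Real.sign (s - x)| * |(|s - x| ^ c)| := by
            rw [abs_of_nonneg (Real.rpow_nonneg hs0 c), abs_mul]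
        _ ≤ s ^ c + 1 * |s - x| ^ c := by
            have := mul_le_mul_of_nonneg_right (sign_abs_le (s - x)) hb
            rw [abs_of_nonneg hb]; linarith
        _ = s ^ c + |s - x| ^ c := by ring
    rw [Real.norm_eq_abs, abs_mul, Real.abs_exp]
    calc Real.exp x * |s ^ c - Real.sign (s - x) * |s - x| ^ c|
        ≤ Real.exp x * (s ^ c + |s - x| ^ c) :=
          mul_le_mul_of_nonneg_left h2 (Real.exp_nonneg x)
      _ = g x := by rw [hg]; ring
  have h1 : ‖∫ x in (0:ℝ)..T, Real.exp x * (s ^ c - Real.sign (s - x) * |s - x| ^ c)‖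
      ≤ |∫ x in (0:ℝ)..T, g x| :=
    intervalIntegral.norm_integral_le_abs_of_norm_le (Filter.Eventually.of_forall (fun x => hpt x)) hgint
  have hgnn : 0 ≤ ∫ x in (0:ℝ)..T, g x := by
    apply intervalIntegral.integral_nonneg hT0
    intro u hu
    have : (0:ℝ) ≤ s ^ c := Real.rpow_nonneg hs0 c
    have hb : (0:ℝ) ≤ |s - u| ^ c := Real.rpow_nonneg (abs_nonneg _) c
    have he := Real.exp_nonneg u
    rw [hg]
    positivity
  have h2 : (∫ x in (0:ℝ)..T, g x)
      = (∫ x in (0:ℝ)..T, Real.exp x * s ^ c)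
        + ∫ x in (0:ℝ)..T, Real.exp x * |s - x| ^ c := by
    rw [hg, intervalIntegral.integral_add hgint1 (igr3 c T s hc hs0 hsT)]
  have h3 : (∫ x in (0:ℝ)..T, Real.exp x * s ^ c) ≤ s ^ c * Real.exp T := by
    rw [intervalIntegral.integral_mul_const, integral_exp]
    have : (0:ℝ) ≤ s ^ c := Real.rpow_nonneg hs0 c
    nlinarith [Real.exp_pos (0:ℝ), Real.exp_nonneg T]
  rw [Real.norm_eq_abs] at h1
  rw [abs_of_nonneg hgnn] at h1
  have := lemQ c T s hc hs0 hsT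
  calc |∫ x in (0:ℝ)..T, Real.exp x * (s ^ c - Real.sign (s - x) * |s - x| ^ c)|
      ≤ ∫ x in (0:ℝ)..T, g x := h1
    _ = _ + _ := h2
    _ ≤ _ := by linarith

lemma lemI (c T Hc : ℝ) (hH : 0 < Hc) (hc : -1 < c) (hc1 : c ≤ 1) (hT : 1 ≤ T) :
    |∫ t in (0:ℝ)..T, Real.exp t * (Hc * (t ^ c + (T - t) ^ c))|
      ≤ Hc * Real.exp T * (Real.exp (-(T/2)) * T ^ (c+1) / (c+1) + 2 * T ^ c
          + Real.Gamma (c+1)) := by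
  have hT0 : (0:ℝ) ≤ T := by linarith
  have heq : (∫ t in (0:ℝ)..T, Real.exp t * (Hc * (t ^ c + (T - t) ^ c)))
      = Hc * ((∫ t in (0:ℝ)..T, Real.exp t * t ^ c)
          + ∫ t in (0:ℝ)..T, Real.exp t * (T - t) ^ c) := by
    rw [← intervalIntegral.integral_add (igr1 c T hc) (igr2 c T T hc),
      ← intervalIntegral.integral_const_mul]
    apply intervalIntegral.integral_congr
    intro x _
    dsimp only
    ring
  rw [heq, abs_mul, abs_of_pos hH, mul_assoc]
  apply mul_le_mul_of_nonneg_left _ hH.le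
  have h1 := lemS c T hc hc1 hT
  have h2 := lemK c T hc hT0
  have hnn1 : 0 ≤ ∫ t in (0:ℝ)..T, Real.exp t * t ^ c := by
    apply intervalIntegral.integral_nonneg hT0
    intro u hu
    exact mul_nonneg (Real.exp_nonneg u) (Real.rpow_nonneg hu.1 c)
  have hnn2 : 0 ≤ ∫ t in (0:ℝ)..T, Real.exp t * (T - t) ^ c := by
    apply intervalIntegral.integral_nonneg hT0
    intro u hu
    exact mul_nonneg (Real.exp_nonneg u) (Real.rpow_nonneg (by linarith [hu.2]) c)
  have hexp : Real.exp (T/2) = Real.exp T * Real.exp (-(T/2)) := by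
    rw [← Real.exp_add]; ring_nf
  rw [abs_of_nonneg (by linarith)]
  have hfinal : Real.exp (T/2) * T ^ (c+1) / (c+1) + 2 * Real.exp T * T ^ c
      + Real.exp T * Real.Gamma (c+1)
      = Real.exp T * (Real.exp (-(T/2)) * T ^ (c+1) / (c+1) + 2 * T ^ c
          + Real.Gamma (c+1)) := by
    rw [hexp]; ring
  linarith

lemma lemJ (c T Hc : ℝ) (hH : 0 < Hc) (hc : -1 < c) (hc1 : c ≤ 1) (hT : 1 ≤ T) :
    |∫ s1 in (0:ℝ)..T, Real.exp s1 *
        ∫ x in (0:ℝ)..T, Real.exp x * (Hc * (s1 ^ c - Real.sign (s1 - x) * |s1 - x| ^ c))|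
      ≤ Hc * Real.exp (2*T) * (Real.exp (-(T/2)) * T ^ (c+1) / (c+1) + 2 * T ^ c
          + Real.Gamma (c+1) + Real.Gamma (c+2) / (c+1)) := by
  have hT0 : (0:ℝ) ≤ T := by linarith
  have hc10 : (0:ℝ) < c + 1 := by linarith
  have hGamma1 : 0 < Real.Gamma (c+1) := Real.Gamma_pos_of_pos hc10
  have hGamma2 : 0 < Real.Gamma (c+2) := Real.Gamma_pos_of_pos (by linarith)
  set g1 : ℝ → ℝ := fun s1 => (Hc * Real.exp T) * (Real.exp s1 * s1 ^ c)
      + (Hc * Real.Gamma (c+1)) * (Real.exp s1 * Real.exp s1)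
      + (Hc * Real.exp T / (c+1)) * (Real.exp s1 * (T - s1) ^ (c+1)) with hg1
  have hg1int : IntervalIntegrable g1 volume 0 T := by
    refine (((igr1 c T hc).const_mul _).add
      (((Real.continuous_exp.mul Real.continuous_exp).intervalIntegrable _ _).const_mul _)).add
      ((igr2 (c+1) T T (by linarith)).const_mul _)
  have hpt : ∀ s1 ∈ Set.Ioc (0:ℝ) T,
      ‖Real.exp s1 * ∫ x in (0:ℝ)..T,
          Real.exp x * (Hc * (s1 ^ c - Real.sign (s1 - x) * |s1 - x| ^ c))‖ ≤ g1 s1 := by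
    intro s1 hs1
    have hs10 : (0:ℝ) ≤ s1 := hs1.1.le
    have hKeq : (∫ x in (0:ℝ)..T,
          Real.exp x * (Hc * (s1 ^ c - Real.sign (s1 - x) * |s1 - x| ^ c)))
        = Hc * ∫ x in (0:ℝ)..T,
            Real.exp x * (s1 ^ c - Real.sign (s1 - x) * |s1 - x| ^ c) := by
      rw [← intervalIntegral.integral_const_mul]
      apply intervalIntegral.integral_congr
      intro x _
      dsimp only
      ring
    rw [Real.norm_eq_abs, abs_mul, Real.abs_exp, hKeq, abs_mul, abs_of_pos hH]
    have hinner := lemInner c T s1 hc hs10 hs1.2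
    calc Real.exp s1 * (Hc * |∫ x in (0:ℝ)..T,
            Real.exp x * (s1 ^ c - Real.sign (s1 - x) * |s1 - x| ^ c)|)
        ≤ Real.exp s1 * (Hc * (s1 ^ c * Real.exp T + Real.exp s1 * Real.Gamma (c+1)
            + Real.exp T * ((T - s1) ^ (c+1) / (c+1)))) := by
          apply mul_le_mul_of_nonneg_left _ (Real.exp_nonneg s1)
          exact mul_le_mul_of_nonneg_left hinner hH.le
      _ = g1 s1 := by rw [hg1]; field_simp
  have h1 : ‖∫ s1 in (0:ℝ)..T, Real.exp s1 *
        ∫ x in (0:ℝ)..T, Real.exp x * (Hc * (s1 ^ c - Real.sign (s1 - x) * |s1 - x| ^ c))‖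
      ≤ |∫ s1 in (0:ℝ)..T, g1 s1| := by
    apply intervalIntegral.norm_integral_le_abs_of_norm_le _ hg1int
    rw [Set.uIoc_of_le hT0]
    filter_upwards [ae_restrict_mem measurableSet_Ioc] with s1 hs1
    exact hpt s1 hs1
  -- now bound ∫ g1
  have hsum : (∫ s1 in (0:ℝ)..T, g1 s1)
      = (Hc * Real.exp T) * (∫ s1 in (0:ℝ)..T, Real.exp s1 * s1 ^ c)
        + (Hc * Real.Gamma (c+1)) * (∫ s1 in (0:ℝ)..T, Real.exp s1 * Real.exp s1)
        + (Hc * Real.exp T / (c+1)) * ∫ s1 in (0:ℝ)..T, Real.exp s1 * (T - s1) ^ (c+1) := by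
    rw [hg1]
    rw [intervalIntegral.integral_add (((igr1 c T hc).const_mul _).add
      ((show IntervalIntegrable (fun x => Real.exp x * Real.exp x) volume 0 T from (Real.continuous_exp.mul Real.continuous_exp).intervalIntegrable _ _).const_mul _))
      ((igr2 (c+1) T T (by linarith)).const_mul _),
      intervalIntegral.integral_add ((igr1 c T hc).const_mul _)
      ((show IntervalIntegrable (fun x => Real.exp x * Real.exp x) volume 0 T from (Real.continuous_exp.mul Real.continuous_exp).intervalIntegrable _ _).const_mul _),
      intervalIntegral.integral_const_mul, intervalIntegral.integral_const_mul,
      intervalIntegral.integral_const_mul]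
  have hS := lemS c T hc hc1 hT
  have hE2 : (∫ s1 in (0:ℝ)..T, Real.exp s1 * Real.exp s1) ≤ Real.exp T * Real.exp T := by
    have : (∫ s1 in (0:ℝ)..T, Real.exp s1 * Real.exp s1)
        ≤ ∫ s1 in (0:ℝ)..T, Real.exp T * Real.exp s1 := by
      apply intervalIntegral.integral_mono_on hT0
        ((Real.continuous_exp.mul Real.continuous_exp).intervalIntegrable _ _)
        ((Real.continuous_exp.intervalIntegrable _ _).const_mul _)
      intro x hx
      exact mul_le_mul_of_nonneg_right (Real.exp_le_exp.2 hx.2) (Real.exp_nonneg x)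
    rw [intervalIntegral.integral_const_mul, integral_exp] at this
    nlinarith [Real.exp_pos T, Real.exp_pos (0:ℝ)]
  have hK2 : (∫ s1 in (0:ℝ)..T, Real.exp s1 * (T - s1) ^ (c+1))
      ≤ Real.exp T * Real.Gamma (c+2) := by
    have h := lemK (c+1) T (by linarith) hT0
    rwa [show c+1+1 = c+2 by ring] at h
  have hSnn : 0 ≤ ∫ s1 in (0:ℝ)..T, Real.exp s1 * s1 ^ c := by
    apply intervalIntegral.integral_nonneg hT0
    intro u hu
    exact mul_nonneg (Real.exp_nonneg u) (Real.rpow_nonneg hu.1 c)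
  have hE2nn : 0 ≤ ∫ s1 in (0:ℝ)..T, Real.exp s1 * Real.exp s1 := by
    apply intervalIntegral.integral_nonneg hT0
    intro u _
    exact mul_nonneg (Real.exp_nonneg u) (Real.exp_nonneg u)
  have hK2nn : 0 ≤ ∫ s1 in (0:ℝ)..T, Real.exp s1 * (T - s1) ^ (c+1) := by
    apply intervalIntegral.integral_nonneg hT0
    intro u hu
    exact mul_nonneg (Real.exp_nonneg u) (Real.rpow_nonneg (by linarith [hu.2]) (c+1))
  have hg1nn : 0 ≤ ∫ s1 in (0:ℝ)..T, g1 s1 := by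
    rw [hsum]
    have := Real.exp_nonneg T
    positivity
  rw [Real.norm_eq_abs] at h1
  rw [abs_of_nonneg hg1nn] at h1
  have hexp2 : Real.exp T * Real.exp (T/2) = Real.exp (2*T) * Real.exp (-(T/2)) := by
    rw [← Real.exp_add, ← Real.exp_add]; ring_nf
  have hexp3 : Real.exp T * Real.exp T = Real.exp (2*T) := by
    rw [← Real.exp_add]; ring_nf
  have hfinal : (Hc * Real.exp T) * (Real.exp (T/2) * T ^ (c+1) / (c+1) + 2 * Real.exp T * T ^ c)
        + (Hc * Real.Gamma (c+1)) * (Real.exp T * Real.exp T)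
        + (Hc * Real.exp T / (c+1)) * (Real.exp T * Real.Gamma (c+2))
      = Hc * Real.exp (2*T) * (Real.exp (-(T/2)) * T ^ (c+1) / (c+1) + 2 * T ^ c
          + Real.Gamma (c+1) + Real.Gamma (c+2) / (c+1)) := by
    rw [← hexp3, show Real.exp (T/2) = Real.exp T * Real.exp (-(T/2)) by
      rw [← Real.exp_add]; ring_nf]
    field_simp
  have hb1 : (Hc * Real.exp T) * (∫ s1 in (0:ℝ)..T, Real.exp s1 * s1 ^ c)
      ≤ (Hc * Real.exp T) * (Real.exp (T/2) * T ^ (c+1) / (c+1) + 2 * Real.exp T * T ^ c) :=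
    mul_le_mul_of_nonneg_left hS (by positivity)
  have hb2 : (Hc * Real.Gamma (c+1)) * (∫ s1 in (0:ℝ)..T, Real.exp s1 * Real.exp s1)
      ≤ (Hc * Real.Gamma (c+1)) * (Real.exp T * Real.exp T) :=
    mul_le_mul_of_nonneg_left hE2 (by positivity)
  have hb3 : (Hc * Real.exp T / (c+1)) * (∫ s1 in (0:ℝ)..T, Real.exp s1 * (T - s1) ^ (c+1))
      ≤ (Hc * Real.exp T / (c+1)) * (Real.exp T * Real.Gamma (c+2)) :=
    mul_le_mul_of_nonneg_left hK2 (by positivity)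
  calc |∫ s1 in (0:ℝ)..T, Real.exp s1 *
        ∫ x in (0:ℝ)..T, Real.exp x * (Hc * (s1 ^ c - Real.sign (s1 - x) * |s1 - x| ^ c))|
      ≤ ∫ s1 in (0:ℝ)..T, g1 s1 := h1
    _ = _ := hsum
    _ ≤ _ := by rw [← hfinal]; linarith

lemma limM (c C0 : ℝ) (hc : -1 < c) (hc2 : c < 1/2) :
    Tendsto (fun T : ℝ =>
        (Real.exp (-(T/2)) * T ^ (c+1) / (c+1) + 2 * T ^ c + C0)^2 / T)
      atTop (nhds 0) := by
  have hc10 : (0:ℝ) < c + 1 := by linarith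
  set M : ℝ → ℝ := fun T => Real.exp (-(T/2)) * T ^ (c+1) / (c+1) + 2 * T ^ c + C0 with hM
  set u : ℝ → ℝ := fun T => M T * T ^ (-(1/2):ℝ) with hu
  -- limit of the three pieces
  have t2half : Tendsto (fun T : ℝ => T / 2) atTop atTop :=
    Tendsto.atTop_div_const (by norm_num) tendsto_id
  have tsq : Tendsto (fun T : ℝ => T^2 * Real.exp (-(T/2))) atTop (nhds 0) := by
    have h := (tendsto_pow_mul_exp_neg_atTop_nhds_zero 2).comp t2half
    have h4 := h.const_mul (4:ℝ)
    rw [mul_zero] at h4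
    apply h4.congr
    intro T
    simp only [Function.comp_apply]
    ring
  have t3 : Tendsto (fun T : ℝ => Real.exp (-(T/2)) * T ^ (c+1) / (c+1) * T ^ (-(1/2):ℝ))
      atTop (nhds 0) := by
    apply squeeze_zero' (g := fun T => T^2 * Real.exp (-(T/2)) / (c+1))
    · filter_upwards [eventually_ge_atTop (1:ℝ)] with T hT
      have hT0 : (0:ℝ) < T := by linarith
      positivity
    · filter_upwards [eventually_ge_atTop (1:ℝ)] with T hT
      have hT0 : (0:ℝ) < T := by linarith
      have h1 : T ^ (c+1) * T ^ (-(1/2):ℝ) = T ^ (c + 1 + -(1/2)) :=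
        (Real.rpow_add hT0 _ _).symm
      have h2 : T ^ (c + 1 + -(1/2)) ≤ T ^ (2:ℝ) :=
        Real.rpow_le_rpow_of_exponent_le hT (by linarith)
      have h3 : T ^ (2:ℝ) = T^2 := by
        rw [show (2:ℝ) = ((2:ℕ):ℝ) by norm_num, Real.rpow_natCast]
      calc Real.exp (-(T/2)) * T ^ (c+1) / (c+1) * T ^ (-(1/2):ℝ)
          = Real.exp (-(T/2)) * (T ^ (c+1) * T ^ (-(1/2):ℝ)) / (c+1) := by ring
        _ ≤ Real.exp (-(T/2)) * T^2 / (c+1) := by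
            rw [h1, ← h3]
            gcongr
        _ = T^2 * Real.exp (-(T/2)) / (c+1) := by ring
    · have := tsq.div_const (c+1)
      simpa using this
  have t2 : Tendsto (fun T : ℝ => 2 * T ^ c * T ^ (-(1/2):ℝ)) atTop (nhds 0) := by
    have h := (tendsto_rpow_neg_atTop (by linarith : (0:ℝ) < 1/2 - c)).const_mul (2:ℝ)
    rw [mul_zero] at h
    apply h.congr'
    filter_upwards [eventually_gt_atTop (0:ℝ)] with T hT0
    rw [show -(1/2 - c) = c + -(1/2) by ring, Real.rpow_add hT0]
    ring
  have t1 : Tendsto (fun T : ℝ => C0 * T ^ (-(1/2):ℝ)) atTop (nhds 0) := by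
    have h := (tendsto_rpow_neg_atTop (by norm_num : (0:ℝ) < 1/2)).const_mul C0
    rwa [mul_zero] at h
  have tu : Tendsto u atTop (nhds 0) := by
    have h := (t3.add t2).add t1
    rw [add_zero, add_zero] at h
    apply h.congr
    intro T
    rw [hu, hM]
    ring
  have tu2 : Tendsto (fun T => u T * u T) atTop (nhds 0) := by
    have := tu.mul tu
    rwa [mul_zero] at this
  apply tu2.congr'
  filter_upwards [eventually_gt_atTop (0:ℝ)] with T hT0
  rw [hu]
  have h1 : T ^ (-(1/2):ℝ) * T ^ (-(1/2):ℝ) = T ^ (-(1:ℝ)) := by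
    rw [← Real.rpow_add hT0]; norm_num
  have h2 : T ^ (-(1:ℝ)) = T⁻¹ := by
    rw [Real.rpow_neg_one]
  calc M T * T ^ (-(1/2):ℝ) * (M T * T ^ (-(1/2):ℝ))
      = M T ^ 2 * (T ^ (-(1/2):ℝ) * T ^ (-(1/2):ℝ)) := by ring
    _ = M T ^ 2 * T⁻¹ := by rw [h1, h2]
    _ = M T ^ 2 / T := by ring

theorem stmt_6 (H : ℝ) (hH : H ∈ Set.Ioo (0:ℝ) (3/4)) :
    Tendsto (fun T : ℝ =>
        (1 / (T * Real.exp (3 * T))) *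
          ∫ t in (0:ℝ)..T, ∫ s1 in (0:ℝ)..T, ∫ s2 in (0:ℝ)..T,
            Real.exp (s1 + t + s2) *
              (H * (t ^ (2 * H - 1) + (T - t) ^ (2 * H - 1))) *
              (H * (s1 ^ (2 * H - 1) - Real.sign (s1 - s2) * |s1 - s2| ^ (2 * H - 1))))
      atTop (nhds 0) := by
  obtain ⟨hH0, hH34⟩ := hH
  set c : ℝ := 2 * H - 1 with hc_def
  have hc : -1 < c := by rw [hc_def]; linarith
  have hc1 : c ≤ 1 := by rw [hc_def]; linarith
  have hc2 : c < 1/2 := by rw [hc_def]; linarith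
  have hc10 : (0:ℝ) < c + 1 := by linarith
  have hGamma1 : 0 < Real.Gamma (c+1) := Real.Gamma_pos_of_pos hc10
  have hGamma2 : 0 < Real.Gamma (c+2) := Real.Gamma_pos_of_pos (by linarith)
  set C0 : ℝ := Real.Gamma (c+1) + Real.Gamma (c+2) / (c+1) with hC0
  set M : ℝ → ℝ := fun T => Real.exp (-(T/2)) * T ^ (c+1) / (c+1) + 2 * T ^ c + C0 with hM
  have hg : Tendsto (fun T => H^2 * (M T ^ 2 / T)) atTop (nhds 0) := by
    have := (limM c C0 hc hc2).const_mul (H^2)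
    rwa [mul_zero] at this
  apply squeeze_zero_norm' _ hg
  filter_upwards [eventually_ge_atTop (1:ℝ)] with T hT
  have hT0 : (0:ℝ) < T := by linarith
  have key : (∫ t in (0:ℝ)..T, ∫ s1 in (0:ℝ)..T, ∫ s2 in (0:ℝ)..T,
        Real.exp (s1 + t + s2) * (H * (t ^ c + (T - t) ^ c)) *
          (H * (s1 ^ c - Real.sign (s1 - s2) * |s1 - s2| ^ c)))
      = (∫ t in (0:ℝ)..T, Real.exp t * (H * (t ^ c + (T - t) ^ c)))
        * ∫ s1 in (0:ℝ)..T, Real.exp s1 * ∫ s2 in (0:ℝ)..T,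
            Real.exp s2 * (H * (s1 ^ c - Real.sign (s1 - s2) * |s1 - s2| ^ c)) := by
    rw [← intervalIntegral.integral_mul_const]
    apply intervalIntegral.integral_congr
    intro t _
    dsimp only
    rw [← intervalIntegral.integral_const_mul]
    apply intervalIntegral.integral_congr
    intro s1 _
    dsimp only
    rw [← mul_assoc, ← intervalIntegral.integral_const_mul]
    apply intervalIntegral.integral_congr
    intro s2 _
    dsimp only
    rw [Real.exp_add, Real.exp_add]
    ring
  have hI := lemI c T H hH0 hc hc1 hT
  have hJ := lemJ c T H hH0 hc hc1 hT
  have hMnn : 0 ≤ M T := by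
    rw [hM, hC0]
    have h1 : (0:ℝ) ≤ T ^ (c+1) := Real.rpow_nonneg hT0.le _
    have h2 : (0:ℝ) ≤ T ^ c := Real.rpow_nonneg hT0.le _
    have h3 := Real.exp_nonneg (-(T/2))
    positivity
  have hIb : |∫ t in (0:ℝ)..T, Real.exp t * (H * (t ^ c + (T - t) ^ c))|
      ≤ H * Real.exp T * M T := by
    refine hI.trans ?_
    rw [hM, hC0]
    have : (0:ℝ) < H * Real.exp T := by positivity
    have h4 : 0 ≤ Real.Gamma (c+2) / (c+1) := by positivity
    nlinarith
  have hJb : |∫ s1 in (0:ℝ)..T, Real.exp s1 * ∫ s2 in (0:ℝ)..T,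
        Real.exp s2 * (H * (s1 ^ c - Real.sign (s1 - s2) * |s1 - s2| ^ c))|
      ≤ H * Real.exp (2*T) * M T := by
    refine hJ.trans ?_
    rw [hM, hC0]
    ring_nf
    exact le_refl _
  rw [key]
  rw [norm_mul, Real.norm_eq_abs, Real.norm_eq_abs, abs_mul]
  have habs1 : |1 / (T * Real.exp (3 * T))| = 1 / (T * Real.exp (3 * T)) := by
    rw [abs_of_pos]
    positivity
  rw [habs1]
  have hprod : |∫ t in (0:ℝ)..T, Real.exp t * (H * (t ^ c + (T - t) ^ c))|
        * |∫ s1 in (0:ℝ)..T, Real.exp s1 * ∫ s2 in (0:ℝ)..T,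
            Real.exp s2 * (H * (s1 ^ c - Real.sign (s1 - s2) * |s1 - s2| ^ c))|
      ≤ (H * Real.exp T * M T) * (H * Real.exp (2*T) * M T) :=
    mul_le_mul hIb hJb (abs_nonneg _) (by positivity)
  have hexp : Real.exp T * Real.exp (2*T) = Real.exp (3*T) := by
    rw [← Real.exp_add]; ring_nf
  have heq : (1 / (T * Real.exp (3 * T))) * ((H * Real.exp T * M T) * (H * Real.exp (2*T) * M T))
      = H^2 * (M T ^ 2 / T) := by
    have hE : Real.exp (3*T) ≠ 0 := Real.exp_ne_zero _
    have hTne : T ≠ 0 := ne_of_gt hT0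
    calc (1 / (T * Real.exp (3 * T))) * ((H * Real.exp T * M T) * (H * Real.exp (2*T) * M T))
        = H^2 * M T^2 * (Real.exp T * Real.exp (2*T)) / (T * Real.exp (3*T)) := by ring
      _ = H^2 * M T^2 * Real.exp (3*T) / (T * Real.exp (3*T)) := by rw [hexp]
      _ = H^2 * (M T ^ 2 / T) := by field_simp
  calc (1 / (T * Real.exp (3 * T))) * (|_| * |_|)
      ≤ (1 / (T * Real.exp (3 * T))) * ((H * Real.exp T * M T) * (H * Real.exp (2*T) * M T)) := by
        apply mul_le_mul_of_nonneg_left hprod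
        positivity
    _ = H^2 * (M T ^ 2 / T) := heq

end Helpers
end

section
/- Let $H \in (0, 1/2)$. For $T > 0$ and $x, u \in [0,T]$ define $\varphi_1(x) := \int_x^T \big( (t-x)^{2H-1} - T^{2H-1} \big) \big( (T-t)^{2H-1} - (T-t+x)^{2H-1} \big) dt$, $\varphi_2(x) := \int_x^T \big( (t-x)^{2H-1} - t^{2H-1} \big) (T-t+x)^{2H-1} dt$, and $\varphi_3(x,u) := T^{2H-1} \int_x^T \big( \mathrm{sgn}(u-t)|u-t|^{2H-1} - \mathrm{sgn}(x+u-t)|x+u-t|^{2H-1} \big) dt$. Then $\limsup_{T \to \infty} T^{1-2H} \int_{[0,T]^2} e^{-u-x} \big( |\varphi_1(x)| + |\varphi_2(x)| + |\varphi_3(x,u)| \big) \, dx \, du < \infty$. -/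
open MeasureTheory Real Filter intervalIntegral Topology

lemma aux_ii_shift {a : ℝ} (h : -1 < a) (c d w : ℝ) :
    IntervalIntegrable (fun t => (t - w) ^ a) volume c d := by
  simpa using (intervalIntegrable_rpow' (a := c - w) (b := d - w) h).comp_sub_right w

lemma aux_ii_refl {a : ℝ} (h : -1 < a) (c d w : ℝ) :
    IntervalIntegrable (fun t => (w - t) ^ a) volume c d := by
  simpa using (intervalIntegrable_rpow' (a := w - c) (b := w - d) h).comp_sub_left w

lemma aux_ii_congr {f g : ℝ → ℝ} {c d : ℝ} (hf : IntervalIntegrable f volume c d)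
    (h : Set.EqOn f g (Set.uIcc c d)) : IntervalIntegrable g volume c d := by
  rw [intervalIntegrable_iff] at hf ⊢
  refine hf.congr ?_
  filter_upwards [ae_restrict_mem measurableSet_uIoc] with t ht
  exact h (Set.uIoc_subset_uIcc ht)

lemma aux_eval_shift {a : ℝ} (h : -1 < a) (c d w : ℝ) :
    ∫ t in c..d, (t - w) ^ a = ((d - w) ^ (a+1) - (c - w) ^ (a+1)) / (a+1) := by
  rw [show (fun t => (t - w) ^ a) = fun t => (fun s : ℝ => s ^ a) (t - w) from rfl]
  rw [intervalIntegral.integral_comp_sub_right (fun s : ℝ => s ^ a) w]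
  exact integral_rpow (Or.inl h)

lemma aux_eval_refl {a : ℝ} (h : -1 < a) (c d w : ℝ) :
    ∫ t in c..d, (w - t) ^ a = ((w - c) ^ (a+1) - (w - d) ^ (a+1)) / (a+1) := by
  rw [show (fun t => (w - t) ^ a) = fun t => (fun s : ℝ => s ^ a) (w - t) from rfl]
  rw [intervalIntegral.integral_comp_sub_left (fun s : ℝ => s ^ a) w]
  exact integral_rpow (Or.inl h)

-- sign function description on the two sides
lemma aux_sign_eq_left {a w : ℝ} (ha2 : a ≠ 0) {t : ℝ} (ht : t ≤ w) :
    Real.sign (w - t) * |w - t| ^ a = (w - t) ^ a := by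
  rcases eq_or_lt_of_le ht with rfl | ht'
  · simp [Real.sign_zero, Real.zero_rpow ha2]
  · rw [Real.sign_of_pos (by linarith), abs_of_pos (by linarith), one_mul]

lemma aux_sign_eq_right {a w : ℝ} (ha2 : a ≠ 0) {t : ℝ} (ht : w ≤ t) :
    Real.sign (w - t) * |w - t| ^ a = -((t - w) ^ a) := by
  rcases eq_or_lt_of_le ht with rfl | ht'
  · simp [Real.sign_zero, Real.zero_rpow ha2]
  · rw [Real.sign_of_neg (by linarith), abs_of_neg (by linarith), neg_one_mul, neg_sub]

lemma aux_sign_eval {a : ℝ} (ha1 : -1 < a) (ha2 : a < 0) {c d : ℝ} (w : ℝ) (hcd : c ≤ d) :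
    ∫ t in c..d, Real.sign (w - t) * |w - t| ^ a
      = (|w - c| ^ (a+1) - |w - d| ^ (a+1)) / (a+1) := by
  have ha0 : a ≠ 0 := ha2.ne
  have hq : a + 1 ≠ 0 := by linarith
  rcases le_or_gt w c with hwc | hcw
  · rw [intervalIntegral.integral_congr (g := fun t => -((t - w) ^ a)) ?_]
    · rw [intervalIntegral.integral_neg, aux_eval_shift ha1,
        abs_of_nonpos (by linarith), abs_of_nonpos (by linarith : w - d ≤ 0)]
      ring_nf
    · intro t ht
      rw [Set.uIcc_of_le hcd] at ht
      exact aux_sign_eq_right ha0 (le_trans hwc ht.1)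
  rcases le_or_gt d w with hdw | hwd
  · rw [intervalIntegral.integral_congr (g := fun t => (w - t) ^ a) ?_]
    · rw [aux_eval_refl ha1, abs_of_nonneg (by linarith), abs_of_nonneg (by linarith : 0 ≤ w - d)]
    · intro t ht
      rw [Set.uIcc_of_le hcd] at ht
      exact aux_sign_eq_left ha0 (le_trans ht.2 hdw)
  · -- c < w < d
    have h1 : IntervalIntegrable (fun t => Real.sign (w - t) * |w - t| ^ a) volume c w := by
      refine aux_ii_congr (aux_ii_refl ha1 c w w) ?_
      intro t ht
      rw [Set.uIcc_of_le hcw.le] at ht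
      exact (aux_sign_eq_left ha0 ht.2).symm
    have h2 : IntervalIntegrable (fun t => Real.sign (w - t) * |w - t| ^ a) volume w d := by
      refine aux_ii_congr ((aux_ii_shift ha1 w d w).neg) ?_
      intro t ht
      rw [Set.uIcc_of_le hwd.le] at ht
      exact (aux_sign_eq_right ha0 ht.1).symm
    rw [← intervalIntegral.integral_add_adjacent_intervals h1 h2]
    have e1 : ∫ t in c..w, Real.sign (w - t) * |w - t| ^ a
        = ((w - c) ^ (a+1) - (w - w) ^ (a+1)) / (a+1) := by
      rw [intervalIntegral.integral_congr (g := fun t => (w - t) ^ a) ?_]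
      · exact aux_eval_refl ha1 c w w
      · intro t ht
        rw [Set.uIcc_of_le hcw.le] at ht
        exact aux_sign_eq_left ha0 ht.2
    have e2 : ∫ t in w..d, Real.sign (w - t) * |w - t| ^ a
        = -(((d - w) ^ (a+1) - (w - w) ^ (a+1)) / (a+1)) := by
      rw [intervalIntegral.integral_congr (g := fun t => -((t - w) ^ a)) ?_]
      · rw [intervalIntegral.integral_neg, aux_eval_shift ha1]
      · intro t ht
        rw [Set.uIcc_of_le hwd.le] at ht
        exact aux_sign_eq_right ha0 ht.1
    rw [e1, e2, sub_self, Real.zero_rpow hq, abs_of_pos (by linarith : 0 < w - c),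
      abs_of_neg (by linarith : w - d < 0)]
    rw [neg_sub]
    ring

-- Bernoulli-type: b^a - (b+x)^a ≤ (-a) x b^(a-1) for a < 0
lemma aux_key {a : ℝ} (ha2 : a < 0) {b x : ℝ} (hb : 0 < b) (hx : 0 ≤ x) :
    b ^ a - (b + x) ^ a ≤ (-a) * x * b ^ (a - 1) := by
  have hpos : ∀ s ∈ Set.uIcc b (b + x), (0:ℝ) < s := by
    intro s hs
    rw [Set.uIcc_of_le (by linarith)] at hs
    linarith [hs.1]
  have hderiv : ∀ s ∈ Set.uIcc b (b + x), HasDerivAt (fun y : ℝ => y ^ a) (a * s ^ (a - 1)) s :=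
    fun s hs => Real.hasDerivAt_rpow_const (Or.inl (hpos s hs).ne')
  have hcont : ContinuousOn (fun s : ℝ => a * s ^ (a - 1)) (Set.uIcc b (b + x)) := by
    refine continuousOn_const.mul fun s hs => ContinuousAt.continuousWithinAt ?_
    exact Real.continuousAt_rpow_const s (a - 1) (Or.inl (hpos s hs).ne')
  have hint : IntervalIntegrable (fun s : ℝ => a * s ^ (a - 1)) volume b (b + x) :=
    hcont.intervalIntegrable
  have hftc := intervalIntegral.integral_eq_sub_of_hasDerivAt hderiv hint
  have hmono : ∫ s in b..(b + x), a * b ^ (a - 1) ≤ ∫ s in b..(b + x), a * s ^ (a - 1) := by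
    apply intervalIntegral.integral_mono_on (by linarith) (by simp) hint
    intro s hs
    have hs1 : b ≤ s := hs.1
    have : s ^ (a - 1) ≤ b ^ (a - 1) :=
      Real.rpow_le_rpow_of_nonpos hb hs1 (by linarith)
    nlinarith
  rw [hftc] at hmono
  rw [intervalIntegral.integral_const] at hmono
  simp only [smul_eq_mul, add_sub_cancel_left] at hmono
  nlinarith

lemma aux_subadd {q : ℝ} (hq0 : 0 ≤ q) (hq1 : q ≤ 1) {A B : ℝ} (hA : 0 ≤ A) (hB : 0 ≤ B) :
    (A + B) ^ q ≤ A ^ q + B ^ q := by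
  have h := NNReal.rpow_add_le_add_rpow A.toNNReal B.toNNReal hq0 hq1
  have h' := NNReal.coe_le_coe.2 h
  push_cast at h'
  rwa [Real.coe_toNNReal A hA, Real.coe_toNNReal B hB] at h'

lemma aux_absdiff {q : ℝ} (hq0 : 0 < q) (hq1 : q ≤ 1) (A B : ℝ) :
    |A| ^ q - |B| ^ q ≤ |A - B| ^ q := by
  have h1 : |A| ≤ |B| + |A - B| := by
    calc |A| = |B + (A - B)| := by ring_nf
    _ ≤ |B| + |A - B| := abs_add_le _ _
  have h2 : |A| ^ q ≤ (|B| + |A - B|) ^ q :=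
    Real.rpow_le_rpow (abs_nonneg _) h1 hq0.le
  have h3 := aux_subadd hq0.le hq1 (abs_nonneg B) (abs_nonneg (A - B))
  linarith

lemma aux_absdiff' {q : ℝ} (hq0 : 0 < q) (hq1 : q ≤ 1) (A B : ℝ) :
    abs (|A| ^ q - |B| ^ q) ≤ |A - B| ^ q := by
  rw [abs_sub_le_iff]
  constructor
  · exact aux_absdiff hq0 hq1 A B
  · have := aux_absdiff hq0 hq1 B A
    rwa [abs_sub_comm] at this

-- geometric mean trick
lemma aux_gm {q a : ℝ} (hq0 : 0 < q) (hq1 : q ≤ 1) (ha : a < 0) {x s : ℝ}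
    (hx : 0 ≤ x) (hs : 0 ≤ s) :
    min (x * s ^ (a - 1)) (s ^ a) * s ^ q ≤ x ^ q * s ^ a := by
  rcases eq_or_lt_of_le hs with rfl | hs'
  · rw [Real.zero_rpow (by linarith : a - 1 ≠ 0), Real.zero_rpow (by linarith : a ≠ 0)]
    simp
  rcases eq_or_lt_of_le hx with rfl | hx'
  · rw [Real.zero_rpow hq0.ne', zero_mul, zero_mul]
    have : min 0 (s ^ a) ≤ 0 := min_le_left _ _
    have h2 : 0 ≤ s ^ q := Real.rpow_nonneg hs _
    nlinarith
  rcases le_total x s with hxs | hsx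
  · have key : x * s ^ (a - 1) * s ^ q ≤ x ^ q * s ^ a := by
      have e1 : s ^ (a - 1) * s ^ q = s ^ (a - 1 + q) := (Real.rpow_add hs' _ _).symm
      have e2 : x = x ^ q * x ^ (1 - q) := by
        rw [← Real.rpow_add hx', add_sub_cancel, Real.rpow_one]
      have e3 : x ^ (1 - q) ≤ s ^ (1 - q) := Real.rpow_le_rpow hx hxs (by linarith)
      have e4 : s ^ (1 - q) * s ^ (a - 1 + q) = s ^ a := by
        rw [← Real.rpow_add hs']; ring_nf
      calc x * s ^ (a - 1) * s ^ q = x ^ q * x ^ (1 - q) * s ^ (a - 1 + q) := by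
            rw [mul_assoc, e1, ← e2]
        _ ≤ x ^ q * s ^ (1 - q) * s ^ (a - 1 + q) := by
            have h4 : (0:ℝ) ≤ x ^ q := Real.rpow_nonneg hx _
            have h5 : (0:ℝ) ≤ s ^ (a - 1 + q) := Real.rpow_nonneg hs _
            exact mul_le_mul_of_nonneg_right (mul_le_mul_of_nonneg_left e3 h4) h5
        _ = x ^ q * s ^ a := by rw [mul_assoc, e4]
    calc min (x * s ^ (a - 1)) (s ^ a) * s ^ q ≤ x * s ^ (a - 1) * s ^ q :=
          mul_le_mul_of_nonneg_right (min_le_left _ _) (Real.rpow_nonneg hs _)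
      _ ≤ x ^ q * s ^ a := key
  · have key : s ^ a * s ^ q ≤ x ^ q * s ^ a := by
      have e1 : s ^ q ≤ x ^ q := Real.rpow_le_rpow hs hsx hq0.le
      have h5 : (0:ℝ) ≤ s ^ a := Real.rpow_nonneg hs _
      nlinarith
    calc min (x * s ^ (a - 1)) (s ^ a) * s ^ q ≤ s ^ a * s ^ q :=
          mul_le_mul_of_nonneg_right (min_le_right _ _) (Real.rpow_nonneg hs _)
      _ ≤ x ^ q * s ^ a := key

lemma aux_rpow_le_one_add {q : ℝ} (hq0 : 0 ≤ q) (hq1 : q ≤ 1) {x : ℝ} (hx : 0 ≤ x) :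
    x ^ q ≤ 1 + x := by
  rcases le_total x 1 with h | h
  · have : x ^ q ≤ 1 := Real.rpow_le_one hx h hq0
    linarith
  · have : x ^ q ≤ x ^ (1:ℝ) := Real.rpow_le_rpow_of_exponent_le h hq1
    rw [Real.rpow_one] at this
    linarith

lemma aux_ii_sign {a : ℝ} (ha1 : -1 < a) (ha2 : a < 0) (w c d : ℝ) :
    IntervalIntegrable (fun t => Real.sign (w - t) * |w - t| ^ a) volume c d := by
  have piece : ∀ e : ℝ, IntervalIntegrable (fun t => Real.sign (w - t) * |w - t| ^ a) volume e w := by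
    intro e
    rcases le_total e w with hew | hwe
    · refine aux_ii_congr (aux_ii_refl ha1 e w w) ?_
      intro t ht
      rw [Set.uIcc_of_le hew] at ht
      exact (aux_sign_eq_left ha2.ne ht.2).symm
    · refine aux_ii_congr ((aux_ii_shift ha1 e w w).neg) ?_
      intro t ht
      rw [Set.uIcc_of_ge hwe] at ht
      exact (aux_sign_eq_right ha2.ne ht.1).symm
  exact (piece c).trans ((piece d).symm)

lemma phi3_inner_bound {a : ℝ} (ha1 : -1 < a) (ha2 : a < 0) {x T : ℝ}
    (hx : 0 ≤ x) (hxT : x ≤ T) (u : ℝ) :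
    |∫ t in x..T, (Real.sign (u - t) * |u - t| ^ a -
        Real.sign (x + u - t) * |x + u - t| ^ a)| ≤ 2 * x ^ (a + 1) / (a + 1) := by
  have hq0 : 0 < a + 1 := by linarith
  have hq1 : a + 1 ≤ 1 := by linarith
  have i1 := aux_ii_sign ha1 ha2 u x T
  have i2 := aux_ii_sign ha1 ha2 (x + u) x T
  have e2 : ∀ t : ℝ, x + u - t = (x + u) - t := fun t => rfl
  rw [intervalIntegral.integral_sub i1 i2, aux_sign_eval ha1 ha2 u hxT,
    aux_sign_eval ha1 ha2 (x + u) hxT]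
  rw [show x + u - x = u from by ring]
  have hA : abs (|u - x| ^ (a+1) - |u| ^ (a+1)) ≤ x ^ (a+1) := by
    have := aux_absdiff' hq0 hq1 (u - x) u
    rwa [show u - x - u = -x from by ring, abs_neg, abs_of_nonneg hx] at this
  have hB : abs (|x + u - T| ^ (a+1) - |u - T| ^ (a+1)) ≤ x ^ (a+1) := by
    have := aux_absdiff' hq0 hq1 (x + u - T) (u - T)
    rwa [show x + u - T - (u - T) = x from by ring, abs_of_nonneg hx] at this
  have comb : abs ((|u - x| ^ (a+1) - |u - T| ^ (a+1)) - (|u| ^ (a+1) - |x + u - T| ^ (a+1)))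
      ≤ 2 * x ^ (a+1) := by
    have h1 : (|u - x| ^ (a+1) - |u - T| ^ (a+1)) - (|u| ^ (a+1) - |x + u - T| ^ (a+1))
        = (|u - x| ^ (a+1) - |u| ^ (a+1)) + (|x + u - T| ^ (a+1) - |u - T| ^ (a+1)) := by ring
    rw [h1]
    calc abs ((|u - x| ^ (a+1) - |u| ^ (a+1)) + (|x + u - T| ^ (a+1) - |u - T| ^ (a+1)))
        ≤ abs (|u - x| ^ (a+1) - |u| ^ (a+1)) + abs (|x + u - T| ^ (a+1) - |u - T| ^ (a+1)) :=
          abs_add_le _ _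
      _ ≤ 2 * x ^ (a+1) := by linarith
  rw [div_sub_div_same, abs_div, abs_of_pos hq0]
  exact (div_le_div_iff_of_pos_right hq0).2 comb

lemma phi2_bound {a : ℝ} (ha1 : -1 < a) (ha2 : a < 0) {x T : ℝ} (hx : 0 < x) (hxT : x ≤ T) :
    |∫ t in x..T, ((t - x) ^ a - t ^ a) * (T - t + x) ^ a|
      ≤ 2 ^ (-a) / (a + 1) * (T ^ a * x ^ (a + 1))
        + 2 ^ (1 - a) / (a + 1) * (x ^ (a + 1) * (T - x) ^ a) := by
  have hq0 : 0 < a + 1 := by linarith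
  have hq1 : a + 1 ≤ 1 := by linarith
  have hT : 0 < T := lt_of_lt_of_le hx hxT
  set s : ℝ := T - x with hs_def
  have hs : 0 ≤ s := by simp [hs_def]; linarith
  set cB : ℝ := min ((-a) * x * (s / 2) ^ (a - 1)) ((s / 2) ^ a) with hcB_def
  have hcB0 : 0 ≤ cB := le_min
    (mul_nonneg (mul_nonneg (by linarith) hx.le) (Real.rpow_nonneg (by linarith) _))
    (Real.rpow_nonneg (by linarith) _)
  set A : ℝ → ℝ := fun t => (T / 2) ^ a * ((t - x) ^ a - t ^ a) with hA_def
  set B : ℝ → ℝ := fun t => cB * ((T + x) - t) ^ a with hB_def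
  -- pointwise bound on (x, T]
  have ptwise : ∀ t ∈ Set.Ioc x T,
      ‖((t - x) ^ a - t ^ a) * (T - t + x) ^ a‖ ≤ A t + B t := by
    intro t ht
    obtain ⟨htx, htT⟩ := ht
    have hxltT : x < T := lt_of_lt_of_le htx htT
    have hs' : 0 < s := by simp [hs_def]; linarith
    have htx0 : 0 < t - x := by linarith
    have ht0 : 0 < t := hx.trans htx
    have hK0 : 0 < T - t + x := by linarith
    have hD0 : 0 ≤ (t - x) ^ a - t ^ a :=
      sub_nonneg.2 (Real.rpow_le_rpow_of_nonpos htx0 (by linarith) ha2.le)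
    have hK : 0 ≤ (T - t + x) ^ a := Real.rpow_nonneg hK0.le _
    have hAt0 : 0 ≤ A t := mul_nonneg (Real.rpow_nonneg (by linarith) _) hD0
    have hBt0 : 0 ≤ B t := mul_nonneg hcB0 (Real.rpow_nonneg (by linarith) _)
    have hEq : (T - t + x) = (T + x) - t := by ring
    rw [Real.norm_eq_abs, abs_of_nonneg (mul_nonneg hD0 hK)]
    rcases le_total t ((x + T) / 2) with hm | hm
    · -- left part : bound by A
      have hKb : (T - t + x) ^ a ≤ (T / 2) ^ a :=
        Real.rpow_le_rpow_of_nonpos (by linarith) (by linarith) ha2.le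
      have : ((t - x) ^ a - t ^ a) * (T - t + x) ^ a ≤ A t := by
        calc ((t - x) ^ a - t ^ a) * (T - t + x) ^ a
            ≤ ((t - x) ^ a - t ^ a) * (T / 2) ^ a := mul_le_mul_of_nonneg_left hKb hD0
          _ = A t := by rw [hA_def]; ring
      linarith
    · -- right part : bound by B
      have hsx : s / 2 ≤ t - x := by simp [hs_def]; linarith
      have hs2 : 0 < s / 2 := by linarith
      have d1 : (t - x) ^ a - t ^ a ≤ (-a) * x * (s / 2) ^ (a - 1) := by
        have hkey := aux_key ha2 htx0 hx.le
        rw [show t - x + x = t from by ring] at hkey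
        have : (t - x) ^ (a - 1) ≤ (s / 2) ^ (a - 1) :=
          Real.rpow_le_rpow_of_nonpos hs2 hsx (by linarith)
        nlinarith [mul_nonneg (neg_nonneg.2 ha2.le) hx.le]
      have d2 : (t - x) ^ a - t ^ a ≤ (s / 2) ^ a := by
        have h1 : (t - x) ^ a ≤ (s / 2) ^ a :=
          Real.rpow_le_rpow_of_nonpos hs2 hsx ha2.le
        have h2 : 0 ≤ t ^ a := Real.rpow_nonneg ht0.le _
        linarith
      have hDcB : (t - x) ^ a - t ^ a ≤ cB := le_min d1 d2
      have : ((t - x) ^ a - t ^ a) * (T - t + x) ^ a ≤ B t := by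
        calc ((t - x) ^ a - t ^ a) * (T - t + x) ^ a
            ≤ cB * (T - t + x) ^ a := mul_le_mul_of_nonneg_right hDcB hK
          _ = B t := by rw [hB_def, hEq]
      linarith
  -- integrability
  have iA : IntervalIntegrable A volume x T :=
    ((aux_ii_shift ha1 x T x).sub (intervalIntegrable_rpow' ha1)).const_mul _
  have iB : IntervalIntegrable B volume x T :=
    (aux_ii_refl ha1 x T (T + x)).const_mul _
  have hmain : |∫ t in x..T, ((t - x) ^ a - t ^ a) * (T - t + x) ^ a|
      ≤ |∫ t in x..T, (A t + B t)| := by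
    rw [← Real.norm_eq_abs (∫ t in x..T, ((t - x) ^ a - t ^ a) * (T - t + x) ^ a)]
    refine intervalIntegral.norm_integral_le_abs_of_norm_le ?_ (iA.add iB)
    refine ae_restrict_of_forall_mem measurableSet_uIoc ?_
    intro t ht
    rw [Set.uIoc_of_le hxT] at ht
    exact ptwise t ht
  -- compute the integrals
  have eA : ∫ t in x..T, A t = (T / 2) ^ a * (((T - x) ^ (a+1) - (T ^ (a+1) - x ^ (a+1))) / (a+1)) := by
    rw [hA_def]
    rw [intervalIntegral.integral_const_mul]
    rw [intervalIntegral.integral_sub (aux_ii_shift ha1 x T x) (intervalIntegrable_rpow' ha1)]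
    rw [aux_eval_shift ha1 x T x, integral_rpow (Or.inl ha1)]
    rw [sub_self, Real.zero_rpow (by linarith : a + 1 ≠ 0)]
    ring
  have eB : ∫ t in x..T, B t = cB * ((T ^ (a+1) - x ^ (a+1)) / (a+1)) := by
    rw [hB_def]
    rw [intervalIntegral.integral_const_mul, aux_eval_refl ha1 x T (T + x),
      show T + x - x = T from by ring, show T + x - T = x from by ring]
  -- bound the values
  have hsub : T ^ (a+1) ≤ (T - x) ^ (a+1) + x ^ (a+1) := by
    have := aux_subadd hq0.le hq1 (by linarith : (0:ℝ) ≤ T - x) hx.le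
    rwa [show T - x + x = T from by ring] at this
  have hmono : (T - x) ^ (a+1) ≤ T ^ (a+1) :=
    Real.rpow_le_rpow (by linarith) (by linarith) hq0.le
  have hxq : 0 ≤ x ^ (a+1) := Real.rpow_nonneg hx.le _
  have hA_nonneg : 0 ≤ ∫ t in x..T, A t := by
    rw [eA]
    apply mul_nonneg (Real.rpow_nonneg (by linarith) _)
    apply div_nonneg _ hq0.le
    linarith
  have hmono2 : x ^ (a+1) ≤ T ^ (a+1) := Real.rpow_le_rpow hx.le hxT hq0.le
  have hB_nonneg : 0 ≤ ∫ t in x..T, B t := by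
    rw [eB]
    exact mul_nonneg hcB0 (div_nonneg (by linarith) hq0.le)
  have hTha : (T / 2) ^ a = 2 ^ (-a) * T ^ a := by
    rw [Real.div_rpow hT.le (by norm_num), Real.rpow_neg (by norm_num : (0:ℝ) ≤ 2)]
    ring
  have hA_le : ∫ t in x..T, A t ≤ 2 ^ (-a) / (a + 1) * (T ^ a * x ^ (a + 1)) := by
    rw [eA, hTha]
    have h1 : ((T - x) ^ (a+1) - (T ^ (a+1) - x ^ (a+1))) / (a+1) ≤ x ^ (a+1) / (a+1) := by
      gcongr
      linarith
    have h2 : (0:ℝ) ≤ 2 ^ (-a) * T ^ a :=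
      mul_nonneg (Real.rpow_nonneg (by norm_num) _) (Real.rpow_nonneg hT.le _)
    calc 2 ^ (-a) * T ^ a * (((T - x) ^ (a+1) - (T ^ (a+1) - x ^ (a+1))) / (a+1))
        ≤ 2 ^ (-a) * T ^ a * (x ^ (a+1) / (a+1)) := mul_le_mul_of_nonneg_left h1 h2
      _ = 2 ^ (-a) / (a + 1) * (T ^ a * x ^ (a + 1)) := by ring
  have hB_le : ∫ t in x..T, B t ≤ 2 ^ (1 - a) / (a + 1) * (x ^ (a + 1) * s ^ a) := by
    rw [eB]
    have hTx : T ^ (a+1) - x ^ (a+1) ≤ s ^ (a+1) := by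
      rw [hs_def]; linarith
    have hgm := aux_gm hq0 hq1 ha2 hx.le hs
    have h2pow : (0:ℝ) ≤ 2 ^ (1 - a) := Real.rpow_nonneg (by norm_num) _
    have hcB_le : cB ≤ 2 ^ (1 - a) * min (x * s ^ (a - 1)) (s ^ a) := by
      have e1 : (s / 2) ^ (a - 1) = s ^ (a - 1) * 2 ^ (1 - a) := by
        rw [Real.div_rpow hs (by norm_num), show (1 - a) = -(a-1) from by ring,
          Real.rpow_neg (by norm_num : (0:ℝ) ≤ 2)]
        ring
      have e2 : (s / 2) ^ a = s ^ a * 2 ^ (-a) := by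
        rw [Real.div_rpow hs (by norm_num), Real.rpow_neg (by norm_num : (0:ℝ) ≤ 2)]
        ring
      have b1 : (-a) * x * (s / 2) ^ (a - 1) ≤ 2 ^ (1 - a) * (x * s ^ (a - 1)) := by
        rw [e1]
        have hna : -a ≤ 1 := by linarith
        have hX : (0:ℝ) ≤ x * s ^ (a - 1) * 2 ^ (1 - a) :=
          mul_nonneg (mul_nonneg hx.le (Real.rpow_nonneg hs _)) h2pow
        nlinarith
      have b2 : (s / 2) ^ a ≤ 2 ^ (1 - a) * s ^ a := by
        rw [e2]
        have : (2:ℝ) ^ (-a) ≤ 2 ^ (1 - a) :=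
          Real.rpow_le_rpow_of_exponent_le one_le_two (by linarith)
        nlinarith [Real.rpow_nonneg hs a]
      rw [mul_min_of_nonneg _ _ h2pow]
      exact le_min ((min_le_left _ _).trans b1) ((min_le_right _ _).trans b2)
    have step1 : cB * ((T ^ (a+1) - x ^ (a+1)) / (a+1)) ≤ cB * s ^ (a+1) / (a+1) := by
      rw [mul_div_assoc]
      refine mul_le_mul_of_nonneg_left ?_ hcB0
      gcongr
    have step2 : cB * s ^ (a+1) ≤ 2 ^ (1 - a) * (x ^ (a+1) * s ^ a) := by
      calc cB * s ^ (a+1) ≤ (2 ^ (1 - a) * min (x * s ^ (a - 1)) (s ^ a)) * s ^ (a+1) :=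
            mul_le_mul_of_nonneg_right hcB_le (Real.rpow_nonneg hs _)
        _ = 2 ^ (1 - a) * (min (x * s ^ (a - 1)) (s ^ a) * s ^ (a+1)) := by ring
        _ ≤ 2 ^ (1 - a) * (x ^ (a+1) * s ^ a) := mul_le_mul_of_nonneg_left hgm h2pow
    calc cB * ((T ^ (a+1) - x ^ (a+1)) / (a+1)) ≤ cB * s ^ (a+1) / (a+1) := step1
      _ ≤ 2 ^ (1 - a) * (x ^ (a+1) * s ^ a) / (a+1) := by gcongr
      _ = 2 ^ (1 - a) / (a + 1) * (x ^ (a+1) * s ^ a) := by ring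
  have hsum : ∫ t in x..T, (A t + B t) = (∫ t in x..T, A t) + ∫ t in x..T, B t :=
    intervalIntegral.integral_add iA iB
  rw [hsum, abs_of_nonneg (by linarith : (0:ℝ) ≤ (∫ t in x..T, A t) + ∫ t in x..T, B t)] at hmain
  linarith

lemma aux_ae_ne (T : ℝ) : ∀ᵐ t : ℝ ∂volume, t ≠ T := by
  rw [MeasureTheory.ae_iff]
  have : {t : ℝ | ¬t ≠ T} = {T} := by ext t; simp
  rw [this]
  exact Real.volume_singleton

lemma phi1_bound {a : ℝ} (ha1 : -1 < a) (ha2 : a < 0) {x T : ℝ} (hx : 0 < x) (hxT : x ≤ T) :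
    |∫ t in x..T, ((t - x) ^ a - T ^ a) * ((T - t) ^ a - (T - t + x) ^ a)|
      ≤ (2 ^ (1 - a) + 2 ^ (-a)) / (a + 1) * (x ^ (a + 1) * (T - x) ^ a) := by
  have hq0 : 0 < a + 1 := by linarith
  have hq1 : a + 1 ≤ 1 := by linarith
  have hT : 0 < T := lt_of_lt_of_le hx hxT
  set s : ℝ := T - x with hs_def
  have hs : 0 ≤ s := by simp [hs_def]; linarith
  set cA : ℝ := min ((-a) * x * (s / 2) ^ (a - 1)) ((s / 2) ^ a) with hcA_def
  have hcA0 : 0 ≤ cA := le_min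
    (mul_nonneg (mul_nonneg (by linarith) hx.le) (Real.rpow_nonneg (by linarith) _))
    (Real.rpow_nonneg (by linarith) _)
  set A : ℝ → ℝ := fun t => cA * (t - x) ^ a with hA_def
  set B : ℝ → ℝ := fun t => (s / 2) ^ a * ((T - t) ^ a - ((T + x) - t) ^ a) with hB_def
  have ptwise : ∀ t ∈ Set.Ioc x T, t ≠ T →
      ‖((t - x) ^ a - T ^ a) * ((T - t) ^ a - (T - t + x) ^ a)‖ ≤ A t + B t := by
    intro t ht htne
    obtain ⟨htx, htT'⟩ := ht
    have htT : t < T := lt_of_le_of_ne htT' htne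
    have hxltT : x < T := lt_trans htx htT
    have hs' : 0 < s := by simp [hs_def]; linarith
    have htx0 : 0 < t - x := by linarith
    have hTt0 : 0 < T - t := by linarith
    have hs2 : 0 < s / 2 := by linarith
    have hEq : ∀ u : ℝ, T - u + x = (T + x) - u := fun u => by ring
    have hF0 : 0 ≤ (t - x) ^ a - T ^ a :=
      sub_nonneg.2 (Real.rpow_le_rpow_of_nonpos htx0 (by linarith) ha2.le)
    have hE0 : 0 ≤ (T - t) ^ a - (T - t + x) ^ a :=
      sub_nonneg.2 (Real.rpow_le_rpow_of_nonpos hTt0 (by linarith) ha2.le)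
    have hE0' : 0 ≤ (T - t) ^ a - ((T + x) - t) ^ a := by rw [← hEq t]; exact hE0
    have hAt0 : 0 ≤ A t := mul_nonneg hcA0 (Real.rpow_nonneg htx0.le _)
    have hBt0 : 0 ≤ B t := mul_nonneg (Real.rpow_nonneg (by linarith) _) hE0'
    have hFb : (t - x) ^ a - T ^ a ≤ (t - x) ^ a := by
      have : 0 ≤ T ^ a := Real.rpow_nonneg hT.le _
      linarith
    rw [Real.norm_eq_abs, abs_of_nonneg (mul_nonneg hF0 hE0)]
    rcases le_total t ((x + T) / 2) with hm | hm
    · -- left part : bound by A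
      have hTts : s / 2 ≤ T - t := by simp [hs_def]; linarith
      have e1 : (T - t) ^ a - (T - t + x) ^ a ≤ (-a) * x * (s / 2) ^ (a - 1) := by
        have hkey := aux_key ha2 hTt0 hx.le
        have h2 : (T - t) ^ (a - 1) ≤ (s / 2) ^ (a - 1) :=
          Real.rpow_le_rpow_of_nonpos hs2 hTts (by linarith)
        nlinarith [mul_nonneg (neg_nonneg.2 ha2.le) hx.le]
      have e2 : (T - t) ^ a - (T - t + x) ^ a ≤ (s / 2) ^ a := by
        have h1 : (T - t) ^ a ≤ (s / 2) ^ a :=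
          Real.rpow_le_rpow_of_nonpos hs2 hTts ha2.le
        have h2 : 0 ≤ (T - t + x) ^ a := Real.rpow_nonneg (by linarith) _
        linarith
      have hEcA : (T - t) ^ a - (T - t + x) ^ a ≤ cA := le_min e1 e2
      have : ((t - x) ^ a - T ^ a) * ((T - t) ^ a - (T - t + x) ^ a) ≤ A t := by
        calc ((t - x) ^ a - T ^ a) * ((T - t) ^ a - (T - t + x) ^ a)
            ≤ (t - x) ^ a * ((T - t) ^ a - (T - t + x) ^ a) :=
              mul_le_mul_of_nonneg_right hFb hE0
          _ ≤ (t - x) ^ a * cA :=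
              mul_le_mul_of_nonneg_left hEcA (Real.rpow_nonneg htx0.le _)
          _ = A t := by rw [hA_def]; ring
      linarith
    · -- right part : bound by B
      have hsx : s / 2 ≤ t - x := by simp [hs_def]; linarith
      have h1 : (t - x) ^ a ≤ (s / 2) ^ a :=
        Real.rpow_le_rpow_of_nonpos hs2 hsx ha2.le
      have : ((t - x) ^ a - T ^ a) * ((T - t) ^ a - (T - t + x) ^ a) ≤ B t := by
        calc ((t - x) ^ a - T ^ a) * ((T - t) ^ a - (T - t + x) ^ a)
            ≤ (t - x) ^ a * ((T - t) ^ a - (T - t + x) ^ a) :=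
              mul_le_mul_of_nonneg_right hFb hE0
          _ ≤ (s / 2) ^ a * ((T - t) ^ a - (T - t + x) ^ a) :=
              mul_le_mul_of_nonneg_right h1 hE0
          _ = B t := by rw [hB_def, hEq t]
      linarith
  have iA : IntervalIntegrable A volume x T := (aux_ii_shift ha1 x T x).const_mul _
  have iB : IntervalIntegrable B volume x T :=
    ((aux_ii_refl ha1 x T T).sub (aux_ii_refl ha1 x T (T + x))).const_mul _
  have hmain : |∫ t in x..T, ((t - x) ^ a - T ^ a) * ((T - t) ^ a - (T - t + x) ^ a)|
      ≤ |∫ t in x..T, (A t + B t)| := by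
    rw [← Real.norm_eq_abs (∫ t in x..T, ((t - x) ^ a - T ^ a) * ((T - t) ^ a - (T - t + x) ^ a))]
    refine intervalIntegral.norm_integral_le_abs_of_norm_le ?_ (iA.add iB)
    have hne : ∀ᵐ t : ℝ ∂(volume.restrict (Set.uIoc x T)), t ≠ T :=
      Filter.Eventually.filter_mono (MeasureTheory.ae_mono Measure.restrict_le_self) (aux_ae_ne T)
    filter_upwards [ae_restrict_mem measurableSet_uIoc, hne] with t ht htne
    rw [Set.uIoc_of_le hxT] at ht
    exact ptwise t ht htne
  have eA : ∫ t in x..T, A t = cA * ((T - x) ^ (a+1) / (a+1)) := by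
    rw [hA_def, intervalIntegral.integral_const_mul, aux_eval_shift ha1 x T x,
      sub_self, Real.zero_rpow (by linarith : a + 1 ≠ 0), sub_zero]
  have eB : ∫ t in x..T, B t
      = (s / 2) ^ a * (((T - x) ^ (a+1) - (T ^ (a+1) - x ^ (a+1))) / (a+1)) := by
    rw [hB_def, intervalIntegral.integral_const_mul,
      intervalIntegral.integral_sub (aux_ii_refl ha1 x T T) (aux_ii_refl ha1 x T (T + x)),
      aux_eval_refl ha1 x T T, aux_eval_refl ha1 x T (T + x),
      sub_self, Real.zero_rpow (by linarith : a + 1 ≠ 0),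
      show T + x - x = T from by ring, show T + x - T = x from by ring]
    ring
  have hsub : T ^ (a+1) ≤ (T - x) ^ (a+1) + x ^ (a+1) := by
    have := aux_subadd hq0.le hq1 (by linarith : (0:ℝ) ≤ T - x) hx.le
    rwa [show T - x + x = T from by ring] at this
  have hmono : (T - x) ^ (a+1) ≤ T ^ (a+1) :=
    Real.rpow_le_rpow (by linarith) (by linarith) hq0.le
  have hxq : 0 ≤ x ^ (a+1) := Real.rpow_nonneg hx.le _
  have h2pow : (0:ℝ) ≤ 2 ^ (1 - a) := Real.rpow_nonneg (by norm_num) _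
  have e2 : (s / 2) ^ a = s ^ a * 2 ^ (-a) := by
    rw [Real.div_rpow hs (by norm_num), Real.rpow_neg (by norm_num : (0:ℝ) ≤ 2)]
    ring
  have hA_nonneg : 0 ≤ ∫ t in x..T, A t := by
    rw [eA]
    exact mul_nonneg hcA0 (div_nonneg (Real.rpow_nonneg (by linarith) _) hq0.le)
  have hB_nonneg : 0 ≤ ∫ t in x..T, B t := by
    rw [eB]
    apply mul_nonneg (Real.rpow_nonneg (by linarith) _)
    apply div_nonneg _ hq0.le
    linarith
  have hA_le : ∫ t in x..T, A t ≤ 2 ^ (1 - a) / (a + 1) * (x ^ (a+1) * s ^ a) := by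
    rw [eA]
    have hgm := aux_gm hq0 hq1 ha2 hx.le hs
    have hcA_le : cA ≤ 2 ^ (1 - a) * min (x * s ^ (a - 1)) (s ^ a) := by
      have e1 : (s / 2) ^ (a - 1) = s ^ (a - 1) * 2 ^ (1 - a) := by
        rw [Real.div_rpow hs (by norm_num), show (1 - a) = -(a-1) from by ring,
          Real.rpow_neg (by norm_num : (0:ℝ) ≤ 2)]
        ring
      have b1 : (-a) * x * (s / 2) ^ (a - 1) ≤ 2 ^ (1 - a) * (x * s ^ (a - 1)) := by
        rw [e1]
        have hna : -a ≤ 1 := by linarith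
        have hX : (0:ℝ) ≤ x * s ^ (a - 1) * 2 ^ (1 - a) :=
          mul_nonneg (mul_nonneg hx.le (Real.rpow_nonneg hs _)) h2pow
        nlinarith
      have b2 : (s / 2) ^ a ≤ 2 ^ (1 - a) * s ^ a := by
        rw [e2]
        have : (2:ℝ) ^ (-a) ≤ 2 ^ (1 - a) :=
          Real.rpow_le_rpow_of_exponent_le one_le_two (by linarith)
        nlinarith [Real.rpow_nonneg hs a]
      rw [mul_min_of_nonneg _ _ h2pow]
      exact le_min ((min_le_left _ _).trans b1) ((min_le_right _ _).trans b2)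
    have step : cA * s ^ (a+1) ≤ 2 ^ (1 - a) * (x ^ (a+1) * s ^ a) := by
      calc cA * s ^ (a+1) ≤ (2 ^ (1 - a) * min (x * s ^ (a - 1)) (s ^ a)) * s ^ (a+1) :=
            mul_le_mul_of_nonneg_right hcA_le (Real.rpow_nonneg hs _)
        _ = 2 ^ (1 - a) * (min (x * s ^ (a - 1)) (s ^ a) * s ^ (a+1)) := by ring
        _ ≤ 2 ^ (1 - a) * (x ^ (a+1) * s ^ a) := mul_le_mul_of_nonneg_left hgm h2pow
    calc cA * ((T - x) ^ (a+1) / (a+1)) = cA * s ^ (a+1) / (a+1) := by rw [← hs_def]; ring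
      _ ≤ 2 ^ (1 - a) * (x ^ (a+1) * s ^ a) / (a+1) := by gcongr
      _ = 2 ^ (1 - a) / (a + 1) * (x ^ (a+1) * s ^ a) := by ring
  have hB_le : ∫ t in x..T, B t ≤ 2 ^ (-a) / (a + 1) * (x ^ (a+1) * s ^ a) := by
    rw [eB, e2]
    have h1 : ((T - x) ^ (a+1) - (T ^ (a+1) - x ^ (a+1))) / (a+1) ≤ x ^ (a+1) / (a+1) := by
      gcongr
      linarith
    have h2 : (0:ℝ) ≤ s ^ a * 2 ^ (-a) :=
      mul_nonneg (Real.rpow_nonneg hs _) (Real.rpow_nonneg (by norm_num) _)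
    calc s ^ a * 2 ^ (-a) * (((T - x) ^ (a+1) - (T ^ (a+1) - x ^ (a+1))) / (a+1))
        ≤ s ^ a * 2 ^ (-a) * (x ^ (a+1) / (a+1)) := mul_le_mul_of_nonneg_left h1 h2
      _ = 2 ^ (-a) / (a + 1) * (x ^ (a+1) * s ^ a) := by ring
  have hsum : ∫ t in x..T, (A t + B t) = (∫ t in x..T, A t) + ∫ t in x..T, B t :=
    intervalIntegral.integral_add iA iB
  rw [hsum, abs_of_nonneg (by linarith : (0:ℝ) ≤ (∫ t in x..T, A t) + ∫ t in x..T, B t)] at hmain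
  have hfinal : (2 ^ (1 - a) + 2 ^ (-a)) / (a + 1) * (x ^ (a+1) * s ^ a)
      = 2 ^ (1 - a) / (a + 1) * (x ^ (a+1) * s ^ a) + 2 ^ (-a) / (a + 1) * (x ^ (a+1) * s ^ a) := by
    ring
  linarith

lemma aux_exp_linear (c : ℝ) :
    ∫ x in (0:ℝ)..c, Real.exp (-x) * (1 + x) = 2 - (2 + c) * Real.exp (-c) := by
  have hderiv : ∀ x ∈ Set.uIcc (0:ℝ) c,
      HasDerivAt (fun y : ℝ => -(2 + y) * Real.exp (-y)) (Real.exp (-x) * (1 + x)) x := by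
    intro x _
    have h1 : HasDerivAt (fun y : ℝ => Real.exp (-y)) (Real.exp (-x) * (-1)) x :=
      (hasDerivAt_id x).neg.exp
    have h2 : HasDerivAt (fun y : ℝ => -(2 + y)) (-1) x := ((hasDerivAt_id x).const_add 2).neg
    have := (h2.mul h1 : HasDerivAt (fun y : ℝ => -(2 + y) * Real.exp (-y)) _ x)
    exact this.congr_deriv (by ring)
  have hint : IntervalIntegrable (fun x => Real.exp (-x) * (1 + x)) volume 0 c := by
    apply Continuous.intervalIntegrable
    exact (Real.continuous_exp.comp continuous_neg).mul (continuous_const.add continuous_id)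
  rw [intervalIntegral.integral_eq_sub_of_hasDerivAt hderiv hint]
  simp [Real.exp_zero]
  ring

lemma aux_exp_linear_le {c : ℝ} (hc : 0 ≤ c) :
    ∫ x in (0:ℝ)..c, Real.exp (-x) * (1 + x) ≤ 2 := by
  rw [aux_exp_linear]
  have h1 : 0 ≤ (2 + c) * Real.exp (-c) := mul_nonneg (by linarith) (Real.exp_pos _).le
  linarith

set_option maxHeartbeats 2000000 in
theorem stmt_11 (H : ℝ) (hH : H ∈ Set.Ioo (0:ℝ) (1/2))
    (φ1 φ2 : ℝ → ℝ → ℝ) (φ3 : ℝ → ℝ → ℝ → ℝ)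
    (hφ1 : ∀ T x : ℝ, φ1 T x =
      ∫ t in x..T, ((t - x) ^ (2 * H - 1) - T ^ (2 * H - 1)) *
        ((T - t) ^ (2 * H - 1) - (T - t + x) ^ (2 * H - 1)))
    (hφ2 : ∀ T x : ℝ, φ2 T x =
      ∫ t in x..T, ((t - x) ^ (2 * H - 1) - t ^ (2 * H - 1)) * (T - t + x) ^ (2 * H - 1))
    (hφ3 : ∀ T x u : ℝ, φ3 T x u = T ^ (2 * H - 1) *
      ∫ t in x..T, (Real.sign (u - t) * |u - t| ^ (2 * H - 1) -
        Real.sign (x + u - t) * |x + u - t| ^ (2 * H - 1))) :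
    ∃ C : ℝ, ∀ᶠ T : ℝ in atTop,
      T ^ (1 - 2 * H) * (∫ x in (0:ℝ)..T, ∫ u in (0:ℝ)..T,
        Real.exp (-u - x) * (|φ1 T x| + |φ2 T x| + |φ3 T x u|)) ≤ C := by
  obtain ⟨hH0, hH12⟩ := hH
  have ha1 : (-1:ℝ) < 2 * H - 1 := by linarith
  have ha2 : 2 * H - 1 < 0 := by linarith
  have hq0 : (0:ℝ) < 2 * H := by linarith
  have hq1 : 2 * H ≤ 1 := by linarith
  have hqe : 2 * H - 1 + 1 = 2 * H := by ring
  -- the constants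
  set b1 : ℝ := 2 ^ (-(2 * H - 1)) / (2 * H) with hb1_def
  set b2 : ℝ := 2 ^ (1 - (2 * H - 1)) / (2 * H) with hb2_def
  set b3 : ℝ := (2 ^ (1 - (2 * H - 1)) + 2 ^ (-(2 * H - 1))) / (2 * H) with hb3_def
  set b4 : ℝ := 2 / (2 * H) with hb4_def
  set Ca : ℝ := b4 + b1 with hCa_def
  set Cb : ℝ := b2 + b3 with hCb_def
  have hb1 : 0 ≤ b1 := div_nonneg (Real.rpow_nonneg (by norm_num) _) hq0.le
  have hb2 : 0 ≤ b2 := div_nonneg (Real.rpow_nonneg (by norm_num) _) hq0.le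
  have hb3 : 0 ≤ b3 := div_nonneg
    (add_nonneg (Real.rpow_nonneg (by norm_num) _) (Real.rpow_nonneg (by norm_num) _)) hq0.le
  have hb4 : 0 ≤ b4 := div_nonneg (by norm_num) hq0.le
  have hCa : 0 ≤ Ca := add_nonneg hb4 hb1
  have hCb : 0 ≤ Cb := add_nonneg hb2 hb3
  refine ⟨2 * Ca + Cb * (2 * 2 ^ (-(2 * H - 1)) + 2 ^ (-(2 * H)) / (2 * H)), ?_⟩
  -- eventual facts
  have hTend : Tendsto (fun T : ℝ => T ^ (2:ℕ) * Real.exp (-(T / 2))) atTop (𝓝 0) := by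
    have h0 := Real.tendsto_pow_mul_exp_neg_atTop_nhds_zero 2
    have h1 : Tendsto (fun T : ℝ => T / 2) atTop atTop := tendsto_id.atTop_div_const two_pos
    have h2 := h0.comp h1
    have h3 := h2.const_mul (4:ℝ)
    rw [mul_zero] at h3
    refine h3.congr fun T => ?_
    simp only [Function.comp_apply]
    ring
  have hEv : ∀ᶠ T : ℝ in atTop, T ^ (2:ℕ) * Real.exp (-(T / 2)) ≤ 1 := by
    filter_upwards [hTend.eventually (Metric.ball_mem_nhds (0:ℝ) one_pos)] with T hT
    simp only [Metric.mem_ball, Real.dist_eq, sub_zero] at hT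
    exact (le_abs_self _).trans hT.le
  filter_upwards [eventually_ge_atTop (1:ℝ), hEv] with T hT1 hT2
  have hT0 : (0:ℝ) < T := lt_of_lt_of_le one_pos hT1
  -- definition of the majorant
  set W : ℝ → ℝ := fun x => Ca * (T ^ (2 * H - 1) * x ^ (2 * H))
    + Cb * (x ^ (2 * H) * (T - x) ^ (2 * H - 1)) with hW_def
  -- pointwise bounds for x ∈ (0, T]
  have hbnd : ∀ x ∈ Set.Ioc (0:ℝ) T, ∀ u : ℝ,
      |φ1 T x| + |φ2 T x| + |φ3 T x u| ≤ W x := by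
    intro x hx u
    obtain ⟨hx0, hxT⟩ := hx
    have h1 : |φ1 T x| ≤ b3 * (x ^ (2 * H) * (T - x) ^ (2 * H - 1)) := by
      rw [hφ1]
      have := phi1_bound ha1 ha2 hx0 hxT
      rw [hqe] at this
      rw [hb3_def]
      linarith
    have h2 : |φ2 T x| ≤ b1 * (T ^ (2 * H - 1) * x ^ (2 * H))
        + b2 * (x ^ (2 * H) * (T - x) ^ (2 * H - 1)) := by
      rw [hφ2]
      have := phi2_bound ha1 ha2 hx0 hxT
      rw [hqe] at this
      rw [hb1_def, hb2_def]
      linarith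
    have h3 : |φ3 T x u| ≤ b4 * (T ^ (2 * H - 1) * x ^ (2 * H)) := by
      rw [hφ3]
      rw [abs_mul, abs_of_nonneg (Real.rpow_nonneg hT0.le _)]
      have := phi3_inner_bound ha1 ha2 hx0.le hxT u
      rw [hqe] at this
      have hTa : 0 ≤ T ^ (2 * H - 1) := Real.rpow_nonneg hT0.le _
      calc T ^ (2 * H - 1) * |∫ t in x..T, (Real.sign (u - t) * |u - t| ^ (2 * H - 1) -
              Real.sign (x + u - t) * |x + u - t| ^ (2 * H - 1))|
          ≤ T ^ (2 * H - 1) * (2 * x ^ (2 * H) / (2 * H)) :=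
            mul_le_mul_of_nonneg_left this hTa
        _ = b4 * (T ^ (2 * H - 1) * x ^ (2 * H)) := by rw [hb4_def]; ring
    have hWx : W x = b3 * (x ^ (2 * H) * (T - x) ^ (2 * H - 1))
        + (b1 * (T ^ (2 * H - 1) * x ^ (2 * H)) + b2 * (x ^ (2 * H) * (T - x) ^ (2 * H - 1)))
        + b4 * (T ^ (2 * H - 1) * x ^ (2 * H)) := by
      rw [hW_def, hCa_def, hCb_def]; ring
    rw [hWx]
    linarith
  -- continuity facts
  have hcont_q : Continuous fun x : ℝ => x ^ (2 * H) :=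
    continuous_iff_continuousAt.2 fun x => Real.continuousAt_rpow_const x _ (Or.inr hq0.le)
  have hcont_exp : Continuous fun x : ℝ => Real.exp (-x) :=
    Real.continuous_exp.comp continuous_neg
  have hcont_lin : Continuous fun x : ℝ => Real.exp (-x) * (1 + x) :=
    hcont_exp.mul (continuous_const.add continuous_id)
  set g1 : ℝ → ℝ := fun x => Real.exp (-x) * x ^ (2 * H) with hg1_def
  have hg1cont : Continuous g1 := hcont_exp.mul hcont_q
  have hg1nonneg : ∀ x : ℝ, 0 ≤ x → 0 ≤ g1 x := fun x hx =>
    mul_nonneg (Real.exp_pos _).le (Real.rpow_nonneg hx _)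
  have hg1le : ∀ x : ℝ, 0 ≤ x → g1 x ≤ Real.exp (-x) * (1 + x) := fun x hx =>
    mul_le_mul_of_nonneg_left (aux_rpow_le_one_add hq0.le hq1 hx) (Real.exp_pos _).le
  have hWnonneg : ∀ x ∈ Set.Ioc (0:ℝ) T, 0 ≤ W x := by
    intro x hx
    rw [hW_def]
    have h1 : (0:ℝ) ≤ T - x := by linarith [hx.2]
    exact add_nonneg
      (mul_nonneg hCa (mul_nonneg (Real.rpow_nonneg hT0.le _) (Real.rpow_nonneg hx.1.le _)))
      (mul_nonneg hCb (mul_nonneg (Real.rpow_nonneg hx.1.le _) (Real.rpow_nonneg h1 _)))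
  -- inner bound
  have hinner : ∀ x ∈ Set.Ioc (0:ℝ) T,
      0 ≤ (∫ u in (0:ℝ)..T, Real.exp (-u - x) * (|φ1 T x| + |φ2 T x| + |φ3 T x u|)) ∧
      (∫ u in (0:ℝ)..T, Real.exp (-u - x) * (|φ1 T x| + |φ2 T x| + |φ3 T x u|))
        ≤ Real.exp (-x) * W x := by
    intro x hx
    have hWx := hWnonneg x hx
    have hnn : 0 ≤ ∫ u in (0:ℝ)..T, Real.exp (-u - x) * (|φ1 T x| + |φ2 T x| + |φ3 T x u|) :=
      intervalIntegral.integral_nonneg hT0.le fun u _ =>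
        mul_nonneg (Real.exp_pos _).le (by positivity)
    refine ⟨hnn, ?_⟩
    have hle : ‖∫ u in (0:ℝ)..T, Real.exp (-u - x) * (|φ1 T x| + |φ2 T x| + |φ3 T x u|)‖
        ≤ |∫ u in (0:ℝ)..T, Real.exp (-u - x) * W x| := by
      refine intervalIntegral.norm_integral_le_abs_of_norm_le ?_ ?_
      · refine Filter.Eventually.of_forall fun u => ?_
        rw [Real.norm_eq_abs, abs_of_nonneg (mul_nonneg (Real.exp_pos _).le (by positivity))]
        exact mul_le_mul_of_nonneg_left (hbnd x hx u) (Real.exp_pos _).le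
      · exact ((Real.continuous_exp.comp (continuous_neg.sub continuous_const)).mul
          continuous_const).intervalIntegrable 0 T
    have hexpint : ∫ u in (0:ℝ)..T, Real.exp (-u) = 1 - Real.exp (-T) := by
      have h := intervalIntegral.integral_comp_neg (a := (0:ℝ)) (b := T) fun u : ℝ => Real.exp u
      rw [h, neg_zero, integral_exp, Real.exp_zero]
    have heval : ∫ u in (0:ℝ)..T, Real.exp (-u - x) * W x
        = (1 - Real.exp (-T)) * (Real.exp (-x) * W x) := by
      have hsp : ∀ u : ℝ, Real.exp (-u - x) * W x = Real.exp (-u) * (Real.exp (-x) * W x) := by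
        intro u
        rw [show -u - x = -u + -x from by ring, Real.exp_add]
        ring
      simp only [hsp]
      rw [intervalIntegral.integral_mul_const, hexpint]
    have h2 : |(1 - Real.exp (-T)) * (Real.exp (-x) * W x)| ≤ Real.exp (-x) * W x := by
      have hexpT : 0 < Real.exp (-T) := Real.exp_pos _
      have hexpT1 : Real.exp (-T) ≤ 1 := Real.exp_le_one_iff.2 (by linarith)
      have hfac : 0 ≤ Real.exp (-x) * W x := mul_nonneg (Real.exp_pos _).le hWx
      rw [abs_of_nonneg (mul_nonneg (by linarith) hfac)]
      nlinarith
    calc (∫ u in (0:ℝ)..T, Real.exp (-u - x) * (|φ1 T x| + |φ2 T x| + |φ3 T x u|))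
        ≤ ‖∫ u in (0:ℝ)..T, Real.exp (-u - x) * (|φ1 T x| + |φ2 T x| + |φ3 T x u|)‖ := by
          rw [Real.norm_eq_abs]; exact le_abs_self _
      _ ≤ |∫ u in (0:ℝ)..T, Real.exp (-u - x) * W x| := hle
      _ = |(1 - Real.exp (-T)) * (Real.exp (-x) * W x)| := by rw [heval]
      _ ≤ Real.exp (-x) * W x := h2
  -- outer bound
  set Gf : ℝ → ℝ := fun x => Ca * T ^ (2 * H - 1) * g1 x
    + Cb * (g1 x * (T - x) ^ (2 * H - 1)) with hGf_def
  have hGfeq : ∀ x : ℝ, Real.exp (-x) * W x = Gf x := by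
    intro x
    rw [hGf_def, hW_def, hg1_def]
    ring
  have iiTx : IntervalIntegrable (fun x => (T - x) ^ (2 * H - 1)) volume 0 T :=
    aux_ii_refl ha1 0 T T
  have iiG2 : IntervalIntegrable (fun x => g1 x * (T - x) ^ (2 * H - 1)) volume 0 T :=
    iiTx.continuousOn_mul hg1cont.continuousOn
  have iiGf : IntervalIntegrable Gf volume 0 T := by
    rw [hGf_def]
    exact ((hg1cont.intervalIntegrable (μ := volume) 0 T).const_mul _).add (iiG2.const_mul _)
  have houter0 : ‖∫ x in (0:ℝ)..T, (∫ u in (0:ℝ)..T,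
      Real.exp (-u - x) * (|φ1 T x| + |φ2 T x| + |φ3 T x u|))‖
      ≤ |∫ x in (0:ℝ)..T, Gf x| := by
    refine intervalIntegral.norm_integral_le_abs_of_norm_le ?_ iiGf
    filter_upwards [ae_restrict_mem measurableSet_uIoc] with x hxI
    rw [Set.uIoc_of_le hT0.le] at hxI
    have h := hinner x hxI
    rw [Real.norm_eq_abs, abs_of_nonneg h.1]
    exact h.2.trans (le_of_eq (hGfeq x))
  -- evaluating the outer majorant
  have hsplitGf : ∫ x in (0:ℝ)..T, Gf x
      = Ca * T ^ (2 * H - 1) * (∫ x in (0:ℝ)..T, g1 x)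
        + Cb * ∫ x in (0:ℝ)..T, g1 x * (T - x) ^ (2 * H - 1) := by
    rw [hGf_def]
    rw [intervalIntegral.integral_add ((hg1cont.intervalIntegrable (μ := volume) 0 T).const_mul _)
      (iiG2.const_mul _), intervalIntegral.integral_const_mul, intervalIntegral.integral_const_mul]
  have hI1nonneg : 0 ≤ ∫ x in (0:ℝ)..T, g1 x :=
    intervalIntegral.integral_nonneg hT0.le fun x hx => hg1nonneg x hx.1
  have hI2nonneg : 0 ≤ ∫ x in (0:ℝ)..T, g1 x * (T - x) ^ (2 * H - 1) :=
    intervalIntegral.integral_nonneg hT0.le fun x hx =>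
      mul_nonneg (hg1nonneg x hx.1) (Real.rpow_nonneg (by linarith [hx.2]) _)
  have hI1le : ∫ x in (0:ℝ)..T, g1 x ≤ 2 := by
    have hmono := intervalIntegral.integral_mono_on hT0.le (hg1cont.intervalIntegrable (μ := volume) 0 T)
      (hcont_lin.intervalIntegrable (μ := volume) 0 T) fun x hx => hg1le x hx.1
    exact hmono.trans (aux_exp_linear_le hT0.le)
  have hhalf : (0:ℝ) ≤ T / 2 := by linarith
  have hhalfT : T / 2 ≤ T := by linarith
  have hsub1 : Set.uIcc (0:ℝ) (T/2) ⊆ Set.uIcc (0:ℝ) T := by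
    rw [Set.uIcc_of_le hhalf, Set.uIcc_of_le hT0.le]
    exact Set.Icc_subset_Icc le_rfl hhalfT
  have hsub2 : Set.uIcc (T/2) T ⊆ Set.uIcc (0:ℝ) T := by
    rw [Set.uIcc_of_le hhalfT, Set.uIcc_of_le hT0.le]
    exact Set.Icc_subset_Icc hhalf le_rfl
  have hI2le : ∫ x in (0:ℝ)..T, g1 x * (T - x) ^ (2 * H - 1)
      ≤ 2 * (T/2) ^ (2 * H - 1)
        + Real.exp (-(T/2)) * T ^ (2 * H) * ((T/2) ^ (2 * H) / (2 * H)) := by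
    have hsplit := intervalIntegral.integral_add_adjacent_intervals
      (iiG2.mono_set hsub1) (iiG2.mono_set hsub2)
    have hp1 : ∫ x in (0:ℝ)..(T/2), g1 x * (T - x) ^ (2 * H - 1)
        ≤ 2 * (T/2) ^ (2 * H - 1) := by
      have hptw : ∀ x ∈ Set.Icc (0:ℝ) (T/2),
          g1 x * (T - x) ^ (2 * H - 1) ≤ (Real.exp (-x) * (1 + x)) * (T/2) ^ (2 * H - 1) := by
        intro x hx
        have hTx : T / 2 ≤ T - x := by linarith [hx.2]
        have hfac : (T - x) ^ (2 * H - 1) ≤ (T/2) ^ (2 * H - 1) :=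
          Real.rpow_le_rpow_of_nonpos (by linarith) hTx ha2.le
        exact mul_le_mul (hg1le x hx.1) hfac (Real.rpow_nonneg (by linarith) _)
          (mul_nonneg (Real.exp_pos _).le (by linarith [hx.1]))
      have hm := intervalIntegral.integral_mono_on hhalf (iiG2.mono_set hsub1)
        ((hcont_lin.mul continuous_const).intervalIntegrable (μ := volume) 0 (T/2)) hptw
      simp only [Pi.mul_apply] at hm
      rw [intervalIntegral.integral_mul_const] at hm
      have h2' : (∫ x in (0:ℝ)..(T/2), Real.exp (-x) * (1 + x)) * (T/2) ^ (2 * H - 1)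
          ≤ 2 * (T/2) ^ (2 * H - 1) :=
        mul_le_mul_of_nonneg_right (aux_exp_linear_le hhalf) (Real.rpow_nonneg hhalf _)
      linarith
    have hp2 : ∫ x in (T/2)..T, g1 x * (T - x) ^ (2 * H - 1)
        ≤ Real.exp (-(T/2)) * T ^ (2 * H) * ((T/2) ^ (2 * H) / (2 * H)) := by
      have hptw : ∀ x ∈ Set.Icc (T/2) T,
          g1 x * (T - x) ^ (2 * H - 1)
            ≤ (Real.exp (-(T/2)) * T ^ (2 * H)) * (T - x) ^ (2 * H - 1) := by
        intro x hx
        have hx0 : (0:ℝ) ≤ x := le_trans hhalf hx.1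
        have h1 : Real.exp (-x) ≤ Real.exp (-(T/2)) := Real.exp_le_exp.2 (by linarith [hx.1])
        have h2 : x ^ (2 * H) ≤ T ^ (2 * H) := Real.rpow_le_rpow hx0 hx.2 hq0.le
        have h3 : g1 x ≤ Real.exp (-(T/2)) * T ^ (2 * H) := by
          rw [hg1_def]
          exact mul_le_mul h1 h2 (Real.rpow_nonneg hx0 _) (Real.exp_pos _).le
        exact mul_le_mul_of_nonneg_right h3 (Real.rpow_nonneg (by linarith [hx.2]) _)
      have hm := intervalIntegral.integral_mono_on hhalfT (iiG2.mono_set hsub2)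
        ((aux_ii_refl ha1 (T/2) T T).const_mul _) hptw
      rw [intervalIntegral.integral_const_mul, aux_eval_refl ha1 (T/2) T T, hqe, sub_self,
        Real.zero_rpow hq0.ne', sub_zero, show T - T/2 = T/2 from by ring] at hm
      calc ∫ x in (T/2)..T, g1 x * (T - x) ^ (2 * H - 1)
          ≤ Real.exp (-(T/2)) * T ^ (2 * H) * ((T/2) ^ (2 * H) / (2 * H)) := hm
        _ = Real.exp (-(T/2)) * T ^ (2 * H) * ((T/2) ^ (2 * H) / (2 * H)) := rfl
    linarith [hsplit.symm.le, hsplit.le, hp1, hp2,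
      (by linarith [hsplit] :
        (∫ x in (0:ℝ)..T, g1 x * (T - x) ^ (2 * H - 1))
          = (∫ x in (0:ℝ)..(T/2), g1 x * (T - x) ^ (2 * H - 1))
            + ∫ x in (T/2)..T, g1 x * (T - x) ^ (2 * H - 1))]
  -- final chain
  have hchain : T ^ (1 - 2 * H) * (∫ x in (0:ℝ)..T, ∫ u in (0:ℝ)..T,
      Real.exp (-u - x) * (|φ1 T x| + |φ2 T x| + |φ3 T x u|))
      ≤ T ^ (1 - 2 * H) * (Ca * T ^ (2 * H - 1) * 2
          + Cb * (2 * (T/2) ^ (2 * H - 1)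
            + Real.exp (-(T/2)) * T ^ (2 * H) * ((T/2) ^ (2 * H) / (2 * H)))) := by
    refine mul_le_mul_of_nonneg_left ?_ (Real.rpow_nonneg hT0.le _)
    have hGfnonneg : 0 ≤ ∫ x in (0:ℝ)..T, Gf x := by
      rw [hsplitGf]
      exact add_nonneg
        (mul_nonneg (mul_nonneg hCa (Real.rpow_nonneg hT0.le _)) hI1nonneg)
        (mul_nonneg hCb hI2nonneg)
    calc (∫ x in (0:ℝ)..T, ∫ u in (0:ℝ)..T,
          Real.exp (-u - x) * (|φ1 T x| + |φ2 T x| + |φ3 T x u|))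
        ≤ |∫ x in (0:ℝ)..T, Gf x| := (le_abs_self _).trans
          (by rwa [Real.norm_eq_abs] at houter0)
      _ = ∫ x in (0:ℝ)..T, Gf x := abs_of_nonneg hGfnonneg
      _ = Ca * T ^ (2 * H - 1) * (∫ x in (0:ℝ)..T, g1 x)
            + Cb * ∫ x in (0:ℝ)..T, g1 x * (T - x) ^ (2 * H - 1) := hsplitGf
      _ ≤ Ca * T ^ (2 * H - 1) * 2
            + Cb * (2 * (T/2) ^ (2 * H - 1)
              + Real.exp (-(T/2)) * T ^ (2 * H) * ((T/2) ^ (2 * H) / (2 * H))) := by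
          have h1 : Ca * T ^ (2 * H - 1) * (∫ x in (0:ℝ)..T, g1 x)
              ≤ Ca * T ^ (2 * H - 1) * 2 :=
            mul_le_mul_of_nonneg_left hI1le (mul_nonneg hCa (Real.rpow_nonneg hT0.le _))
          have h2 := mul_le_mul_of_nonneg_left hI2le hCb
          exact add_le_add h1 h2
  -- rpow arithmetic
  have e0 : T ^ (1 - 2 * H) * T ^ (2 * H - 1) = 1 := by
    rw [← Real.rpow_add hT0, show 1 - 2 * H + (2 * H - 1) = 0 from by ring, Real.rpow_zero]
  have ehalf_a : (T/2) ^ (2 * H - 1) = T ^ (2 * H - 1) * 2 ^ (-(2 * H - 1)) := by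
    rw [Real.div_rpow hT0.le (by norm_num), Real.rpow_neg (by norm_num : (0:ℝ) ≤ 2)]
    ring
  have ehalf_q : (T/2) ^ (2 * H) = T ^ (2 * H) * 2 ^ (-(2 * H)) := by
    rw [Real.div_rpow hT0.le (by norm_num), Real.rpow_neg (by norm_num : (0:ℝ) ≤ 2)]
    ring
  have eTq : T ^ (1 - 2 * H) * T ^ (2 * H) * T ^ (2 * H) = T ^ (1 + 2 * H) := by
    rw [← Real.rpow_add hT0, ← Real.rpow_add hT0]
    congr 1
    ring
  have eT2 : T ^ (1 + 2 * H) ≤ T ^ (2:ℕ) := by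
    have h := Real.rpow_le_rpow_of_exponent_le hT1 (by linarith : 1 + 2 * H ≤ 2)
    rwa [show (2:ℝ) = ((2:ℕ):ℝ) from by norm_num, Real.rpow_natCast] at h
  have hE0 : (0:ℝ) ≤ Real.exp (-(T/2)) := (Real.exp_pos _).le
  have hZ : Real.exp (-(T/2)) * (T ^ (1 - 2 * H) * T ^ (2 * H) * T ^ (2 * H)) ≤ 1 := by
    rw [eTq]
    calc Real.exp (-(T/2)) * T ^ (1 + 2 * H) ≤ Real.exp (-(T/2)) * T ^ (2:ℕ) :=
          mul_le_mul_of_nonneg_left eT2 hE0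
      _ = T ^ (2:ℕ) * Real.exp (-(T/2)) := by ring
      _ ≤ 1 := hT2
  have expand : T ^ (1 - 2 * H) * (Ca * T ^ (2 * H - 1) * 2
      + Cb * (2 * (T/2) ^ (2 * H - 1)
        + Real.exp (-(T/2)) * T ^ (2 * H) * ((T/2) ^ (2 * H) / (2 * H))))
      = 2 * Ca * (T ^ (1 - 2 * H) * T ^ (2 * H - 1))
        + 2 * Cb * 2 ^ (-(2 * H - 1)) * (T ^ (1 - 2 * H) * T ^ (2 * H - 1))
        + Cb * (2 ^ (-(2 * H)) / (2 * H))
          * (Real.exp (-(T/2)) * (T ^ (1 - 2 * H) * T ^ (2 * H) * T ^ (2 * H))) := by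
    rw [ehalf_a, ehalf_q]
    ring
  have hcoef : 0 ≤ Cb * (2 ^ (-(2 * H)) / (2 * H)) :=
    mul_nonneg hCb (div_nonneg (Real.rpow_nonneg (by norm_num) _) hq0.le)
  have hlast := mul_le_mul_of_nonneg_left hZ hcoef
  have hfinal_eq : 2 * Ca + Cb * (2 * 2 ^ (-(2 * H - 1)) + 2 ^ (-(2 * H)) / (2 * H))
      = 2 * Ca + 2 * Cb * 2 ^ (-(2 * H - 1)) + Cb * (2 ^ (-(2 * H)) / (2 * H)) := by
    ring
  refine hchain.trans ?_
  rw [expand, e0, hfinal_eq]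
  nlinarith [hlast]
end

section
/- Let $H \in (0, 1/2)$ and $\epsilon \in (0, 1/4)$. For $T > 0$ and $x \in [0,T]$ define $\varphi_2(x) := \int_x^T \big( (t-x)^{2H-1} - t^{2H-1} \big) (T-t+x)^{2H-1} dt$. Then there exists a constant $c > 0$ such that for all sufficiently large $T$, $0 < \int_0^{T\epsilon} e^{-x} \varphi_2(x) \, dx \leq c \, T^{2H-1}$. -/
open MeasureTheory Real Filter

private lemma measurable_inner (p T x : ℝ) :
    Measurable fun t : ℝ => ((t - x) ^ p - t ^ p) * (T - t + x) ^ p := by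
  exact (((measurable_id.sub_const x).pow measurable_const).sub
      (measurable_id.pow measurable_const)).mul
    (((measurable_const.sub measurable_id).add_const x).pow measurable_const)

private lemma shift_integrable {p : ℝ} (hp1 : -1 < p) (x a b : ℝ) :
    IntervalIntegrable (fun t : ℝ => (t - x) ^ p) volume a b := by
  have h := (intervalIntegral.intervalIntegrable_rpow' (a := a - x) (b := b - x) hp1).comp_sub_right x
  simpa using h

private lemma inner_integrable {p x T : ℝ} (hp1 : -1 < p) (hp0 : p < 0)
    (hx : 0 < x) (hxT : x ≤ T) :
    IntervalIntegrable (fun t : ℝ => ((t - x) ^ p - t ^ p) * (T - t + x) ^ p) volume x T := by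
  have hmaj : IntervalIntegrable (fun t : ℝ => ((t - x) ^ p + x ^ p) * x ^ p) volume x T :=
    ((shift_integrable hp1 x x T).add intervalIntegrable_const).mul_const _
  apply hmaj.mono_fun' ((measurable_inner p T x).aestronglyMeasurable)
  rw [Set.uIoc_of_le hxT, Filter.EventuallyLE, ae_restrict_iff' measurableSet_Ioc]
  filter_upwards with t ht
  obtain ⟨htx, htT⟩ := ht
  have h1 : (0:ℝ) < t - x := sub_pos.mpr htx
  have h2 : (0:ℝ) ≤ (t - x) ^ p := (Real.rpow_pos_of_pos h1 p).le
  have h3 : t ^ p ≤ x ^ p := Real.rpow_le_rpow_of_nonpos hx htx.le hp0.le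
  have h4 : (0:ℝ) ≤ t ^ p := (Real.rpow_pos_of_pos (hx.trans htx) p).le
  have h5 : (0:ℝ) ≤ x ^ p := (Real.rpow_pos_of_pos hx p).le
  have hK0 : (0:ℝ) ≤ (T - t + x) ^ p := (Real.rpow_pos_of_pos (by linarith) p).le
  have hK : (T - t + x) ^ p ≤ x ^ p := Real.rpow_le_rpow_of_nonpos hx (by linarith) hp0.le
  rw [Real.norm_eq_abs, abs_mul]
  have hD : |(t - x) ^ p - t ^ p| ≤ (t - x) ^ p + x ^ p :=
    abs_le.mpr ⟨by linarith, by linarith⟩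
  calc |(t - x) ^ p - t ^ p| * |(T - t + x) ^ p|
      ≤ ((t - x) ^ p + x ^ p) * x ^ p := by
        rw [abs_of_nonneg hK0]
        exact mul_le_mul hD hK hK0 (by linarith)
    _ = ((t - x) ^ p + x ^ p) * x ^ p := rfl

private lemma inner_pos {p x T : ℝ} (hp1 : -1 < p) (hp0 : p < 0) (hx : 0 < x) (hxT : x < T) :
    0 < ∫ t in x..T, ((t - x) ^ p - t ^ p) * (T - t + x) ^ p := by
  apply intervalIntegral.intervalIntegral_pos_of_pos_on
    (inner_integrable hp1 hp0 hx hxT.le) _ hxT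
  intro t ht
  have h1 : (0:ℝ) < t - x := sub_pos.mpr ht.1
  have h2 : t ^ p < (t - x) ^ p :=
    Real.rpow_lt_rpow_of_neg h1 (by linarith) hp0
  exact mul_pos (sub_pos.mpr h2) (Real.rpow_pos_of_pos (by linarith [ht.2]) p)

private lemma inner_upper {p x T : ℝ} (hp1 : -1 < p) (hp0 : p < 0) (hT : 1 ≤ T)
    (hx : 0 < x) (hx4 : x ≤ T / 4) :
    (∫ t in x..T, ((t - x) ^ p - t ^ p) * (T - t + x) ^ p)
      ≤ (2 ^ (-p) / (p + 1) * x ^ (p + 1) + (-p) * 4 ^ (1 - p) / (p + 1) * x) * T ^ p := by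
  have h0T : (0:ℝ) < T := lt_of_lt_of_le one_pos hT
  have hx2 : x ≤ T / 2 := by linarith
  have hT2 : T / 2 ≤ T := by linarith
  have hxT : x ≤ T := by linarith
  have hp1' : (0:ℝ) < p + 1 := by linarith
  have hfi : IntervalIntegrable (fun t : ℝ => ((t - x) ^ p - t ^ p) * (T - t + x) ^ p)
      volume x T := inner_integrable hp1 hp0 hx hxT
  have hfi1 : IntervalIntegrable (fun t : ℝ => ((t - x) ^ p - t ^ p) * (T - t + x) ^ p)
      volume x (T / 2) := by
    apply hfi.mono_set
    rw [Set.uIcc_of_le hx2, Set.uIcc_of_le hxT]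
    exact Set.Icc_subset_Icc_right hT2
  have hfi2 : IntervalIntegrable (fun t : ℝ => ((t - x) ^ p - t ^ p) * (T - t + x) ^ p)
      volume (T / 2) T := by
    apply hfi.mono_set
    rw [Set.uIcc_of_le hT2, Set.uIcc_of_le hxT]
    exact Set.Icc_subset_Icc_left hx2
  have hsplit : (∫ t in x..T, ((t - x) ^ p - t ^ p) * (T - t + x) ^ p)
      = (∫ t in x..(T / 2), ((t - x) ^ p - t ^ p) * (T - t + x) ^ p)
        + ∫ t in (T / 2)..T, ((t - x) ^ p - t ^ p) * (T - t + x) ^ p :=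
    (intervalIntegral.integral_add_adjacent_intervals hfi1 hfi2).symm
  -- Piece A
  have h1A : IntervalIntegrable (fun t : ℝ => (t - x) ^ p) volume x (T / 2) :=
    shift_integrable hp1 x x (T / 2)
  have h2A : IntervalIntegrable (fun t : ℝ => t ^ p) volume x (T / 2) := by
    apply ContinuousOn.intervalIntegrable
    apply continuousOn_id.rpow_const
    intro t ht
    rw [Set.uIcc_of_le hx2] at ht
    exact Or.inl (ne_of_gt (lt_of_lt_of_le hx ht.1))
  have hgA : IntervalIntegrable (fun t : ℝ => ((t - x) ^ p - t ^ p) * (T / 2) ^ p)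
      volume x (T / 2) := (h1A.sub h2A).mul_const _
  have hA1 : (∫ t in x..(T / 2), ((t - x) ^ p - t ^ p) * (T - t + x) ^ p)
      ≤ ∫ t in x..(T / 2), ((t - x) ^ p - t ^ p) * (T / 2) ^ p := by
    rw [intervalIntegral.integral_of_le hx2, intervalIntegral.integral_of_le hx2]
    apply setIntegral_mono_on
      ((intervalIntegrable_iff_integrableOn_Ioc_of_le hx2).mp hfi1)
      ((intervalIntegrable_iff_integrableOn_Ioc_of_le hx2).mp hgA)
      measurableSet_Ioc
    intro t ht
    have h1 : (0:ℝ) < t - x := sub_pos.mpr ht.1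
    have hK : (T - t + x) ^ p ≤ (T / 2) ^ p :=
      Real.rpow_le_rpow_of_nonpos (by linarith) (by linarith [ht.2]) hp0.le
    have hD0 : 0 ≤ (t - x) ^ p - t ^ p :=
      sub_nonneg.mpr (Real.rpow_le_rpow_of_nonpos h1 (by linarith) hp0.le)
    exact mul_le_mul_of_nonneg_left hK hD0
  have e1 : (∫ t in x..(T / 2), (t - x) ^ p) = (T / 2 - x) ^ (p + 1) / (p + 1) := by
    rw [intervalIntegral.integral_comp_sub_right (fun u : ℝ => u ^ p) x]
    rw [integral_rpow (Or.inl hp1)]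
    rw [sub_self, Real.zero_rpow (by linarith : p + 1 ≠ 0)]
    ring
  have e2 : (∫ t in x..(T / 2), t ^ p) = ((T / 2) ^ (p + 1) - x ^ (p + 1)) / (p + 1) :=
    integral_rpow (Or.inl hp1)
  have hcalcA : (∫ t in x..(T / 2), ((t - x) ^ p - t ^ p) * (T / 2) ^ p)
      = ((T / 2 - x) ^ (p + 1) - ((T / 2) ^ (p + 1) - x ^ (p + 1))) / (p + 1) * (T / 2) ^ p := by
    rw [intervalIntegral.integral_mul_const, intervalIntegral.integral_sub h1A h2A, e1, e2]
    ring
  have hhalf : ((T / 2 : ℝ)) ^ p = 2 ^ (-p) * T ^ p := by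
    rw [Real.div_rpow h0T.le (by norm_num : (0:ℝ) ≤ 2),
      Real.rpow_neg (by norm_num : (0:ℝ) ≤ 2)]
    ring
  have hA : (∫ t in x..(T / 2), ((t - x) ^ p - t ^ p) * (T - t + x) ^ p)
      ≤ 2 ^ (-p) / (p + 1) * x ^ (p + 1) * T ^ p := by
    have hmono : (T / 2 - x) ^ (p + 1) ≤ (T / 2) ^ (p + 1) :=
      Real.rpow_le_rpow (by linarith) (by linarith) hp1'.le
    have h2p : (0:ℝ) ≤ (T / 2) ^ p := (Real.rpow_pos_of_pos (by linarith) p).le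
    have hstep : ((T / 2 - x) ^ (p + 1) - ((T / 2) ^ (p + 1) - x ^ (p + 1))) / (p + 1) * (T / 2) ^ p
        ≤ x ^ (p + 1) / (p + 1) * (T / 2) ^ p := by
      apply mul_le_mul_of_nonneg_right _ h2p
      gcongr
      linarith
    calc (∫ t in x..(T / 2), ((t - x) ^ p - t ^ p) * (T - t + x) ^ p)
        ≤ ((T / 2 - x) ^ (p + 1) - ((T / 2) ^ (p + 1) - x ^ (p + 1))) / (p + 1) * (T / 2) ^ p := by
          rw [← hcalcA]; exact hA1
      _ ≤ x ^ (p + 1) / (p + 1) * (T / 2) ^ p := hstep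
      _ = 2 ^ (-p) / (p + 1) * x ^ (p + 1) * T ^ p := by rw [hhalf]; ring
  -- Piece B
  have hgBc : ContinuousOn (fun t : ℝ => ((-p) * x * (T / 4) ^ (p - 1)) * (T - t + x) ^ p)
      (Set.uIcc (T / 2) T) := by
    apply ContinuousOn.mul continuousOn_const
    apply ContinuousOn.rpow_const
    · exact (continuousOn_const.sub continuousOn_id).add continuousOn_const
    · intro t ht
      rw [Set.uIcc_of_le hT2] at ht
      exact Or.inl (ne_of_gt (by linarith [ht.2] : (0:ℝ) < T - t + x))
  have hgB : IntervalIntegrable (fun t : ℝ => ((-p) * x * (T / 4) ^ (p - 1)) * (T - t + x) ^ p)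
      volume (T / 2) T := hgBc.intervalIntegrable
  have hB1 : (∫ t in (T / 2)..T, ((t - x) ^ p - t ^ p) * (T - t + x) ^ p)
      ≤ ∫ t in (T / 2)..T, ((-p) * x * (T / 4) ^ (p - 1)) * (T - t + x) ^ p := by
    rw [intervalIntegral.integral_of_le hT2, intervalIntegral.integral_of_le hT2]
    apply setIntegral_mono_on
      ((intervalIntegrable_iff_integrableOn_Ioc_of_le hT2).mp hfi2)
      ((intervalIntegrable_iff_integrableOn_Ioc_of_le hT2).mp hgB)
      measurableSet_Ioc
    intro t ht
    obtain ⟨ht1, ht2⟩ := ht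
    have htx0 : (0:ℝ) < t - x := by linarith
    have htx4 : T / 4 ≤ t - x := by linarith
    have hT40 : (0:ℝ) < T / 4 := by linarith
    have hcont : ContinuousOn (fun u : ℝ => u ^ p) (Set.Icc (t - x) t) := by
      apply continuousOn_id.rpow_const
      intro u hu
      exact Or.inl (ne_of_gt (lt_of_lt_of_le (by linarith) hu.1))
    have hderiv : ∀ u ∈ Set.Ioo (t - x) t,
        HasDerivAt (fun u : ℝ => u ^ p) (p * u ^ (p - 1)) u := fun u hu =>
      Real.hasDerivAt_rpow_const (Or.inl (ne_of_gt (by linarith [hu.1])))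
    obtain ⟨ξ, hξ, hslope⟩ := exists_hasDerivAt_eq_slope (fun u : ℝ => u ^ p)
      (fun u : ℝ => p * u ^ (p - 1)) (by linarith : t - x < t) hcont hderiv
    have hden : t - (t - x) = x := by ring
    rw [hden] at hslope
    have hslope' : p * ξ ^ (p - 1) * x = t ^ p - (t - x) ^ p := by
      field_simp at hslope
      linarith [hslope]
    have hξ4 : T / 4 ≤ ξ := le_of_lt (lt_of_le_of_lt htx4 hξ.1)
    have hξp : ξ ^ (p - 1) ≤ (T / 4) ^ (p - 1) :=
      Real.rpow_le_rpow_of_nonpos hT40 hξ4 (by linarith)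
    have hDle : (t - x) ^ p - t ^ p ≤ (-p) * x * (T / 4) ^ (p - 1) := by
      have h1 : (t - x) ^ p - t ^ p = (-p) * ξ ^ (p - 1) * x := by
        linear_combination hslope'
      rw [h1]
      have h2 : (-p) * ξ ^ (p - 1) ≤ (-p) * (T / 4) ^ (p - 1) :=
        mul_le_mul_of_nonneg_left hξp (by linarith)
      nlinarith [hx.le]
    have hK0 : (0:ℝ) ≤ (T - t + x) ^ p := (Real.rpow_pos_of_pos (by linarith) p).le
    exact mul_le_mul_of_nonneg_right hDle hK0
  have hcalcB : (∫ t in (T / 2)..T, ((-p) * x * (T / 4) ^ (p - 1)) * (T - t + x) ^ p)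
      = ((-p) * x * (T / 4) ^ (p - 1)) * (((x + T / 2) ^ (p + 1) - x ^ (p + 1)) / (p + 1)) := by
    rw [intervalIntegral.integral_const_mul]
    congr 1
    have hrw : ∀ t : ℝ, (T - t + x) ^ p = (fun u : ℝ => u ^ p) ((T + x) - t) := by
      intro t; congr 1; ring
    rw [intervalIntegral.integral_congr (fun t _ => hrw t),
      intervalIntegral.integral_comp_sub_left (fun u : ℝ => u ^ p) (T + x)]
    have h1 : T + x - T = x := by ring
    have h2 : T + x - T / 2 = x + T / 2 := by ring
    rw [h1, h2, integral_rpow (Or.inl hp1)]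
  have hB : (∫ t in (T / 2)..T, ((t - x) ^ p - t ^ p) * (T - t + x) ^ p)
      ≤ (-p) * 4 ^ (1 - p) / (p + 1) * x * T ^ p := by
    have hxp0 : (0:ℝ) ≤ x ^ (p + 1) := (Real.rpow_pos_of_pos hx _).le
    have hmono : (x + T / 2) ^ (p + 1) ≤ T ^ (p + 1) :=
      Real.rpow_le_rpow (by linarith) (by linarith) hp1'.le
    have hM0 : (0:ℝ) ≤ (-p) * x * (T / 4) ^ (p - 1) :=
      mul_nonneg (mul_nonneg (by linarith) hx.le) (Real.rpow_pos_of_pos (by linarith) _).le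
    have hstep2 : ((-p) * x * (T / 4) ^ (p - 1)) * (((x + T / 2) ^ (p + 1) - x ^ (p + 1)) / (p + 1))
        ≤ ((-p) * x * (T / 4) ^ (p - 1)) * (T ^ (p + 1) / (p + 1)) := by
      apply mul_le_mul_of_nonneg_left _ hM0
      gcongr
      linarith
    have hquarter : ((T / 4 : ℝ)) ^ (p - 1) = 4 ^ (1 - p) * T ^ (p - 1) := by
      rw [Real.div_rpow h0T.le (by norm_num : (0:ℝ) ≤ 4),
        show (1 : ℝ) - p = -(p - 1) by ring,
        Real.rpow_neg (by norm_num : (0:ℝ) ≤ 4)]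
      ring
    have hTT : T ^ (p - 1) * T ^ (p + 1) = T ^ (2 * p) := by
      rw [← Real.rpow_add h0T]
      norm_num
      congr 1
      ring
    have hT2p : T ^ (2 * p) ≤ T ^ p :=
      Real.rpow_le_rpow_of_exponent_le hT (by linarith)
    calc (∫ t in (T / 2)..T, ((t - x) ^ p - t ^ p) * (T - t + x) ^ p)
        ≤ ((-p) * x * (T / 4) ^ (p - 1)) * (((x + T / 2) ^ (p + 1) - x ^ (p + 1)) / (p + 1)) := by
          rw [← hcalcB]; exact hB1
      _ ≤ ((-p) * x * (T / 4) ^ (p - 1)) * (T ^ (p + 1) / (p + 1)) := hstep2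
      _ = (-p) * x * 4 ^ (1 - p) / (p + 1) * (T ^ (p - 1) * T ^ (p + 1)) := by
          rw [hquarter]; ring
      _ = (-p) * x * 4 ^ (1 - p) / (p + 1) * T ^ (2 * p) := by rw [hTT]
      _ ≤ (-p) * 4 ^ (1 - p) / (p + 1) * x * T ^ p := by
          have hc : (0:ℝ) ≤ (-p) * x * 4 ^ (1 - p) / (p + 1) :=
            div_nonneg (mul_nonneg (mul_nonneg (by linarith) hx.le)
              (Real.rpow_pos_of_pos (by norm_num) _).le) hp1'.le
          have := mul_le_mul_of_nonneg_left hT2p hc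
          calc (-p) * x * 4 ^ (1 - p) / (p + 1) * T ^ (2 * p)
              ≤ (-p) * x * 4 ^ (1 - p) / (p + 1) * T ^ p := this
            _ = (-p) * 4 ^ (1 - p) / (p + 1) * x * T ^ p := by ring
  rw [hsplit]
  calc (∫ t in x..(T / 2), ((t - x) ^ p - t ^ p) * (T - t + x) ^ p)
        + (∫ t in (T / 2)..T, ((t - x) ^ p - t ^ p) * (T - t + x) ^ p)
      ≤ 2 ^ (-p) / (p + 1) * x ^ (p + 1) * T ^ p + (-p) * 4 ^ (1 - p) / (p + 1) * x * T ^ p :=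
        add_le_add hA hB
    _ = (2 ^ (-p) / (p + 1) * x ^ (p + 1) + (-p) * 4 ^ (1 - p) / (p + 1) * x) * T ^ p := by ring

theorem stmt_12 (H ε : ℝ) (hH : H ∈ Set.Ioo (0:ℝ) (1/2)) (hε : ε ∈ Set.Ioo (0:ℝ) (1/4))
    (φ2 : ℝ → ℝ → ℝ)
    (hφ2 : ∀ T x : ℝ, φ2 T x =
      ∫ t in x..T, ((t - x) ^ (2 * H - 1) - t ^ (2 * H - 1)) * (T - t + x) ^ (2 * H - 1)) :
    ∃ c : ℝ, 0 < c ∧ ∀ᶠ T : ℝ in atTop,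
      0 < (∫ x in (0:ℝ)..(T * ε), Real.exp (-x) * φ2 T x) ∧
      (∫ x in (0:ℝ)..(T * ε), Real.exp (-x) * φ2 T x) ≤ c * T ^ (2 * H - 1) := by
  obtain ⟨hH0, hH2⟩ := hH
  obtain ⟨hε0, hε4⟩ := hε
  set p := 2 * H - 1 with hp
  have hp1 : -1 < p := by rw [hp]; linarith
  have hp0 : p < 0 := by rw [hp]; linarith
  have hp1' : (0:ℝ) < p + 1 := by linarith
  set c₁ : ℝ := 2 ^ (-p) / (p + 1) with hc₁def
  set c₂ : ℝ := (-p) * 4 ^ (1 - p) / (p + 1) with hc₂def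
  have hc₁ : 0 < c₁ := div_pos (Real.rpow_pos_of_pos (by norm_num) _) hp1'
  have hc₂ : 0 ≤ c₂ := div_nonneg
    (mul_nonneg (by linarith) (Real.rpow_pos_of_pos (by norm_num) _).le) hp1'.le
  have hΓ1 : 0 < Real.Gamma (p + 2) := Real.Gamma_pos_of_pos (by linarith)
  have hΓ2 : 0 < Real.Gamma 2 := Real.Gamma_pos_of_pos (by norm_num)
  refine ⟨c₁ * Real.Gamma (p + 2) + c₂ * Real.Gamma 2, ?_, ?_⟩
  · have := mul_pos hc₁ hΓ1
    nlinarith [mul_nonneg hc₂ hΓ2.le]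
  filter_upwards [eventually_ge_atTop (1:ℝ)] with T hT
  have h0T : (0:ℝ) < T := lt_of_lt_of_le one_pos hT
  have hK0 : (0:ℝ) < T * ε := mul_pos h0T hε0
  have hKT4 : T * ε ≤ T / 4 := by nlinarith
  have hKT : T * ε ≤ T := by linarith
  -- measurable version of φ2 T
  set G : ℝ × ℝ → ℝ := fun q =>
    if q.1 < q.2 ∧ q.2 ≤ T then ((q.2 - q.1) ^ p - q.2 ^ p) * (T - q.2 + q.1) ^ p else 0
    with hGdef
  have hGmeas : Measurable G := by
    apply Measurable.ite
    · exact (measurableSet_lt measurable_fst measurable_snd).inter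
        (measurableSet_le measurable_snd measurable_const)
    · exact (((measurable_snd.sub measurable_fst).pow measurable_const).sub
        (measurable_snd.pow measurable_const)).mul
        (((measurable_const.sub measurable_snd).add measurable_fst).pow measurable_const)
    · exact measurable_const
  have hΦmeas : StronglyMeasurable fun x : ℝ => ∫ t : ℝ, G (x, t) :=
    hGmeas.stronglyMeasurable.integral_prod_right'
  have hEq : ∀ x ∈ Set.Ioc (0:ℝ) (T * ε), φ2 T x = ∫ t : ℝ, G (x, t) := by
    intro x hx
    rw [hφ2, intervalIntegral.integral_of_le (hx.2.trans hKT),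
      ← MeasureTheory.integral_indicator measurableSet_Ioc]
    congr 1
    funext t
    simp only [Set.indicator_apply, Set.mem_Ioc, hGdef]
  have hposφ : ∀ x ∈ Set.Ioc (0:ℝ) (T * ε), 0 < φ2 T x := by
    intro x hx
    rw [hφ2]
    exact inner_pos hp1 hp0 hx.1 (lt_of_le_of_lt (hx.2.trans hKT4) (by linarith))
  have hubφ : ∀ x ∈ Set.Ioc (0:ℝ) (T * ε),
      φ2 T x ≤ (c₁ * x ^ (p + 1) + c₂ * x) * T ^ p := by
    intro x hx
    rw [hφ2]
    have := inner_upper hp1 hp0 hT hx.1 (hx.2.trans hKT4)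
    calc (∫ t in x..T, ((t - x) ^ p - t ^ p) * (T - t + x) ^ p)
        ≤ (2 ^ (-p) / (p + 1) * x ^ (p + 1) + (-p) * 4 ^ (1 - p) / (p + 1) * x) * T ^ p := this
      _ = (c₁ * x ^ (p + 1) + c₂ * x) * T ^ p := by rw [hc₁def, hc₂def]
  have hTp0 : (0:ℝ) < T ^ p := Real.rpow_pos_of_pos h0T p
  have hrcont : Continuous fun x : ℝ => x ^ (p + 1) :=
    continuous_iff_continuousAt.mpr fun x =>
      Real.continuousAt_rpow_const x (p + 1) (Or.inr hp1'.le)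
  set m : ℝ → ℝ := fun x => Real.exp (-x) * ((c₁ * x ^ (p + 1) + c₂ * x) * T ^ p) with hmdef
  have hmc : Continuous m := by
    apply Continuous.mul (Real.continuous_exp.comp continuous_neg)
    exact ((continuous_const.mul hrcont).add (continuous_const.mul continuous_id)).mul
      continuous_const
  have hmint : IntegrableOn m (Set.Ioc 0 (T * ε)) := hmc.integrableOn_Ioc
  have hmeasOuter : AEStronglyMeasurable (fun x => Real.exp (-x) * φ2 T x)
      (volume.restrict (Set.Ioc (0:ℝ) (T * ε))) := by
    apply AEStronglyMeasurable.congr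
      (f := fun x => Real.exp (-x) * ∫ t : ℝ, G (x, t))
    · exact ((Real.continuous_exp.comp continuous_neg).aestronglyMeasurable).mul
        hΦmeas.aestronglyMeasurable
    · rw [Filter.EventuallyEq, ae_restrict_iff' measurableSet_Ioc]
      filter_upwards with x hx
      rw [hEq x hx]
  have hOuterInt : IntegrableOn (fun x => Real.exp (-x) * φ2 T x) (Set.Ioc (0:ℝ) (T * ε)) := by
    apply Integrable.mono' hmint hmeasOuter
    rw [ae_restrict_iff' measurableSet_Ioc]
    filter_upwards with x hx
    rw [Real.norm_eq_abs, abs_mul, abs_of_pos (Real.exp_pos _), abs_of_pos (hposφ x hx)]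
    exact mul_le_mul_of_nonneg_left (hubφ x hx) (Real.exp_pos _).le
  have hII : IntervalIntegrable (fun x => Real.exp (-x) * φ2 T x) volume 0 (T * ε) :=
    (intervalIntegrable_iff_integrableOn_Ioc_of_le hK0.le).mpr hOuterInt
  constructor
  · exact intervalIntegral.intervalIntegral_pos_of_pos_on hII
      (fun x hx => mul_pos (Real.exp_pos _) (hposφ x (Set.Ioo_subset_Ioc_self hx))) hK0
  · -- Gamma integrands
    have hg1 : IntegrableOn (fun x : ℝ => Real.exp (-x) * x ^ (p + 1)) (Set.Ioi (0:ℝ)) := by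
      have h := Real.GammaIntegral_convergent (show (0:ℝ) < p + 2 by linarith)
      have e : p + 2 - 1 = p + 1 := by ring
      rwa [e] at h
    have hg2 : IntegrableOn (fun x : ℝ => Real.exp (-x) * x ^ ((1:ℝ))) (Set.Ioi (0:ℝ)) := by
      have h := Real.GammaIntegral_convergent (show (0:ℝ) < 2 by norm_num)
      have e : (2:ℝ) - 1 = 1 := by norm_num
      rwa [e] at h
    have hsub : Set.Ioc (0:ℝ) (T * ε) ≤ᵐ[volume] Set.Ioi (0:ℝ) :=
      HasSubset.Subset.eventuallyLE Set.Ioc_subset_Ioi_self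
    have hnn1 : 0 ≤ᵐ[volume.restrict (Set.Ioi (0:ℝ))] fun x : ℝ => Real.exp (-x) * x ^ (p + 1) := by
      rw [Filter.EventuallyLE, ae_restrict_iff' measurableSet_Ioi]
      filter_upwards with x hx
      exact mul_nonneg (Real.exp_pos _).le (Real.rpow_nonneg (le_of_lt hx) _)
    have hnn2 : 0 ≤ᵐ[volume.restrict (Set.Ioi (0:ℝ))] fun x : ℝ => Real.exp (-x) * x ^ ((1:ℝ)) := by
      rw [Filter.EventuallyLE, ae_restrict_iff' measurableSet_Ioi]
      filter_upwards with x hx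
      exact mul_nonneg (Real.exp_pos _).le (Real.rpow_nonneg (le_of_lt hx) _)
    have hs1 : (∫ x in Set.Ioc (0:ℝ) (T * ε), Real.exp (-x) * x ^ (p + 1))
        ≤ Real.Gamma (p + 2) := by
      rw [Real.Gamma_eq_integral (show (0:ℝ) < p + 2 by linarith)]
      have e : p + 2 - 1 = p + 1 := by ring
      rw [e]
      exact setIntegral_mono_set hg1 hnn1 hsub
    have hs2 : (∫ x in Set.Ioc (0:ℝ) (T * ε), Real.exp (-x) * x ^ ((1:ℝ)))
        ≤ Real.Gamma 2 := by
      rw [Real.Gamma_eq_integral (show (0:ℝ) < 2 by norm_num)]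
      have e : (2:ℝ) - 1 = 1 := by norm_num
      rw [e]
      exact setIntegral_mono_set hg2 hnn2 hsub
    have hint1 : IntegrableOn (fun x : ℝ => Real.exp (-x) * x ^ (p + 1))
        (Set.Ioc (0:ℝ) (T * ε)) := hg1.mono_set Set.Ioc_subset_Ioi_self
    have hint2 : IntegrableOn (fun x : ℝ => Real.exp (-x) * x ^ ((1:ℝ)))
        (Set.Ioc (0:ℝ) (T * ε)) := hg2.mono_set Set.Ioc_subset_Ioi_self
    have hmrw : ∀ x : ℝ, m x
        = (c₁ * (Real.exp (-x) * x ^ (p + 1)) + c₂ * (Real.exp (-x) * x ^ ((1:ℝ)))) * T ^ p := by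
      intro x
      rw [hmdef]
      simp only [Real.rpow_one]
      ring
    have hmval : (∫ x in Set.Ioc (0:ℝ) (T * ε), m x)
        ≤ (c₁ * Real.Gamma (p + 2) + c₂ * Real.Gamma 2) * T ^ p := by
      rw [show (fun x => m x) = fun x =>
        (c₁ * (Real.exp (-x) * x ^ (p + 1)) + c₂ * (Real.exp (-x) * x ^ ((1:ℝ)))) * T ^ p
        from funext hmrw]
      rw [MeasureTheory.integral_mul_const]
      apply mul_le_mul_of_nonneg_right _ hTp0.le
      rw [MeasureTheory.integral_add (hint1.const_mul c₁) (hint2.const_mul c₂),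
        MeasureTheory.integral_const_mul, MeasureTheory.integral_const_mul]
      exact add_le_add (mul_le_mul_of_nonneg_left hs1 hc₁.le)
        (mul_le_mul_of_nonneg_left hs2 hc₂)
    calc (∫ x in (0:ℝ)..(T * ε), Real.exp (-x) * φ2 T x)
        ≤ ∫ x in (0:ℝ)..(T * ε), m x := by
          rw [intervalIntegral.integral_of_le hK0.le, intervalIntegral.integral_of_le hK0.le]
          exact setIntegral_mono_on hOuterInt
            ((intervalIntegrable_iff_integrableOn_Ioc_of_le hK0.le).mp
              ((intervalIntegrable_iff_integrableOn_Ioc_of_le hK0.le).mpr hmint))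
            measurableSet_Ioc
            (fun x hx => mul_le_mul_of_nonneg_left (hubφ x hx) (Real.exp_pos _).le)
      _ = ∫ x in Set.Ioc (0:ℝ) (T * ε), m x := intervalIntegral.integral_of_le hK0.le
      _ ≤ (c₁ * Real.Gamma (p + 2) + c₂ * Real.Gamma 2) * T ^ p := hmval
end
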